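/- arXiv:2503.08863 — 8 statements merged into one kernel-verified Lean document; each statement's English description precedes it below -/
import Mathlib

section
/- Let k ≥ 2 be an integer, let I be a finite set of 3D items with all dimensions in (0,1], and let I^k be the instance obtained from I by replacing the height h_i of every item by f_k(h_i) (widths and depths unchanged). Then OPT_SP(I^k) ≤ T_k · OPT_BP^{T_k}(I^k) ≤ T_k · OPT_BP(I). -/
/-- The open region occupied by a 3D item of width `w`, depth `d`, height `h`
placed with its bottom-left-back corner at `(x, y, z)`. -/
def ItemRegion (w d h x y z : ℝ) : Set (ℝ × ℝ × ℝ) :=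
  Set.Ioo x (x + w) ×ˢ (Set.Ioo y (y + d) ×ˢ Set.Ioo z (z + h))

/-- `IsPacking T w d h W D H x y z` : the placement `(x, y, z)` is a feasible
axis-aligned non-overlapping packing of the items of `T` (with dimensions
`w`, `d`, `h`) into the box `[0,W] × [0,D] × [0,H]`. -/
def IsPacking {ι : Type*} (T : Finset ι) (w d h : ι → ℝ) (W D H : ℝ)
    (x y z : ι → ℝ) : Prop :=
  (∀ i ∈ T, 0 ≤ x i ∧ x i + w i ≤ W ∧ 0 ≤ y i ∧ y i + d i ≤ D ∧
      0 ≤ z i ∧ z i + h i ≤ H) ∧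
  (∀ i ∈ T, ∀ j ∈ T, i ≠ j →
    Disjoint (ItemRegion (w i) (d i) (h i) (x i) (y i) (z i))
             (ItemRegion (w j) (d j) (h j) (x j) (y j) (z j)))

/-- The items of `T` can be packed into the box `[0,W] × [0,D] × [0,H]`. -/
def CanPack {ι : Type*} (T : Finset ι) (w d h : ι → ℝ) (W D H : ℝ) : Prop :=
  ∃ x y z : ι → ℝ, IsPacking T w d h W D H x y z

/-- Optimal strip packing height: the infimum of all heights `H ≥ 0` such
that the items of `T` pack into the strip `[0,1] × [0,1] × [0,H]`. -/
noncomputable def OPTSP {ι : Type*} (T : Finset ι) (w d h : ι → ℝ) : ℝ :=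
  sInf {H : ℝ | 0 ≤ H ∧ CanPack T w d h 1 1 H}

/-- Optimal number of `1 × 1 × H` bins: the minimum `m` such that `T` can be
split into `m` parts each of which packs into the box `[0,1] × [0,1] × [0,H]`.
(`OPTBP T w d h 1` is the usual 3D bin packing optimum.) -/
noncomputable def OPTBP {ι : Type*} (T : Finset ι) (w d h : ι → ℝ) (H : ℝ) : ℕ :=
  sInf {m : ℕ | ∃ f : ι → Fin m, ∀ b : Fin m,
    CanPack (T.filter fun i => f i = b) w d h 1 1 H}

/-- The harmonic rounding function of Lee and Lee: `fk k α = 1/q` if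
`α ∈ (1/(q+1), 1/q]` for some `q ∈ {1, …, k−1}` (equivalently `q = ⌊1/α⌋`
when `1/k < α ≤ 1`), and `fk k α = α` for `α ≤ 1/k`. -/
noncomputable def fk (k : ℕ) (α : ℝ) : ℝ :=
  if α ≤ 1 / k then α else 1 / (⌊1 / α⌋₊ : ℝ)

noncomputable def Vfun (k : ℕ) : ℕ → ℝ → ℝ
  | 0, _ => 0
  | (n+1), B =>
    if B ≤ 1 / k then 0 else
      (1 : ℝ) / ((max 1 ⌊1 / B⌋₊ : ℕ) * ((max 1 ⌊1 / B⌋₊ : ℕ) + 1))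
        + Vfun k n (B - 1 / ((max 1 ⌊1 / B⌋₊ : ℕ) + 1))

lemma Vfun_zero (k : ℕ) (B : ℝ) : Vfun k 0 B = 0 := rfl

lemma Vfun_succ (k n : ℕ) (B : ℝ) :
    Vfun k (n+1) B = if B ≤ 1 / k then 0 else
      (1 : ℝ) / ((max 1 ⌊1 / B⌋₊ : ℕ) * ((max 1 ⌊1 / B⌋₊ : ℕ) + 1))
        + Vfun k n (B - 1 / ((max 1 ⌊1 / B⌋₊ : ℕ) + 1)) := rfl

lemma Vfun_nonneg (k n : ℕ) (B : ℝ) : 0 ≤ Vfun k n B := by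
  induction n generalizing B with
  | zero => simp [Vfun_zero]
  | succ n ih =>
    rw [Vfun_succ]
    split
    · exact le_refl _
    · have h1 : (0:ℝ) ≤ 1 / ((max 1 ⌊1 / B⌋₊ : ℕ) * ((max 1 ⌊1 / B⌋₊ : ℕ) + 1)) := by positivity
      exact add_nonneg h1 (ih _)

lemma genM (k : ℕ) (hk : 2 ≤ k) :
    ∀ (n : ℕ) (M : Multiset ℕ), M.card = n →
      (∀ q ∈ M, 1 ≤ q ∧ q ≤ k - 1) →
      ∀ B : ℝ, B ≤ 1 → (M.map (fun q : ℕ => (1:ℝ)/((q:ℝ)+1))).sum < B →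
      (M.map (fun q : ℕ => (1:ℝ)/((q:ℝ)*((q:ℝ)+1)))).sum ≤ Vfun k n B := by
  intro n
  induction n with
  | zero =>
    intro M hcard _ B _ _
    rw [Multiset.card_eq_zero] at hcard
    subst hcard
    simp [Vfun_zero]
  | succ n ih =>
    intro M hcard hmem B hB1 hsum
    obtain ⟨q1, hq1⟩ : ∃ q, q ∈ M :=
      Multiset.exists_mem_of_ne_zero (by intro h; simp [h] at hcard)
    have hq1b := hmem q1 hq1
    have hknat : 1 ≤ k := le_trans (by norm_num) hk
    have hcnonneg : ∀ x ∈ M.map (fun q : ℕ => (1:ℝ)/((q:ℝ)+1)), 0 ≤ x := by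
      intro x hx
      obtain ⟨q, _, rfl⟩ := Multiset.mem_map.mp hx
      positivity
    have hterm : (1:ℝ)/((q1:ℝ)+1) ≤ (M.map (fun q : ℕ => (1:ℝ)/((q:ℝ)+1))).sum :=
      Multiset.single_le_sum hcnonneg _ (Multiset.mem_map_of_mem _ hq1)
    have hq1k : ((q1:ℝ)+1) ≤ (k:ℝ) := by
      have : q1 + 1 ≤ k := by omega
      exact_mod_cast this
    have hkpos : (0:ℝ) < k := by
      have : 0 < k := by omega
      exact_mod_cast this
    have hBk : 1/(k:ℝ) < B := by
      have h1 : (1:ℝ)/(k:ℝ) ≤ 1/((q1:ℝ)+1) :=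
        one_div_le_one_div_of_le (by positivity) hq1k
      linarith
    have hBpos : 0 < B := lt_trans (by positivity) hBk
    set q0 : ℕ := max 1 ⌊1/B⌋₊ with hq0def
    have hfloor1 : 1 ≤ ⌊1/B⌋₊ := by
      apply Nat.le_floor
      rw [Nat.cast_one]
      exact one_le_one_div hBpos hB1
    have hq0 : q0 = ⌊1/B⌋₊ := max_eq_right hfloor1
    have hq0pos : 0 < q0 := lt_of_lt_of_le one_pos (le_max_left _ _)
    have hq0posR : (0:ℝ) < (q0:ℝ) := by exact_mod_cast hq0pos
    have hq0le : (q0:ℝ) ≤ 1/B := by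
      rw [hq0]
      exact Nat.floor_le (by positivity)
    have hBle : B ≤ 1/(q0:ℝ) := by
      rw [le_div_iff₀ hq0posR]
      rw [le_div_iff₀ hBpos] at hq0le
      rw [mul_comm]
      exact hq0le
    have hgt : 1/((q0:ℝ)+1) < B := by
      have h1 : 1/B < (q0:ℝ) + 1 := by
        rw [hq0]
        exact_mod_cast Nat.lt_floor_add_one (1/B)
      rw [div_lt_iff₀ (by positivity)]
      rw [div_lt_iff₀ hBpos] at h1
      linarith
    have hall : ∀ q ∈ M, q0 ≤ q := by
      intro q hq
      have h1 : (1:ℝ)/((q:ℝ)+1) ≤ (M.map (fun q : ℕ => (1:ℝ)/((q:ℝ)+1))).sum :=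
        Multiset.single_le_sum hcnonneg _ (Multiset.mem_map_of_mem _ hq)
      have h2 : (1:ℝ)/((q:ℝ)+1) < 1/(q0:ℝ) := by linarith
      have h3 : (q0:ℝ) < (q:ℝ)+1 :=
        lt_of_one_div_lt_one_div (by positivity) h2
      have : q0 < q + 1 := by exact_mod_cast h3
      omega
    rw [Vfun_succ, if_neg (not_le.mpr hBk)]
    rw [← hq0def]
    by_cases hq0M : q0 ∈ M
    · have hM : M = q0 ::ₘ M.erase q0 := (Multiset.cons_erase hq0M).symm
      rw [hM, Multiset.map_cons, Multiset.sum_cons] at hsum ⊢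
      have hcard2 : (q0 ::ₘ M.erase q0).card = n + 1 := by rw [← hM]; exact hcard
      rw [Multiset.card_cons] at hcard2
      have hcard3 : (M.erase q0).card = n := by omega
      have ihx := ih (M.erase q0) hcard3
        (fun q hq => hmem q (Multiset.mem_of_mem_erase hq))
        (B - 1/((q0:ℝ)+1))
        (by have : (0:ℝ) < 1/((q0:ℝ)+1) := by positivity
            linarith)
        (by linarith)
      exact add_le_add le_rfl ihx
    · have hall1 : ∀ q ∈ M, q0 + 1 ≤ q := by
        intro q hq
        have h1 := hall q hq
        rcases eq_or_lt_of_le h1 with h | h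
        · exact absurd (h ▸ hq) hq0M
        · omega
      have hb1 : (M.map (fun q : ℕ => (1:ℝ)/((q:ℝ)*((q:ℝ)+1)))).sum ≤
          (M.map (fun q : ℕ => (1:ℝ)/((q:ℝ)+1) * (1/((q0:ℝ)+1)))).sum := by
        apply Multiset.sum_map_le_sum_map
        intro q hq
        have hq2 : q0 + 1 ≤ q := hall1 q hq
        have hqposR : (0:ℝ) < (q:ℝ) := by
          have : 0 < q := by omega
          exact_mod_cast this
        have h1 : (1:ℝ)/(q:ℝ) ≤ 1/((q0:ℝ)+1) := by
          apply one_div_le_one_div_of_le (by positivity)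
          exact_mod_cast hq2
        calc (1:ℝ)/((q:ℝ)*((q:ℝ)+1)) = 1/((q:ℝ)+1) * (1/(q:ℝ)) := by
              rw [one_div_mul_one_div]; ring_nf
          _ ≤ 1/((q:ℝ)+1) * (1/((q0:ℝ)+1)) :=
              mul_le_mul_of_nonneg_left h1 (by positivity)
      have hb2 : (M.map (fun q : ℕ => (1:ℝ)/((q:ℝ)+1) * (1/((q0:ℝ)+1)))).sum =
          (M.map (fun q : ℕ => (1:ℝ)/((q:ℝ)+1))).sum * (1/((q0:ℝ)+1)) := by
        rw [← Multiset.sum_map_mul_right]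
      have hb3 : (M.map (fun q : ℕ => (1:ℝ)/((q:ℝ)+1))).sum * (1/((q0:ℝ)+1)) ≤
          B * (1/((q0:ℝ)+1)) :=
        mul_le_mul_of_nonneg_right (le_of_lt hsum) (by positivity)
      have hb4 : B * (1/((q0:ℝ)+1)) ≤ (1/(q0:ℝ)) * (1/((q0:ℝ)+1)) :=
        mul_le_mul_of_nonneg_right hBle (by positivity)
      have hb5 : (1/(q0:ℝ)) * (1/((q0:ℝ)+1)) = 1/((q0:ℝ)*((q0:ℝ)+1)) :=
        one_div_mul_one_div _ _
      have hvn := Vfun_nonneg k n (B - 1/((q0:ℝ)+1))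
      linarith

section Sylvester

variable (t : ℕ → ℕ) (ht1 : t 1 = 1) (htrec : ∀ i, 1 ≤ i → t (i + 1) = t i * (t i + 1))

include ht1 htrec in
lemma tpos : ∀ j, 1 ≤ j → 1 ≤ t j := by
  intro j hj
  induction j with
  | zero => omega
  | succ n ih =>
    rcases Nat.eq_or_lt_of_le hj with h | h
    · rw [← h]; omega
    · have hn : 1 ≤ n := by omega
      have := ih hn
      rw [htrec n hn]
      nlinarith

include ht1 htrec in
lemma tmono : ∀ a b, 1 ≤ a → a ≤ b → t a ≤ t b := by
  intro a b ha hab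
  induction b with
  | zero => omega
  | succ n ih =>
    rcases Nat.eq_or_lt_of_le hab with h | h
    · rw [h]
    · have han : a ≤ n := by omega
      have h1 := ih han
      have hn : 1 ≤ n := by omega
      have h2 := tpos t ht1 htrec n hn
      rw [htrec n hn]
      nlinarith

end Sylvester

lemma Vle (k : ℕ) (hk : 2 ≤ k) (t : ℕ → ℕ) (ht1 : t 1 = 1)
    (htrec : ∀ i, 1 ≤ i → t (i + 1) = t i * (t i + 1))
    (m : ℕ) (hm1 : 1 ≤ m) (hmhi : k < t (m + 1)) :
    ∀ n j, 1 ≤ j → j ≤ m + 1 →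
      Vfun k n (1/((t j : ℕ):ℝ)) ≤ ∑ l ∈ Finset.Icc j m, (1:ℝ)/((t (l+1) : ℕ):ℝ) := by
  intro n
  induction n with
  | zero =>
    intro j _ _
    rw [Vfun_zero]
    apply Finset.sum_nonneg
    intro l _
    positivity
  | succ n ih =>
    intro j hj1 hjm
    have htj1 : 1 ≤ t j := tpos t ht1 htrec j hj1
    have htjR : (0:ℝ) < ((t j : ℕ):ℝ) := by
      exact_mod_cast Nat.lt_of_lt_of_le Nat.zero_lt_one htj1
    have hkR : (0:ℝ) < (k:ℝ) := by
      have : 0 < k := by omega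
      exact_mod_cast this
    by_cases hcase : k ≤ t j
    · have hle : 1/((t j : ℕ):ℝ) ≤ 1/(k:ℝ) :=
        one_div_le_one_div_of_le hkR (by exact_mod_cast hcase)
      rw [Vfun_succ, if_pos hle]
      apply Finset.sum_nonneg
      intro l _
      positivity
    · have htjk : t j < k := by omega
      have hjle : j ≤ m := by
        by_contra hcon
        have : j = m + 1 := by omega
        subst this
        omega
      have hnotle : ¬ (1/((t j : ℕ):ℝ) ≤ 1/(k:ℝ)) := by
        push_neg
        apply one_div_lt_one_div_of_lt htjR
        exact_mod_cast htjk
      rw [Vfun_succ, if_neg hnotle]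
      have hfloor : ⌊1/(1/((t j : ℕ):ℝ))⌋₊ = t j := by
        rw [one_div_one_div]
        exact Nat.floor_natCast _
      have hmax : max 1 ⌊1/(1/((t j : ℕ):ℝ))⌋₊ = t j := by
        rw [hfloor]
        exact max_eq_right htj1
      rw [hmax]
      have hrec : ((t (j+1) : ℕ):ℝ) = ((t j : ℕ):ℝ) * (((t j : ℕ):ℝ)+1) := by
        rw [htrec j hj1]
        push_cast
        ring
      have hBsub : 1/((t j : ℕ):ℝ) - 1/(((t j : ℕ):ℝ)+1) = 1/((t (j+1) : ℕ):ℝ) := by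
        rw [hrec]
        field_simp
        ring
      rw [hBsub]
      have hgain : (1:ℝ)/(((t j : ℕ):ℝ)*(((t j : ℕ):ℝ)+1)) = 1/((t (j+1) : ℕ):ℝ) := by
        rw [hrec]
      rw [hgain]
      have ihx := ih (j+1) (by omega) (by omega)
      have hsplit : Finset.Icc j m = insert j (Finset.Icc (j+1) m) := by
        ext a
        simp only [Finset.mem_Icc, Finset.mem_insert]
        omega
      rw [hsplit, Finset.sum_insert (by simp only [Finset.mem_Icc]; omega)]
      exact add_le_add le_rfl ihx

lemma one_div_split (x : ℝ) (hx : 0 < x) :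
    1/x = 1/(x+1) + 1/(x*(x+1)) := by
  field_simp

lemma telescope_t (t : ℕ → ℕ) :
    ∀ M : ℕ, ∑ q ∈ Finset.Icc 1 M, ((1:ℝ)/((t q : ℕ):ℝ) - 1/((t (q+1) : ℕ):ℝ)) =
      1/((t 1 : ℕ):ℝ) - 1/((t (M+1) : ℕ):ℝ) := by
  intro M
  induction M with
  | zero => simp
  | succ n ih =>
    rw [Finset.sum_Icc_succ_top (by omega), ih]
    ring

lemma harmonicM (k : ℕ) (hk : 2 ≤ k) (t : ℕ → ℕ) (ht1 : t 1 = 1)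
    (htrec : ∀ i, 1 ≤ i → t (i + 1) = t i * (t i + 1))
    (m : ℕ) (hm1 : 1 ≤ m) (hmlo : t m ≤ k) (hmhi : k < t (m + 1))
    (Tk : ℝ)
    (hTk : Tk = (∑ q ∈ Finset.Icc 1 m, (1 : ℝ) / (t q)) +
      (k : ℝ) / ((t (m + 1) : ℝ) * ((k : ℝ) - 1))) :
    ∀ M : Multiset ℝ, (∀ a ∈ M, 0 < a ∧ a ≤ 1) → M.sum ≤ 1 →
      (M.map (fk k)).sum ≤ Tk := by
  classical
  have hkR : (0:ℝ) < (k:ℝ) := by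
    have : 0 < k := by omega
    exact_mod_cast this
  have htm1 : 1 ≤ t (m+1) := by omega
  have htm1R : (0:ℝ) < ((t (m+1) : ℕ):ℝ) := by
    have : 0 < t (m+1) := by omega
    exact_mod_cast this
  set C0 : ℝ := ∑ l ∈ Finset.Icc 1 m, (1:ℝ)/((t (l+1) : ℕ):ℝ) with hC0
  have hC0nonneg : 0 ≤ C0 := by
    apply Finset.sum_nonneg
    intro l _
    positivity
  -- 1 + C0 ≤ Tk
  have htel := telescope_t t m
  have hsub : ∑ q ∈ Finset.Icc 1 m, ((1:ℝ)/((t q : ℕ):ℝ) - 1/((t (q+1) : ℕ):ℝ)) =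
      (∑ q ∈ Finset.Icc 1 m, (1:ℝ)/((t q : ℕ):ℝ)) - C0 := by
    rw [Finset.sum_sub_distrib]
  have ht1R : ((t 1 : ℕ):ℝ) = 1 := by rw [ht1]; norm_num
  have hS1 : (∑ q ∈ Finset.Icc 1 m, (1:ℝ)/((t q : ℕ):ℝ)) =
      C0 + 1 - 1/((t (m+1) : ℕ):ℝ) := by
    rw [hsub, ht1R] at htel
    linarith
  have hTkC0 : 1 + C0 ≤ Tk := by
    rw [hTk, hS1]
    have hk1R : (1:ℝ) ≤ (k:ℝ) - 1 := by
      have h2 : (2:ℝ) ≤ (k:ℝ) := by exact_mod_cast hk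
      linarith
    have hfrac : 1/((t (m+1) : ℕ):ℝ) ≤ (k:ℝ)/(((t (m+1) : ℕ):ℝ) * ((k:ℝ)-1)) := by
      rw [div_le_div_iff₀ htm1R (mul_pos htm1R (by linarith))]
      nlinarith
    linarith
  intro M hmem hsum
  have hMnonneg : ∀ a ∈ M, (0:ℝ) ≤ a := fun a ha => (hmem a ha).1.le
  set P : ℝ → Prop := fun a => a ≤ 1/(k:ℝ) with hP
  set Ms : Multiset ℝ := M.filter P with hMs
  set Ml : Multiset ℝ := M.filter (fun a => ¬ P a) with hMl
  have hMsplit : Ms + Ml = M := Multiset.filter_add_not P M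
  have hsumsplit : Ms.sum + Ml.sum = M.sum := by rw [← Multiset.sum_add, hMsplit]
  have hMssum : 0 ≤ Ms.sum :=
    Multiset.sum_nonneg (fun a ha => hMnonneg a (Multiset.mem_of_mem_filter ha))
  have hMlsum : 0 ≤ Ml.sum :=
    Multiset.sum_nonneg (fun a ha => hMnonneg a (Multiset.mem_of_mem_filter ha))
  have hfksplit : (M.map (fk k)).sum = (Ms.map (fk k)).sum + (Ml.map (fk k)).sum := by
    rw [← hMsplit, Multiset.map_add, Multiset.sum_add]
  have hsmall : (Ms.map (fk k)).sum = Ms.sum := by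
    have he : Ms.map (fk k) = Ms.map (fun a => a) := by
      apply Multiset.map_congr rfl
      intro a ha
      exact if_pos (Multiset.of_mem_filter ha)
    rw [he, Multiset.map_id']
  -- facts about large items
  have hlarge : ∀ a ∈ Ml, 0 < a ∧ a ≤ 1 ∧ 1/(k:ℝ) < a := by
    intro a ha
    have h1 := hmem a (Multiset.mem_of_mem_filter ha)
    have h2 : ¬ P a := (Multiset.mem_filter.mp ha).2
    exact ⟨h1.1, h1.2, not_le.mp h2⟩
  have hqfacts : ∀ a ∈ Ml, 1 ≤ ⌊1/a⌋₊ ∧ ⌊1/a⌋₊ ≤ k - 1 ∧ 1/((⌊1/a⌋₊:ℝ)+1) < a ∧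
      fk k a = 1/((⌊1/a⌋₊:ℝ)) := by
    intro a ha
    obtain ⟨ha0, ha1, hak⟩ := hlarge a ha
    have hf1 : 1 ≤ ⌊1/a⌋₊ := by
      apply Nat.le_floor
      rw [Nat.cast_one]
      exact one_le_one_div ha0 ha1
    have hfk : ⌊1/a⌋₊ < k := by
      rw [Nat.floor_lt (by positivity)]
      rw [div_lt_iff₀ ha0]
      rw [div_lt_iff₀ hkR] at hak
      linarith
    have hflt : 1/((⌊1/a⌋₊:ℝ)+1) < a := by
      have h1 : 1/a < (⌊1/a⌋₊:ℝ) + 1 := Nat.lt_floor_add_one (1/a)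
      rw [div_lt_iff₀ (by positivity)]
      rw [div_lt_iff₀ ha0] at h1
      linarith
    exact ⟨hf1, by omega, hflt, if_neg (not_le.mpr hak)⟩
  by_cases hMl0 : Ml = 0
  · rw [hfksplit, hMl0]
    simp only [Multiset.map_zero, Multiset.sum_zero, add_zero]
    rw [hsmall]
    have : Ms.sum ≤ 1 := by
      rw [hMl0] at hsumsplit
      simp at hsumsplit
      linarith
    linarith
  · set Q : Multiset ℕ := Ml.map (fun a => ⌊1/a⌋₊) with hQ
    have hQmem : ∀ q ∈ Q, 1 ≤ q ∧ q ≤ k - 1 := by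
      intro q hq
      obtain ⟨a, ha, rfl⟩ := Multiset.mem_map.mp hq
      exact ⟨(hqfacts a ha).1, (hqfacts a ha).2.1⟩
    -- budget strict bound
    have hbudget : (Q.map (fun q : ℕ => (1:ℝ)/((q:ℝ)+1))).sum < Ml.sum := by
      rw [hQ, Multiset.map_map]
      have := Multiset.sum_lt_sum (s := Ml)
        (f := fun a => ((1:ℝ)/((⌊1/a⌋₊:ℝ)+1))) (g := fun a => a)
        (fun a ha => ((hqfacts a ha).2.2.1).le)
        (by
          obtain ⟨a, ha⟩ := Multiset.exists_mem_of_ne_zero hMl0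
          exact ⟨a, ha, (hqfacts a ha).2.2.1⟩)
      calc (Ml.map ((fun q : ℕ => (1:ℝ)/((q:ℝ)+1)) ∘ (fun a => ⌊1/a⌋₊))).sum
          = (Ml.map (fun a => (1:ℝ)/((⌊1/a⌋₊:ℝ)+1))).sum := rfl
        _ < (Ml.map (fun a => a)).sum := this
        _ = Ml.sum := by rw [Multiset.map_id']
    have hbudget1 : (Q.map (fun q : ℕ => (1:ℝ)/((q:ℝ)+1))).sum < 1 := by
      have : Ml.sum ≤ 1 := by linarith
      linarith
    have hgen := genM k hk Q.card Q rfl hQmem 1 le_rfl hbudget1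
    have hvle := Vle k hk t ht1 htrec m hm1 hmhi Q.card 1 le_rfl (by omega)
    have hVone : Vfun k Q.card 1 ≤ C0 := by
      have h1 : (1:ℝ)/((t 1 : ℕ):ℝ) = 1 := by rw [ht1R]; norm_num
      rw [h1] at hvle
      exact hvle
    -- large sum
    have hlargesum : (Ml.map (fk k)).sum =
        (Q.map (fun q : ℕ => (1:ℝ)/((q:ℝ)+1))).sum +
        (Q.map (fun q : ℕ => (1:ℝ)/((q:ℝ)*((q:ℝ)+1)))).sum := by
      rw [← Multiset.sum_map_add]
      rw [hQ, Multiset.map_map]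
      apply congrArg Multiset.sum
      apply Multiset.map_congr rfl
      intro a ha
      obtain ⟨hf1, _, _, hfka⟩ := hqfacts a ha
      have hq0 : (0:ℝ) < (⌊1/a⌋₊:ℝ) := by exact_mod_cast hf1
      simp only [Function.comp]
      rw [hfka]
      exact one_div_split _ hq0
    have hg := le_trans hgen hVone
    rw [hfksplit, hsmall, hlargesum]
    have hMsum01 : Ms.sum + Ml.sum ≤ 1 := by rw [hsumsplit]; exact hsum
    linarith

lemma fk_pos (k : ℕ) {a : ℝ} (h0 : 0 < a) (h1 : a ≤ 1) : 0 < fk k a := by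
  unfold fk
  split
  · exact h0
  · have hf1 : 1 ≤ ⌊1/a⌋₊ :=
      Nat.le_floor (by rw [Nat.cast_one]; exact one_le_one_div h0 h1)
    have : (0:ℝ) < (⌊1/a⌋₊:ℝ) := by exact_mod_cast hf1
    positivity

open scoped Classical in
noncomputable def Zfun {ι : Type*} (T : Finset ι) (R : ι → ι → Prop) (c : ι → NNReal) :
    ℕ → ι → NNReal
  | 0 => fun _ => 0
  | (n+1) => fun i => (T.filter (fun j => R j i)).sup (fun j => Zfun T R c n j + c j)

open scoped Classical in
lemma Zfun_succ {ι : Type*} (T : Finset ι) (R : ι → ι → Prop) (c : ι → NNReal)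
    (n : ℕ) (i : ι) :
    Zfun T R c (n+1) i = (T.filter (fun j => R j i)).sup (fun j => Zfun T R c n j + c j) :=
  rfl

open scoped Classical in
lemma Zstab {ι : Type*} (T : Finset ι) (R : ι → ι → Prop) (c : ι → NNReal)
    (rk : ι → ℕ) (hrk : ∀ (i : ι), ∀ j ∈ T, R j i → rk j < rk i) :
    ∀ N : ℕ, ∀ i : ι, rk i < N → ∀ n : ℕ, rk i ≤ n →
      Zfun T R c (n+1) i = Zfun T R c n i := by
  intro N
  induction N with
  | zero => intro i h; omega
  | succ N ih =>
    intro i hiN n hin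
    cases n with
    | zero =>
      have hempty : T.filter (fun j => R j i) = ∅ := by
        rw [Finset.filter_eq_empty_iff]
        intro j hj hR
        have := hrk i j hj hR
        omega
      rw [Zfun_succ, hempty]
      simp [Zfun]
    | succ n =>
      rw [Zfun_succ, Zfun_succ]
      apply Finset.sup_congr rfl
      intro j hj
      obtain ⟨hjT, hjR⟩ := Finset.mem_filter.mp hj
      have h1 : rk j < rk i := hrk i j hjT hjR
      rw [ih j (by omega) n (by omega)]

lemma mem_ItemRegion_iff {w d h x y z : ℝ} {p : ℝ × ℝ × ℝ} :
    p ∈ ItemRegion w d h x y z ↔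
      (x < p.1 ∧ p.1 < x + w) ∧ (y < p.2.1 ∧ p.2.1 < y + d) ∧
        (z < p.2.2 ∧ p.2.2 < z + h) := by
  simp [ItemRegion, Set.mem_prod]

lemma ItemRegion_disjoint_of_sep {w1 d1 h1 x1 y1 z1 w2 d2 h2 x2 y2 z2 : ℝ}
    (hsep : (x1 + w1 ≤ x2 ∨ x2 + w2 ≤ x1) ∨ (y1 + d1 ≤ y2 ∨ y2 + d2 ≤ y1) ∨
      (z1 + h1 ≤ z2 ∨ z2 + h2 ≤ z1)) :
    Disjoint (ItemRegion w1 d1 h1 x1 y1 z1) (ItemRegion w2 d2 h2 x2 y2 z2) := by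
  rw [Set.disjoint_left]
  intro p hp1 hp2
  rw [mem_ItemRegion_iff] at hp1 hp2
  obtain ⟨⟨a1, a2⟩, ⟨b1, b2⟩, ⟨c1, c2⟩⟩ := hp1
  obtain ⟨⟨a3, a4⟩, ⟨b3, b4⟩, ⟨c3, c4⟩⟩ := hp2
  rcases hsep with (h | h) | (h | h) | (h | h) <;> linarith

lemma sep_of_ItemRegion_disjoint {w1 d1 h1 x1 y1 z1 w2 d2 h2 x2 y2 z2 : ℝ}
    (hw1 : 0 < w1) (hd1 : 0 < d1) (hh1 : 0 < h1)
    (hw2 : 0 < w2) (hd2 : 0 < d2) (hh2 : 0 < h2)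
    (hdisj : Disjoint (ItemRegion w1 d1 h1 x1 y1 z1) (ItemRegion w2 d2 h2 x2 y2 z2)) :
    (x1 + w1 ≤ x2 ∨ x2 + w2 ≤ x1) ∨ (y1 + d1 ≤ y2 ∨ y2 + d2 ≤ y1) ∨
      (z1 + h1 ≤ z2 ∨ z2 + h2 ≤ z1) := by
  by_contra hcon
  push_neg at hcon
  obtain ⟨⟨hx1, hx2⟩, ⟨hy1, hy2⟩, ⟨hz1, hz2⟩⟩ := hcon
  set px := (max x1 x2 + min (x1 + w1) (x2 + w2)) / 2 with hpx
  set py := (max y1 y2 + min (y1 + d1) (y2 + d2)) / 2 with hpy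
  set pz := (max z1 z2 + min (z1 + h1) (z2 + h2)) / 2 with hpz
  have hxlt : max x1 x2 < min (x1 + w1) (x2 + w2) := by
    rw [max_lt_iff, lt_min_iff, lt_min_iff]
    exact ⟨⟨by linarith, by linarith⟩, ⟨by linarith, by linarith⟩⟩
  have hylt : max y1 y2 < min (y1 + d1) (y2 + d2) := by
    rw [max_lt_iff, lt_min_iff, lt_min_iff]
    exact ⟨⟨by linarith, by linarith⟩, ⟨by linarith, by linarith⟩⟩
  have hzlt : max z1 z2 < min (z1 + h1) (z2 + h2) := by
    rw [max_lt_iff, lt_min_iff, lt_min_iff]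
    exact ⟨⟨by linarith, by linarith⟩, ⟨by linarith, by linarith⟩⟩
  have hmem1 : (px, py, pz) ∈ ItemRegion w1 d1 h1 x1 y1 z1 := by
    rw [mem_ItemRegion_iff]
    have h1x := le_max_left x1 x2
    have h2x := min_le_left (x1 + w1) (x2 + w2)
    have h1y := le_max_left y1 y2
    have h2y := min_le_left (y1 + d1) (y2 + d2)
    have h1z := le_max_left z1 z2
    have h2z := min_le_left (z1 + h1) (z2 + h2)
    constructor
    · constructor <;> simp only [hpx] <;> linarith
    constructor
    · constructor <;> simp only [hpy] <;> linarith
    · constructor <;> simp only [hpz] <;> linarith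
  have hmem2 : (px, py, pz) ∈ ItemRegion w2 d2 h2 x2 y2 z2 := by
    rw [mem_ItemRegion_iff]
    have h1x := le_max_right x1 x2
    have h2x := min_le_right (x1 + w1) (x2 + w2)
    have h1y := le_max_right y1 y2
    have h2y := min_le_right (y1 + d1) (y2 + d2)
    have h1z := le_max_right z1 z2
    have h2z := min_le_right (z1 + h1) (z2 + h2)
    constructor
    · constructor <;> simp only [hpx] <;> linarith
    constructor
    · constructor <;> simp only [hpy] <;> linarith
    · constructor <;> simp only [hpz] <;> linarith
  exact Set.disjoint_left.mp hdisj hmem1 hmem2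

lemma ItemRegion_shift_disjoint {w1 d1 h1 x1 y1 z1 w2 d2 h2 x2 y2 z2 c : ℝ}
    (hdisj : Disjoint (ItemRegion w1 d1 h1 x1 y1 z1) (ItemRegion w2 d2 h2 x2 y2 z2)) :
    Disjoint (ItemRegion w1 d1 h1 x1 y1 (z1 + c)) (ItemRegion w2 d2 h2 x2 y2 (z2 + c)) := by
  rw [Set.disjoint_left]
  intro p hp1 hp2
  rw [mem_ItemRegion_iff] at hp1 hp2
  have hm1 : (p.1, p.2.1, p.2.2 - c) ∈ ItemRegion w1 d1 h1 x1 y1 z1 := by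
    rw [mem_ItemRegion_iff]; dsimp only
    obtain ⟨⟨a1, a2⟩, ⟨b1, b2⟩, ⟨c1, c2⟩⟩ := hp1
    exact ⟨⟨a1, a2⟩, ⟨b1, b2⟩, ⟨by linarith, by linarith⟩⟩
  have hm2 : (p.1, p.2.1, p.2.2 - c) ∈ ItemRegion w2 d2 h2 x2 y2 z2 := by
    rw [mem_ItemRegion_iff]; dsimp only
    obtain ⟨⟨a1, a2⟩, ⟨b1, b2⟩, ⟨c1, c2⟩⟩ := hp2
    exact ⟨⟨a1, a2⟩, ⟨b1, b2⟩, ⟨by linarith, by linarith⟩⟩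
  exact Set.disjoint_left.mp hdisj hm1 hm2

lemma not_overlap_sep {a b w1 w2 : ℝ} (hw1 : 0 < w1) (hw2 : 0 < w2)
    (h : ¬ (max a b < min (a + w1) (b + w2))) : a + w1 ≤ b ∨ b + w2 ≤ a := by
  by_contra hcon
  push_neg at hcon
  obtain ⟨h1, h2⟩ := hcon
  apply h
  rw [max_lt_iff, lt_min_iff, lt_min_iff]
  exact ⟨⟨by linarith, by linarith⟩, ⟨by linarith, by linarith⟩⟩

open scoped Classical in
lemma pack_round {ι : Type*} (T : Finset ι) (w d h : ι → ℝ) (k : ℕ) (Tk : ℝ)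
    (hdims : ∀ i ∈ T, 0 < w i ∧ w i ≤ 1 ∧ 0 < d i ∧ d i ≤ 1 ∧ 0 < h i ∧ h i ≤ 1)
    (HB : ∀ L : List ℝ, (∀ a ∈ L, 0 < a ∧ a ≤ 1) → L.sum ≤ 1 →
      (L.map (fk k)).sum ≤ Tk)
    (hcp : CanPack T w d h 1 1 1) :
    CanPack T w d (fun i => fk k (h i)) 1 1 Tk := by
  obtain ⟨x, y, z, hcont, hdisj⟩ := hcp
  set h' : ι → ℝ := fun i => fk k (h i) with hh'
  have hfkpos : ∀ i ∈ T, 0 < h' i := by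
    intro i hi
    exact fk_pos k (hdims i hi).2.2.2.2.1 (hdims i hi).2.2.2.2.2
  set R : ι → ι → Prop := fun j i =>
    (max (x j) (x i) < min (x j + w j) (x i + w i)) ∧
    (max (y j) (y i) < min (y j + d j) (y i + d i)) ∧ z j + h j ≤ z i with hRdef
  set c : ι → NNReal := fun i => Real.toNNReal (h' i) with hcdef
  clear_value R
  set rk : ι → ℕ := fun i => (T.filter (fun j => z j < z i)).card with hrkdef
  have hrk : ∀ (i : ι), ∀ j ∈ T, R j i → rk j < rk i := by
    intro i j hj hRji
    simp only [hRdef] at hRji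
    have hzj : z j < z i := by
      have := hRji.2.2
      have := (hdims j hj).2.2.2.2.1
      linarith
    apply Finset.card_lt_card
    rw [Finset.ssubset_def]
    constructor
    · intro a ha
      obtain ⟨haT, haz⟩ := Finset.mem_filter.mp ha
      exact Finset.mem_filter.mpr ⟨haT, by linarith⟩
    · intro hcon
      have hjmem : j ∈ T.filter (fun a => z a < z i) :=
        Finset.mem_filter.mpr ⟨hj, hzj⟩
      have := Finset.mem_filter.mp (hcon hjmem)
      linarith [this.2]
  set n0 := T.card with hn0
  set z' : ι → ℝ := fun i => ((Zfun T R c n0 i : NNReal) : ℝ) with hz'def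
  have hfix : ∀ i, Zfun T R c (n0+1) i = Zfun T R c n0 i := by
    intro i
    apply Zstab T R c rk hrk (n0+1) i _ n0 _
    · have : rk i ≤ T.card := Finset.card_le_card (Finset.filter_subset _ _)
      omega
    · exact Finset.card_le_card (Finset.filter_subset _ _)
  have hz'nonneg : ∀ i, 0 ≤ z' i := fun i => NNReal.coe_nonneg _
  have hA2 : ∀ (i : ι), ∀ j ∈ T, R j i → z' j + h' j ≤ z' i := by
    intro i j hj hRji
    have hmemf : j ∈ T.filter (fun a => R a i) := Finset.mem_filter.mpr ⟨hj, hRji⟩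
    have h1 : Zfun T R c n0 j + c j ≤ Zfun T R c (n0+1) i := by
      rw [Zfun_succ]
      exact Finset.le_sup (f := fun a => (Zfun T R c n0 a + c a : NNReal)) hmemf
    rw [hfix i] at h1
    have h2 : ((Zfun T R c n0 j + c j : NNReal) : ℝ) ≤ z' i := by
      exact_mod_cast h1
    rw [NNReal.coe_add] at h2
    have h3 : ((c j : NNReal) : ℝ) = h' j := Real.coe_toNNReal _ (hfkpos j hj).le
    rw [h3] at h2
    exact h2
  have hchain : ∀ N : ℕ, ∀ i ∈ T, rk i < N → ∃ L : List ℝ,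
      (∀ a ∈ L, 0 < a ∧ a ≤ 1) ∧ ((L.map (fk k)).sum = z' i) ∧ L.sum ≤ z i := by
    intro N
    induction N with
    | zero => intro i _ hlt; omega
    | succ N ih =>
      intro i hi hiN
      by_cases hne : (T.filter (fun j => R j i)).Nonempty
      · obtain ⟨j, hjf, hjsup⟩ :=
          Finset.exists_mem_eq_sup _ hne (fun j => Zfun T R c n0 j + c j)
        obtain ⟨hjT, hjR⟩ := Finset.mem_filter.mp hjf
        obtain ⟨L, hL1, hL2, hL3⟩ := ih j hjT (by have := hrk i j hjT hjR; omega)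
        have hjR' := hjR
        simp only [hRdef] at hjR'
        have hz'i : z' i = z' j + h' j := by
          have h1 : Zfun T R c (n0+1) i = Zfun T R c n0 j + c j := by
            rw [Zfun_succ, hjsup]
          rw [hfix i] at h1
          have h2 : z' i = ((Zfun T R c n0 j + c j : NNReal) : ℝ) := by
            rw [hz'def]
            exact congrArg (fun a : NNReal => (a : ℝ)) h1
          rw [NNReal.coe_add, Real.coe_toNNReal _ (hfkpos j hjT).le] at h2
          exact h2
        refine ⟨L ++ [h j], ?_, ?_, ?_⟩
        · intro a ha
          rcases List.mem_append.mp ha with ha | ha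
          · exact hL1 a ha
          · rw [List.mem_singleton.mp ha]
            exact ⟨(hdims j hjT).2.2.2.2.1, (hdims j hjT).2.2.2.2.2⟩
        · rw [List.map_append, List.sum_append, hL2]
          simp only [List.map_cons, List.map_nil, List.sum_cons, List.sum_nil, add_zero]
          rw [hz'i]
        · rw [List.sum_append]
          simp only [List.sum_cons, List.sum_nil, add_zero]
          have := hjR'.2.2
          linarith
      · have hempty : T.filter (fun j => R j i) = ∅ :=
          Finset.not_nonempty_iff_eq_empty.mp hne
        have hz'0 : z' i = 0 := by
          have h1 : Zfun T R c (n0+1) i = 0 := by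
            rw [Zfun_succ, hempty]
            simp
          rw [hfix i] at h1
          simp only [hz'def, h1, NNReal.coe_zero]
        refine ⟨[], by simp, by simp [hz'0], by simp; exact (hcont i hi).2.2.2.2.1⟩
  have hBc : ∀ i ∈ T, z' i + h' i ≤ Tk := by
    intro i hi
    obtain ⟨L, hL1, hL2, hL3⟩ := hchain (rk i + 1) i hi (by omega)
    have happ := HB (L ++ [h i])
      (by
        intro a ha
        rcases List.mem_append.mp ha with ha | ha
        · exact hL1 a ha
        · rw [List.mem_singleton.mp ha]
          exact ⟨(hdims i hi).2.2.2.2.1, (hdims i hi).2.2.2.2.2⟩)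
      (by
        rw [List.sum_append]
        simp only [List.sum_cons, List.sum_nil, add_zero]
        have := (hcont i hi).2.2.2.2.2
        linarith)
    rw [List.map_append, List.sum_append, hL2] at happ
    simp only [List.map_cons, List.map_nil, List.sum_cons, List.sum_nil, add_zero] at happ
    linarith
  refine ⟨x, y, z', ?_, ?_⟩
  · intro i hi
    obtain ⟨c1, c2, c3, c4, _, _⟩ := hcont i hi
    exact ⟨c1, c2, c3, c4, hz'nonneg i, hBc i hi⟩
  · intro i hi j hj hij
    obtain ⟨hwi, _, hdi, _, hhi, _⟩ := hdims i hi
    obtain ⟨hwj, _, hdj, _, hhj, _⟩ := hdims j hj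
    by_cases hx : max (x i) (x j) < min (x i + w i) (x j + w j)
    · by_cases hy : max (y i) (y j) < min (y i + d i) (y j + d j)
      · have hsep := sep_of_ItemRegion_disjoint hwi hdi hhi hwj hdj hhj
          (hdisj i hi j hj hij)
        have hzsep : z i + h i ≤ z j ∨ z j + h j ≤ z i := by
          rcases hsep with (hs | hs) | (hs | hs) | hs
          · exfalso
            have h1 := min_le_left (x i + w i) (x j + w j)
            have h2 := le_max_right (x i) (x j)
            linarith
          · exfalso
            have h1 := min_le_right (x i + w i) (x j + w j)
            have h2 := le_max_left (x i) (x j)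
            linarith
          · exfalso
            have h1 := min_le_left (y i + d i) (y j + d j)
            have h2 := le_max_right (y i) (y j)
            linarith
          · exfalso
            have h1 := min_le_right (y i + d i) (y j + d j)
            have h2 := le_max_left (y i) (y j)
            linarith
          · exact hs
        apply ItemRegion_disjoint_of_sep
        right; right
        rcases hzsep with hs | hs
        · left
          have hRij : R i j := by rw [hRdef]; exact ⟨hx, hy, hs⟩
          exact hA2 j i hi hRij
        · right
          have hRji : R j i := by
            rw [hRdef]
            refine ⟨?_, ?_, hs⟩
            · rw [max_comm (x j) (x i), min_comm (x j + w j) (x i + w i)]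
              exact hx
            · rw [max_comm (y j) (y i), min_comm (y j + d j) (y i + d i)]
              exact hy
          exact hA2 i j hj hRji
      · apply ItemRegion_disjoint_of_sep
        right; left
        exact not_overlap_sep hdi hdj hy
    · apply ItemRegion_disjoint_of_sep
      left
      exact not_overlap_sep hwi hwj hx

lemma canPack_subsingleton {ι : Type*} (T : Finset ι) (w d h : ι → ℝ) (H : ℝ)
    (hdims : ∀ i ∈ T, 0 < w i ∧ w i ≤ 1 ∧ 0 < d i ∧ d i ≤ 1 ∧ 0 < h i ∧ h i ≤ H)
    (hsub : ∀ i ∈ T, ∀ j ∈ T, i = j) : CanPack T w d h 1 1 H := by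
  refine ⟨fun _ => 0, fun _ => 0, fun _ => 0, ?_, ?_⟩
  · intro i hi
    obtain ⟨c1, c2, c3, c4, c5, c6⟩ := hdims i hi
    dsimp only
    refine ⟨le_refl 0, by linarith, le_refl 0, by linarith, le_refl 0, by linarith⟩
  · intro i hi j hj hij
    exact absurd (hsub i hi j hj) hij

lemma stack_bins {ι : Type*} (I : Finset ι) (w d h' : ι → ℝ) (Tk : ℝ) (hTk0 : 0 ≤ Tk)
    (N : ℕ) (f : ι → Fin N)
    (hbins : ∀ b : Fin N, CanPack (I.filter fun i => f i = b) w d h' 1 1 Tk) :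
    CanPack I w d h' 1 1 ((N : ℝ) * Tk) := by
  classical
  choose X Y Z hP using hbins
  refine ⟨fun i => X (f i) i, fun i => Y (f i) i,
    fun i => Z (f i) i + ((f i : ℕ) : ℝ) * Tk, ?_, ?_⟩
  · intro i hi
    dsimp only
    have hmem : i ∈ I.filter (fun j => f j = f i) := Finset.mem_filter.mpr ⟨hi, rfl⟩
    obtain ⟨c1, c2, c3, c4, c5, c6⟩ := (hP (f i)).1 i hmem
    have hb0 : (0:ℝ) ≤ ((f i : ℕ) : ℝ) := by positivity
    have hblt : (f i : ℕ) + 1 ≤ N := (f i).is_lt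
    have hbltR : ((f i : ℕ) : ℝ) + 1 ≤ (N : ℝ) := by exact_mod_cast hblt
    have hmul : (((f i : ℕ) : ℝ) + 1) * Tk ≤ (N : ℝ) * Tk :=
      mul_le_mul_of_nonneg_right hbltR hTk0
    have hexp : (((f i : ℕ) : ℝ) + 1) * Tk = ((f i : ℕ) : ℝ) * Tk + Tk := by ring
    exact ⟨c1, c2, c3, c4, add_nonneg c5 (mul_nonneg hb0 hTk0), by linarith⟩
  · intro i hi j hj hij
    dsimp only
    by_cases hb : f i = f j
    · have hmi : i ∈ I.filter (fun a => f a = f i) := Finset.mem_filter.mpr ⟨hi, rfl⟩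
      have hmj : j ∈ I.filter (fun a => f a = f i) := Finset.mem_filter.mpr ⟨hj, hb.symm⟩
      have hd := (hP (f i)).2 i hmi j hmj hij
      have hshift := ItemRegion_shift_disjoint (c := ((f i : ℕ) : ℝ) * Tk) hd
      rw [← hb]
      exact hshift
    · have hzi : Z (f i) i + h' i ≤ Tk :=
        ((hP (f i)).1 i (Finset.mem_filter.mpr ⟨hi, rfl⟩)).2.2.2.2.2
      have hzi0 : 0 ≤ Z (f i) i :=
        ((hP (f i)).1 i (Finset.mem_filter.mpr ⟨hi, rfl⟩)).2.2.2.2.1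
      have hzj : Z (f j) j + h' j ≤ Tk :=
        ((hP (f j)).1 j (Finset.mem_filter.mpr ⟨hj, rfl⟩)).2.2.2.2.2
      have hzj0 : 0 ≤ Z (f j) j :=
        ((hP (f j)).1 j (Finset.mem_filter.mpr ⟨hj, rfl⟩)).2.2.2.2.1
      rcases lt_or_gt_of_ne hb with hlt | hlt
      · have h1 : (f i : ℕ) + 1 ≤ (f j : ℕ) := hlt
        have h1R : ((f i : ℕ) : ℝ) + 1 ≤ ((f j : ℕ) : ℝ) := by exact_mod_cast h1
        have hmul : (((f i : ℕ) : ℝ) + 1) * Tk ≤ ((f j : ℕ) : ℝ) * Tk :=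
          mul_le_mul_of_nonneg_right h1R hTk0
        apply ItemRegion_disjoint_of_sep
        right; right; left
        nlinarith
      · have h1 : (f j : ℕ) + 1 ≤ (f i : ℕ) := hlt
        have h1R : ((f j : ℕ) : ℝ) + 1 ≤ ((f i : ℕ) : ℝ) := by exact_mod_cast h1
        have hmul : (((f j : ℕ) : ℝ) + 1) * Tk ≤ ((f i : ℕ) : ℝ) * Tk :=
          mul_le_mul_of_nonneg_right h1R hTk0
        apply ItemRegion_disjoint_of_sep
        right; right; right
        nlinarith

/-- Let `I^k` be obtained from `I` by harmonically rounding
the heights with `fk k`. Then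
`OPT_SP(I^k) ≤ T_k · OPT_BP^{T_k}(I^k) ≤ T_k · OPT_BP(I)`, where `T_k` is the
harmonic constant built from the Sylvester-type sequence `t`. -/
theorem stmt10 {ι : Type*} (I : Finset ι) (w d h : ι → ℝ)
    (hdims : ∀ i ∈ I, 0 < w i ∧ w i ≤ 1 ∧ 0 < d i ∧ d i ≤ 1 ∧
      0 < h i ∧ h i ≤ 1)
    (k : ℕ) (hk : 2 ≤ k)
    (t : ℕ → ℕ) (ht1 : t 1 = 1)
    (htrec : ∀ i, 1 ≤ i → t (i + 1) = t i * (t i + 1))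
    (m : ℕ) (hm1 : 1 ≤ m) (hmlo : t m ≤ k) (hmhi : k < t (m + 1))
    (Tk : ℝ)
    (hTk : Tk = (∑ q ∈ Finset.Icc 1 m, (1 : ℝ) / (t q)) +
      (k : ℝ) / ((t (m + 1) : ℝ) * ((k : ℝ) - 1))) :
    OPTSP I w d (fun i => fk k (h i)) ≤
        Tk * (OPTBP I w d (fun i => fk k (h i)) Tk : ℝ) ∧
      Tk * (OPTBP I w d (fun i => fk k (h i)) Tk : ℝ) ≤
        Tk * (OPTBP I w d h 1 : ℝ) := by
  classical
  have HBlist : ∀ L : List ℝ, (∀ a ∈ L, 0 < a ∧ a ≤ 1) → L.sum ≤ 1 →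
      (L.map (fk k)).sum ≤ Tk := by
    intro L hL hsum
    have h1 := harmonicM k hk t ht1 htrec m hm1 hmlo hmhi Tk hTk (↑L)
      (fun a ha => hL a (by exact_mod_cast ha))
      (by rwa [Multiset.sum_coe])
    rwa [Multiset.map_coe, Multiset.sum_coe] at h1
  have hTk0 : 0 ≤ Tk := by
    have := HBlist [] (by simp) (by simp)
    simpa using this
  -- membership of `I.card + 1` in the bin-packing set for the original heights
  have hmemS1 : (I.card + 1) ∈ {m' : ℕ | ∃ f : ι → Fin m', ∀ b : Fin m',
      CanPack (I.filter fun i => f i = b) w d h 1 1 1} := by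
    refine ⟨fun i => if hi : i ∈ I then Fin.castSucc (I.equivFin ⟨i, hi⟩)
      else Fin.last I.card, ?_⟩
    intro b
    apply canPack_subsingleton
    · intro i hif
      exact hdims i (Finset.mem_filter.mp hif).1
    · intro i hif j hjf
      obtain ⟨hiI, hfi⟩ := Finset.mem_filter.mp hif
      obtain ⟨hjI, hfj⟩ := Finset.mem_filter.mp hjf
      have hfe : (if hi : i ∈ I then Fin.castSucc (I.equivFin ⟨i, hi⟩)
          else Fin.last I.card)
          = (if hj : j ∈ I then Fin.castSucc (I.equivFin ⟨j, hj⟩)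
          else Fin.last I.card) := hfi.trans hfj.symm
      rw [dif_pos hiI, dif_pos hjI] at hfe
      have h2 := Fin.castSucc_injective _ hfe
      have h3 := (I.equivFin).injective h2
      exact congrArg Subtype.val h3
  have hsub12 : {m' : ℕ | ∃ f : ι → Fin m', ∀ b : Fin m',
        CanPack (I.filter fun i => f i = b) w d h 1 1 1} ⊆
      {m' : ℕ | ∃ f : ι → Fin m', ∀ b : Fin m',
        CanPack (I.filter fun i => f i = b) w d (fun i => fk k (h i)) 1 1 Tk} := by
    rintro m0 ⟨f, hf⟩
    exact ⟨f, fun b => pack_round _ w d h k Tk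
      (fun i hi => hdims i (Finset.mem_filter.mp hi).1) HBlist (hf b)⟩
  have hN1mem : OPTBP I w d h 1 ∈ {m' : ℕ | ∃ f : ι → Fin m', ∀ b : Fin m',
      CanPack (I.filter fun i => f i = b) w d h 1 1 1} :=
    Nat.sInf_mem ⟨I.card + 1, hmemS1⟩
  have hle : OPTBP I w d (fun i => fk k (h i)) Tk ≤ OPTBP I w d h 1 :=
    Nat.sInf_le (hsub12 hN1mem)
  have hN2mem : OPTBP I w d (fun i => fk k (h i)) Tk ∈
      {m' : ℕ | ∃ f : ι → Fin m', ∀ b : Fin m',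
        CanPack (I.filter fun i => f i = b) w d (fun i => fk k (h i)) 1 1 Tk} :=
    Nat.sInf_mem ⟨I.card + 1, hsub12 hmemS1⟩
  obtain ⟨f2, hf2⟩ := hN2mem
  have hstack := stack_bins I w d (fun i => fk k (h i)) Tk hTk0
    (OPTBP I w d (fun i => fk k (h i)) Tk) f2 hf2
  have h0le : (0:ℝ) ≤ ((OPTBP I w d (fun i => fk k (h i)) Tk : ℕ) : ℝ) * Tk :=
    mul_nonneg (Nat.cast_nonneg _) hTk0
  have hle1 : OPTSP I w d (fun i => fk k (h i)) ≤
      ((OPTBP I w d (fun i => fk k (h i)) Tk : ℕ) : ℝ) * Tk := by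
    apply csInf_le
    · refine ⟨0, ?_⟩
      rintro H ⟨hH0, _⟩
      exact hH0
    · exact ⟨h0le, hstack⟩
  constructor
  · linarith [hle1, (mul_comm Tk ((OPTBP I w d (fun i => fk k (h i)) Tk : ℕ) : ℝ)).symm]
  · exact mul_le_mul_of_nonneg_left (by exact_mod_cast hle) hTk0
end

section
/- Let J be a finite set of n ≥ 1 3D items with all dimensions in (0,1] and total volume V = v(J) > 0, let ε > 0, and set u = εV/n. For each item i let k_i = ⌈h_i/u⌉, and let R(J) be the multiset of rectangles consisting, for each item i ∈ J, of k_i copies of the rectangle with width w_i and height d_i. Let OPT_2DBP(R(J)) be the minimum number of unit square bins [0,1]×[0,1] into which the rectangles of R(J) can be packed (axis-aligned, without rotations, with pairwise disjoint interiors). Then u · OPT_2DBP(R(J)) ≤ (1+ε) · OPT_SP(J). -/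
/-- The open region occupied by a 2D rectangle of width `w` and height `h`
placed with its bottom-left corner at `(x, y)`. -/
def RectRegion (w h x y : ℝ) : Set (ℝ × ℝ) :=
  Set.Ioo x (x + w) ×ˢ Set.Ioo y (y + h)

/-- `IsPacking2 T w h W H x y` : the placement `(x, y)` is a feasible
axis-aligned non-overlapping (no rotations) packing of the rectangles of `T`
(with dimensions `w`, `h`) into the box `[0,W] × [0,H]`. -/
def IsPacking2 {ι : Type*} (T : Finset ι) (w h : ι → ℝ) (W H : ℝ)
    (x y : ι → ℝ) : Prop :=
  (∀ i ∈ T, 0 ≤ x i ∧ x i + w i ≤ W ∧ 0 ≤ y i ∧ y i + h i ≤ H) ∧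
  (∀ i ∈ T, ∀ j ∈ T, i ≠ j →
    Disjoint (RectRegion (w i) (h i) (x i) (y i))
             (RectRegion (w j) (h j) (x j) (y j)))

/-- The rectangles of `T` can be packed into the box `[0,W] × [0,H]`. -/
def CanPack2 {ι : Type*} (T : Finset ι) (w h : ι → ℝ) (W H : ℝ) : Prop :=
  ∃ x y : ι → ℝ, IsPacking2 T w h W H x y

/-- Optimal 2D bin packing: the minimum number `m` of unit square bins such
that the rectangles of `T` can be split into `m` parts each of which packs
into `[0,1] × [0,1]`. -/
noncomputable def OPT2DBP {ι : Type*} (T : Finset ι) (w h : ι → ℝ) : ℕ :=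
  sInf {m : ℕ | ∃ f : ι → Fin m, ∀ b : Fin m,
    CanPack2 (T.filter fun i => f i = b) w h 1 1}

lemma rect_disj_of_item {w d h x y z w' d' h' x' y' z' c : ℝ}
    (hd : Disjoint (ItemRegion w d h x y z) (ItemRegion w' d' h' x' y' z'))
    (hc : c ∈ Set.Ioo z (z + h)) (hc' : c ∈ Set.Ioo z' (z' + h')) :
    Disjoint (RectRegion w d x y) (RectRegion w' d' x' y') := by
  rw [Set.disjoint_left] at hd ⊢
  rintro ⟨a, b⟩ hab hab'
  simp only [RectRegion, Set.mem_prod] at hab hab'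
  exact hd (a := (a, b, c)) ⟨hab.1, hab.2, hc⟩ ⟨hab'.1, hab'.2, hc'⟩

lemma item_disj_of_z {w d h x y z w' d' h' x' y' z' : ℝ}
    (hd : Disjoint (Set.Ioo z (z + h)) (Set.Ioo z' (z' + h'))) :
    Disjoint (ItemRegion w d h x y z) (ItemRegion w' d' h' x' y' z') := by
  rw [Set.disjoint_left] at hd ⊢
  rintro ⟨a, b, c⟩ hab hab'
  exact hd hab.2.2 hab'.2.2


lemma vol_item {w d h x y z : ℝ} (hw : 0 ≤ w) (hdd : 0 ≤ d) :
    MeasureTheory.volume (ItemRegion w d h x y z) =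
      ENNReal.ofReal (w * d * h) := by
  rw [ItemRegion, MeasureTheory.Measure.volume_eq_prod, MeasureTheory.Measure.prod_prod,
    MeasureTheory.Measure.volume_eq_prod, MeasureTheory.Measure.prod_prod,
    Real.volume_Ioo, Real.volume_Ioo, Real.volume_Ioo]
  simp only [add_sub_cancel_left]
  rw [ENNReal.ofReal_mul (by positivity : (0:ℝ) ≤ w * d), ENNReal.ofReal_mul hw, mul_assoc]

open MeasureTheory in
lemma vol_bound {ι : Type*} {J : Finset ι} {w d h x y z : ι → ℝ} {H : ℝ}
    (hH : 0 ≤ H)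
    (hdims : ∀ i ∈ J, 0 ≤ w i ∧ 0 ≤ d i ∧ 0 ≤ h i)
    (hp : IsPacking J w d h 1 1 H x y z) :
    ∑ i ∈ J, w i * d i * h i ≤ H := by
  have key : ∑ i ∈ J, ENNReal.ofReal (w i * d i * h i) ≤ ENNReal.ofReal H := by
    have hm : ∀ i ∈ J, MeasurableSet
        (ItemRegion (w i) (d i) (h i) (x i) (y i) (z i)) := by
      intro i _
      exact ((isOpen_Ioo.prod (isOpen_Ioo.prod isOpen_Ioo))).measurableSet
    have hd : (J : Set ι).PairwiseDisjoint
        (fun i => ItemRegion (w i) (d i) (h i) (x i) (y i) (z i)) := by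
      intro i hi j hj hij
      exact hp.2 i hi j hj hij
    calc ∑ i ∈ J, ENNReal.ofReal (w i * d i * h i)
        = ∑ i ∈ J, volume (ItemRegion (w i) (d i) (h i) (x i) (y i) (z i)) := by
          refine Finset.sum_congr rfl fun i hi => ?_
          rw [vol_item (hdims i hi).1 (hdims i hi).2.1]
      _ = volume (⋃ i ∈ J, ItemRegion (w i) (d i) (h i) (x i) (y i) (z i)) :=
          (measure_biUnion_finset hd hm).symm
      _ ≤ volume ((Set.Icc (0:ℝ) 1) ×ˢ ((Set.Icc (0:ℝ) 1) ×ˢ (Set.Icc (0:ℝ) H))) := by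
          refine measure_mono ?_
          refine Set.iUnion₂_subset fun i hi => ?_
          obtain ⟨hx0, hx1, hy0, hy1, hz0, hz1⟩ := hp.1 i hi
          rintro ⟨a, b, c⟩ ⟨ha, hb, hc⟩
          simp only [Set.mem_Ioo] at ha hb hc
          exact ⟨⟨le_trans hx0 ha.1.le, le_trans ha.2.le hx1⟩,
            ⟨le_trans hy0 hb.1.le, le_trans hb.2.le hy1⟩,
            ⟨le_trans hz0 hc.1.le, le_trans hc.2.le hz1⟩⟩
      _ = ENNReal.ofReal H := by
          rw [MeasureTheory.Measure.volume_eq_prod, MeasureTheory.Measure.prod_prod,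
            MeasureTheory.Measure.volume_eq_prod, MeasureTheory.Measure.prod_prod,
            Real.volume_Icc]
          simp
  rw [← ENNReal.ofReal_sum_of_nonneg (fun i hi => by
    obtain ⟨h1, h2, h3⟩ := hdims i hi; positivity)] at key
  exact (ENNReal.ofReal_le_ofReal_iff hH).mp key

lemma stack_pack {ι : Type*} {J : Finset ι} {w d h : ι → ℝ}
    (hdims : ∀ i ∈ J, 0 < w i ∧ w i ≤ 1 ∧ 0 < d i ∧ d i ≤ 1 ∧ 0 < h i ∧ h i ≤ 1) :
    CanPack J w d h 1 1 (J.card : ℝ) := by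
  classical
  refine ⟨fun _ => 0, fun _ => 0,
    fun i => if hi : i ∈ J then ((J.equivFin ⟨i, hi⟩ : ℕ) : ℝ) else 0, ?_, ?_⟩
  · intro i hi
    obtain ⟨hw0, hw1, hd0, hd1, hh0, hh1⟩ := hdims i hi
    have hlt : (J.equivFin ⟨i, hi⟩ : ℕ) < J.card := (J.equivFin ⟨i, hi⟩).2
    refine ⟨le_refl 0, by simpa using hw1, le_refl 0, by simpa using hd1, ?_, ?_⟩
    · simp [hi]
    · simp only [dif_pos hi]
      have : ((J.equivFin ⟨i, hi⟩ : ℕ) : ℝ) + 1 ≤ (J.card : ℝ) := by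
        exact_mod_cast hlt
      linarith
  · intro i hi j hj hij
    simp only [dif_pos hi, dif_pos hj]
    have hne : (J.equivFin ⟨i, hi⟩ : ℕ) ≠ (J.equivFin ⟨j, hj⟩ : ℕ) := by
      intro hEq
      apply hij
      have := (J.equivFin).injective (Fin.val_injective hEq)
      exact Subtype.ext_iff.mp this
    obtain ⟨_, _, _, _, hh0, hh1⟩ := hdims i hi
    obtain ⟨_, _, _, _, hh0', hh1'⟩ := hdims j hj
    rw [Set.disjoint_left]
    rintro ⟨p, q, c⟩ hc hc'
    have h1 := hc.2.2
    have h2 := hc'.2.2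
    simp only [Set.mem_Ioo] at h1 h2
    rcases lt_or_gt_of_ne hne with hlt | hlt
    · have h3 : (J.equivFin ⟨i, hi⟩ : ℕ) + 1 ≤ (J.equivFin ⟨j, hj⟩ : ℕ) := hlt
      have h4 : ((J.equivFin ⟨i, hi⟩ : ℕ) : ℝ) + 1 ≤ ((J.equivFin ⟨j, hj⟩ : ℕ) : ℝ) := by
        exact_mod_cast h3
      linarith
    · have h3 : (J.equivFin ⟨j, hj⟩ : ℕ) + 1 ≤ (J.equivFin ⟨i, hi⟩ : ℕ) := hlt
      have h4 : ((J.equivFin ⟨j, hj⟩ : ℕ) : ℝ) + 1 ≤ ((J.equivFin ⟨i, hi⟩ : ℕ) : ℝ) := by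
        exact_mod_cast h3
      linarith

set_option maxHeartbeats 1000000 in
/-- With `u = ε·V/n`, `k_i = ⌈h_i/u⌉`, and `R(J)` the
multiset of rectangles consisting of `k_i` copies of the `w_i × d_i` base of
each item `i ∈ J`, we have `u · OPT_2DBP(R(J)) ≤ (1+ε) · OPT_SP(J)`. -/
theorem stmt11 {ι : Type*} (J : Finset ι) (w d h : ι → ℝ)
    (hn : J.Nonempty)
    (hdims : ∀ i ∈ J, 0 < w i ∧ w i ≤ 1 ∧ 0 < d i ∧ d i ≤ 1 ∧
      0 < h i ∧ h i ≤ 1)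
    (ε V u : ℝ) (hε : 0 < ε)
    (hV : V = ∑ i ∈ J, w i * d i * h i) (hVpos : 0 < V)
    (hu : u = ε * V / (J.card : ℝ))
    (kf : ι → ℕ) (hkf : ∀ i ∈ J, kf i = ⌈h i / u⌉₊) :
    u * (OPT2DBP (J.sigma fun i => Finset.range (kf i))
          (fun p => w p.1) (fun p => d p.1) : ℝ) ≤
      (1 + ε) * OPTSP J w d h := by
  classical
  have hn1 : 1 ≤ J.card := Finset.card_pos.mpr hn
  have hnR : (0:ℝ) < (J.card : ℝ) := by exact_mod_cast hn1
  have hupos : 0 < u := by rw [hu]; positivity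
  set Rset := J.sigma fun i => Finset.range (kf i) with hRset
  set N := OPT2DBP Rset (fun p => w p.1) (fun p => d p.1) with hN
  set S := {H : ℝ | 0 ≤ H ∧ CanPack J w d h 1 1 H} with hS
  have hSne : ((J.card : ℝ)) ∈ S := ⟨by positivity, stack_pack hdims⟩
  -- the key pointwise bound
  have key : ∀ H ∈ S, u * (N : ℝ) ≤ (1 + ε) * H := by
    rintro H ⟨hH0, x, y, z, hp⟩
    have hVH : V ≤ H := by
      rw [hV]
      exact vol_bound hH0 (fun i hi => ⟨(hdims i hi).1.le, (hdims i hi).2.2.1.le,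
        (hdims i hi).2.2.2.2.1.le⟩) hp
    have hHpos : 0 < H := lt_of_lt_of_le hVpos hVH
    set T := ⌈H / u⌉₊ - 1 with hT
    set m := T + J.card with hm
    have hmpos : 0 < m := by omega
    -- plane geometry facts
    have hmem_iff : ∀ p : Σ _ : ι, ℕ, p ∈ Rset ↔ p.1 ∈ J ∧ p.2 < kf p.1 := by
      intro p
      simp [hRset, Finset.mem_sigma, Finset.mem_range]
    have hplane : ∀ p : Σ _ : ι, ℕ, p.1 ∈ J → p.2 + 1 < kf p.1 →
        ⌊z p.1 / u⌋₊ + p.2 < T ∧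
        (((⌊z p.1 / u⌋₊ + p.2 : ℕ) : ℝ) + 1) * u ∈
          Set.Ioo (z p.1) (z p.1 + h p.1) := by
      rintro ⟨i, j⟩ hi hj
      simp only at hj ⊢
      obtain ⟨hx0, hx1, hy0, hy1, hz0, hz1⟩ := hp.1 i hi
      have hzu0 : 0 ≤ z i / u := div_nonneg hz0 hupos.le
      have hfloor : ((⌊z i / u⌋₊ : ℕ) : ℝ) * u ≤ z i := by
        have := Nat.floor_le hzu0
        calc ((⌊z i / u⌋₊ : ℕ) : ℝ) * u ≤ (z i / u) * u := by
              exact mul_le_mul_of_nonneg_right this hupos.le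
          _ = z i := by field_simp
      have hjlt : ((j : ℝ) + 1) * u < h i := by
        rw [hkf i hi] at hj
        have : ((j + 1 : ℕ) : ℝ) < h i / u := Nat.lt_ceil.mp hj
        have h2 : ((j : ℝ) + 1) < h i / u := by push_cast at this; linarith
        calc ((j : ℝ) + 1) * u < (h i / u) * u :=
              mul_lt_mul_of_pos_right h2 hupos
          _ = h i := by field_simp
      have hupper : (((⌊z i / u⌋₊ + j : ℕ) : ℝ) + 1) * u < z i + h i := by
        push_cast
        have : (((⌊z i / u⌋₊ : ℕ) : ℝ) + (j : ℝ) + 1) * u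
            = ((⌊z i / u⌋₊ : ℕ) : ℝ) * u + ((j : ℝ) + 1) * u := by ring
        rw [this]
        linarith
      have hlower : z i < (((⌊z i / u⌋₊ + j : ℕ) : ℝ) + 1) * u := by
        have h1 : z i / u < ((⌊z i / u⌋₊ : ℕ) : ℝ) + 1 := Nat.lt_floor_add_one _
        have h2 : z i < (((⌊z i / u⌋₊ : ℕ) : ℝ) + 1) * u := by
          calc z i = (z i / u) * u := by field_simp
            _ < (((⌊z i / u⌋₊ : ℕ) : ℝ) + 1) * u := mul_lt_mul_of_pos_right h1 hupos
        push_cast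
        push_cast at h2
        nlinarith [hupos, (by positivity : (0:ℝ) ≤ (j:ℝ))]
      refine ⟨?_, hlower, hupper⟩
      -- bound on bin index
      have hH' : (((⌊z i / u⌋₊ + j : ℕ) : ℝ) + 1) < H / u := by
        rw [lt_div_iff₀ hupos]
        calc (((⌊z i / u⌋₊ + j : ℕ) : ℝ) + 1) * u < z i + h i := hupper
          _ ≤ H := hz1
      have : ⌊z i / u⌋₊ + j + 1 < ⌈H / u⌉₊ := by
        rw [Nat.lt_ceil]
        push_cast
        push_cast at hH'
        linarith
      omega
    -- the bin assignment
    set g : (Σ _ : ι, ℕ) → ℕ := fun p =>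
      if p.2 + 1 < kf p.1 then ⌊z p.1 / u⌋₊ + p.2
      else if hq : p.1 ∈ J then T + (J.equivFin ⟨p.1, hq⟩ : ℕ) else 0 with hg
    have hgm : ∀ p ∈ Rset, g p < m := by
      intro p hpmem
      obtain ⟨hp1, hp2⟩ := (hmem_iff p).mp hpmem
      rw [hg]
      by_cases hc : p.2 + 1 < kf p.1
      · simp only [if_pos hc]
        have := (hplane p hp1 hc).1
        omega
      · simp only [if_neg hc, dif_pos hp1]
        have : (J.equivFin ⟨p.1, hp1⟩ : ℕ) < J.card := (J.equivFin ⟨p.1, hp1⟩).2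
        omega
    set f : (Σ _ : ι, ℕ) → Fin m := fun p =>
      if hgp : g p < m then ⟨g p, hgp⟩ else ⟨0, hmpos⟩ with hf
    have hNm : N ≤ m := by
      apply Nat.sInf_le
      refine ⟨f, fun b => ⟨fun p => x p.1, fun p => y p.1, ?_, ?_⟩⟩
      · intro p hpmem
        have hp1 := ((hmem_iff p).mp (Finset.mem_filter.mp hpmem).1).1
        obtain ⟨hx0, hx1, hy0, hy1, _, _⟩ := hp.1 p.1 hp1
        exact ⟨hx0, hx1, hy0, hy1⟩
      · intro p hpmem q hqmem hpq
        obtain ⟨hpR, hpb⟩ := Finset.mem_filter.mp hpmem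
        obtain ⟨hqR, hqb⟩ := Finset.mem_filter.mp hqmem
        obtain ⟨hp1, hp2⟩ := (hmem_iff p).mp hpR
        obtain ⟨hq1, hq2⟩ := (hmem_iff q).mp hqR
        have hgpq : g p = g q := by
          have h1 : (f p).val = (f q).val := congrArg Fin.val (hpb.trans hqb.symm)
          rw [hf] at h1
          simp only [dif_pos (hgm p hpR), dif_pos (hgm q hqR)] at h1
          exact h1
        by_cases hcp : p.2 + 1 < kf p.1 <;> by_cases hcq : q.2 + 1 < kf q.1
        · -- both in plane bins
          rw [hg] at hgpq
          simp only [if_pos hcp, if_pos hcq] at hgpq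
          by_cases hij : p.1 = q.1
          · exfalso
            apply hpq
            have : p.2 = q.2 := by rw [hij] at hgpq; omega
            exact Sigma.ext hij (heq_of_eq this)
          · have hpl := (hplane p hp1 hcp).2
            have hql := (hplane q hq1 hcq).2
            rw [hgpq] at hpl
            exact rect_disj_of_item (hp.2 p.1 hp1 q.1 hq1 hij) hpl hql
        · exfalso
          rw [hg] at hgpq
          simp only [if_pos hcp, if_neg hcq, dif_pos hq1] at hgpq
          have := (hplane p hp1 hcp).1
          omega
        · exfalso
          rw [hg] at hgpq
          simp only [if_neg hcp, if_pos hcq, dif_pos hp1] at hgpq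
          have := (hplane q hq1 hcq).1
          omega
        · -- both private
          exfalso
          rw [hg] at hgpq
          simp only [if_neg hcp, if_neg hcq, dif_pos hp1, dif_pos hq1] at hgpq
          have heq : (J.equivFin ⟨p.1, hp1⟩ : ℕ) = (J.equivFin ⟨q.1, hq1⟩ : ℕ) := by
            omega
          have hij : p.1 = q.1 := by
            have := (J.equivFin).injective (Fin.val_injective heq)
            exact Subtype.ext_iff.mp this
          apply hpq
          have hj2 : p.2 = q.2 := by
            have e1 : p.2 = kf p.1 - 1 := by omega
            have e2 : q.2 = kf q.1 - 1 := by omega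
            rw [e1, e2, hij]
          exact Sigma.ext hij (heq_of_eq hj2)
    -- arithmetic conclusion
    have hTle : u * (T : ℝ) ≤ H := by
      have hceil1 : 1 ≤ ⌈H / u⌉₊ := Nat.one_le_ceil_iff.mpr (by positivity)
      have hcast : (T : ℝ) = (⌈H / u⌉₊ : ℝ) - 1 := by
        rw [hT]; push_cast [Nat.cast_sub hceil1]; ring
      have : (⌈H / u⌉₊ : ℝ) < H / u + 1 := Nat.ceil_lt_add_one (by positivity)
      have hT2 : (T : ℝ) ≤ H / u := by rw [hcast]; linarith
      calc u * (T : ℝ) ≤ u * (H / u) := by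
            exact mul_le_mul_of_nonneg_left hT2 hupos.le
        _ = H := by field_simp
    have hun : u * (J.card : ℝ) = ε * V := by
      rw [hu, div_mul_cancel₀ _ (ne_of_gt hnR)]
    calc u * (N : ℝ) ≤ u * (m : ℝ) := by
          have : (N : ℝ) ≤ (m : ℝ) := by exact_mod_cast hNm
          exact mul_le_mul_of_nonneg_left this hupos.le
      _ = u * (T : ℝ) + u * (J.card : ℝ) := by rw [hm]; push_cast; ring
      _ = u * (T : ℝ) + ε * V := by rw [hun]
      _ ≤ H + ε * H := by
          have : ε * V ≤ ε * H := mul_le_mul_of_nonneg_left hVH hε.le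
          linarith
      _ = (1 + ε) * H := by ring
  -- conclude via infimum
  have h1ε : (0:ℝ) < 1 + ε := by linarith
  have hinf : u * (N : ℝ) / (1 + ε) ≤ sInf S := by
    apply le_csInf ⟨(J.card : ℝ), hSne⟩
    intro H hH
    rw [div_le_iff₀ h1ε]
    calc u * (N : ℝ) ≤ (1 + ε) * H := key H hH
      _ = H * (1 + ε) := by ring
  have : OPTSP J w d h = sInf S := rfl
  rw [this]
  rw [div_le_iff₀ h1ε] at hinf
  linarith
end

section
/- Let T be a finite set of 3D items packed into the strip [0,1]×[0,1]×[0,H]. Then there exists a packing of T into the same strip [0,1]×[0,1]×[0,H] such that every item i either has z_i = 0 or there exists another item j with z_i = z_j + h_j and such that the open rectangles (x_i,x_i+w_i)×(y_i,y_i+d_i) and (x_j,x_j+w_j)×(y_j,y_j+d_j) intersect (i.e., every item stands on the floor of the strip or directly on top of another item). -/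

private lemma le_foldr_max (l : List ℝ) (b : ℝ) : b ≤ l.foldr max b := by
  induction l with
  | nil => simp
  | cons a l ih => exact le_trans ih (le_max_right a _)

private lemma mem_le_foldr_max {a : ℝ} {l : List ℝ} (b : ℝ) (ha : a ∈ l) :
    a ≤ l.foldr max b := by
  induction l with
  | nil => simp at ha
  | cons c l ih =>
    rcases List.mem_cons.mp ha with rfl | ha
    · exact le_max_left _ _
    · exact le_trans (ih ha) (le_max_right _ _)

private lemma foldr_max_le {l : List ℝ} {b C : ℝ} (hb : b ≤ C)
    (h : ∀ a ∈ l, a ≤ C) : l.foldr max b ≤ C := by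
  induction l with
  | nil => exact hb
  | cons a l ih =>
    exact max_le (h a (by simp)) (ih fun a' ha' => h a' (by simp [ha']))

private lemma foldr_max_eq_or_mem (l : List ℝ) (b : ℝ) :
    l.foldr max b = b ∨ l.foldr max b ∈ l := by
  induction l with
  | nil => left; rfl
  | cons a l ih =>
    rcases max_choice a (l.foldr max b) with hm | hm
    · right; rw [List.foldr_cons, hm]; exact List.mem_cons_self
    · rcases ih with h | h
      · left; rw [List.foldr_cons, hm, h]
      · right; rw [List.foldr_cons, hm]; exact List.mem_cons_of_mem _ h

open Classical in
noncomputable def settle (hh : ℕ → ℝ) (c : ℕ → ℕ → Prop) : ℕ → ℝ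
  | k => ((List.range k).attach.map
      (fun m => if c m.1 k then settle hh c m.1 + hh m.1 else 0)).foldr max 0
  decreasing_by exact List.mem_range.mp m.2

lemma settle_nonneg (hh : ℕ → ℝ) (c : ℕ → ℕ → Prop) (k : ℕ) :
    0 ≤ settle hh c k := by
  rw [settle]; exact le_foldr_max _ _

lemma settle_ge (hh : ℕ → ℝ) (c : ℕ → ℕ → Prop) {m k : ℕ} (hm : m < k)
    (hc : c m k) : settle hh c m + hh m ≤ settle hh c k := by
  classical
  conv_rhs => rw [settle]
  apply mem_le_foldr_max
  have hmem : (⟨m, List.mem_range.mpr hm⟩ : {n // n ∈ List.range k}) ∈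
      (List.range k).attach := List.mem_attach _ _
  have := List.mem_map_of_mem (f :=
    fun m : {n // n ∈ List.range k} =>
      if c m.1 k then settle hh c m.1 + hh m.1 else 0) hmem
  simpa [if_pos hc] using this

lemma settle_le (hh : ℕ → ℝ) (c : ℕ → ℕ → Prop) {k : ℕ} {B : ℝ} (hB : 0 ≤ B)
    (h : ∀ m < k, c m k → settle hh c m + hh m ≤ B) : settle hh c k ≤ B := by
  classical
  rw [settle]
  apply foldr_max_le hB
  intro a ha
  obtain ⟨⟨m, hmr⟩, _, rfl⟩ := List.mem_map.mp ha
  by_cases hc : c m k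
  · rw [if_pos hc]; exact h m (List.mem_range.mp hmr) hc
  · rw [if_neg hc]; exact hB

lemma settle_eq_or (hh : ℕ → ℝ) (c : ℕ → ℕ → Prop) (k : ℕ) :
    settle hh c k = 0 ∨
      ∃ m < k, c m k ∧ settle hh c k = settle hh c m + hh m := by
  classical
  have e : settle hh c k = ((List.range k).attach.map
      (fun m => if c m.1 k then settle hh c m.1 + hh m.1 else 0)).foldr max 0 := by
    rw [settle]
  rcases foldr_max_eq_or_mem ((List.range k).attach.map
      (fun m => if c m.1 k then settle hh c m.1 + hh m.1 else 0)) 0 with h0 | hm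
  · left; rw [e, h0]
  · obtain ⟨⟨m, hmr⟩, _, hv⟩ := List.mem_map.mp hm
    by_cases hc : c m k
    · right
      exact ⟨m, List.mem_range.mp hmr, hc, by rw [e, ← hv, if_pos hc]⟩
    · left; rw [e, ← hv, if_neg hc]

lemma mem_ItemRegion {w d h x y z px py pz : ℝ} :
    ((px, py, pz) : ℝ × ℝ × ℝ) ∈ ItemRegion w d h x y z ↔
      (x < px ∧ px < x + w) ∧ (y < py ∧ py < y + d) ∧ (z < pz ∧ pz < z + h) := by
  simp [ItemRegion, Set.mem_prod, Set.mem_Ioo]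

lemma ItemRegion_empty {w d h x y z : ℝ} (hdim : ¬ (0 < w ∧ 0 < d ∧ 0 < h)) :
    ItemRegion w d h x y z = ∅ := by
  ext ⟨px, py, pz⟩
  simp only [mem_ItemRegion, Set.mem_empty_iff_false, iff_false]
  rintro ⟨⟨h1, h2⟩, ⟨h3, h4⟩, ⟨h5, h6⟩⟩
  exact hdim ⟨by linarith, by linarith, by linarith⟩

/-- Any packing of `T` into the strip `[0,1] × [0,1] × [0,H]`
can be replaced by a packing into the same strip in which every item either
stands on the floor (`z' i = 0`) or directly on top of another item (`z' i =
z' j + h j` and the open base rectangles of `i` and `j` intersect). -/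
theorem stmt12 {ι : Type*} (T : Finset ι) (w d h : ι → ℝ) (H : ℝ)
    (x y z : ι → ℝ)
    (hpack : IsPacking T w d h 1 1 H x y z) :
    ∃ x' y' z' : ι → ℝ, IsPacking T w d h 1 1 H x' y' z' ∧
      ∀ i ∈ T, z' i = 0 ∨ ∃ j ∈ T, j ≠ i ∧ z' i = z' j + h j ∧
        ((Set.Ioo (x' i) (x' i + w i) ×ˢ Set.Ioo (y' i) (y' i + d i)) ∩
          (Set.Ioo (x' j) (x' j + w j) ×ˢ
            Set.Ioo (y' j) (y' j + d j))).Nonempty := by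
  classical
  obtain ⟨hfit, hdisj⟩ := hpack
  rcases T.eq_empty_or_nonempty with rfl | ⟨i0, hi0⟩
  · exact ⟨x, y, z, ⟨by simp, by simp⟩, by simp⟩
  -- the sorted list of items
  set le : ι → ι → Bool := fun a b => decide (z a ≤ z b) with hle
  set L : List ι := T.toList.mergeSort le with hLdef
  have hperm : L.Perm T.toList := List.mergeSort_perm _ _
  have hmemL : ∀ a, a ∈ L ↔ a ∈ T := fun a => by
    rw [hperm.mem_iff, Finset.mem_toList]
  have hnodup : L.Nodup := hperm.nodup_iff.mpr T.nodup_toList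
  have hsortedP : List.Pairwise (fun a b => le a b = true) L := by
    apply List.pairwise_mergeSort
    · intro a b c hab hbc
      simp only [hle, decide_eq_true_eq] at hab hbc ⊢
      exact le_trans hab hbc
    · intro a b
      simp only [hle, Bool.or_eq_true, decide_eq_true_eq]
      exact le_total (z a) (z b)
  -- getD helpers
  have hgd : ∀ (k : ℕ) (hk : k < L.length), L.getD k i0 = L.get ⟨k, hk⟩ := by
    intro k hk
    simp [List.getD_eq_getElem?_getD, List.getElem?_eq_getElem hk, List.get_eq_getElem]
  have hsorted : ∀ (m k : ℕ), m < k → (hk : k < L.length) →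
      z (L.getD m i0) ≤ z (L.getD k i0) := by
    intro m k hmk hk
    have hm : m < L.length := lt_trans hmk hk
    rw [hgd m hm, hgd k hk]
    have := List.pairwise_iff_get.mp hsortedP ⟨m, hm⟩ ⟨k, hk⟩ hmk
    simpa [hle, decide_eq_true_eq] using this
  have hgdT : ∀ (k : ℕ), k < L.length → L.getD k i0 ∈ T := by
    intro k hk
    rw [hgd k hk, ← hmemL]
    exact List.get_mem L ⟨k, hk⟩
  have hidxlt : ∀ i ∈ T, L.idxOf i < L.length := by
    intro i hi
    exact List.idxOf_lt_length_iff.mpr ((hmemL i).mpr hi)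
  have hgdidx : ∀ i ∈ T, L.getD (L.idxOf i) i0 = i := by
    intro i hi
    rw [hgd _ (hidxlt i hi)]
    exact List.idxOf_get _
  have hidxgd : ∀ (k : ℕ) (hk : k < L.length), L.idxOf (L.getD k i0) = k := by
    intro k hk
    rw [hgd k hk]
    exact List.get_idxOf hnodup _
  -- key definitions
  set Solid : ι → Prop := fun a => 0 < w a ∧ 0 < d a ∧ 0 < h a with hSolidDef
  set Ov : ι → ι → Prop := fun a b =>
    ((Set.Ioo (x a) (x a + w a) ×ˢ Set.Ioo (y a) (y a + d a)) ∩
     (Set.Ioo (x b) (x b + w b) ×ˢ Set.Ioo (y b) (y b + d b))).Nonempty with hOvDef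
  set c : ℕ → ℕ → Prop :=
    fun m k => Solid (L.getD m i0) ∧ Ov (L.getD m i0) (L.getD k i0) with hcDef
  set hh : ℕ → ℝ := fun m => h (L.getD m i0) with hhDef
  set g : ℕ → ℝ := settle hh c with hgDef
  set z' : ι → ℝ := fun i => if Solid i then g (L.idxOf i) else 0 with hz'Def
  have hz'pos : ∀ i, Solid i → z' i = g (L.idxOf i) := fun i hsi => if_pos hsi
  have hz'neg : ∀ i, ¬ Solid i → z' i = 0 := fun i hsi => if_neg hsi
  have hhApp : ∀ m, hh m = h (L.getD m i0) := fun m => rfl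
  have hcApp : ∀ m k, c m k ↔ Solid (L.getD m i0) ∧ Ov (L.getD m i0) (L.getD k i0) :=
    fun m k => Iff.rfl
  -- key separation lemma in the original packing
  have key : ∀ a ∈ T, ∀ b ∈ T, a ≠ b → Solid b → Ov a b → z a ≤ z b →
      z a + h a ≤ z b := by
    intro a ha b hb hne hsb hov hzab
    by_contra hlt
    push_neg at hlt
    obtain ⟨⟨px, py⟩, hpa, hpb⟩ := hov
    simp only [Set.mem_prod, Set.mem_Ioo] at hpa hpb
    set t := (z b + min (z a + h a) (z b + h b)) / 2 with htdef
    have h2 : z b < z b + h b := by have := hsb.2.2; linarith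
    have hmin : z b < min (z a + h a) (z b + h b) := lt_min hlt h2
    have hbt : z b < t := by rw [htdef]; linarith
    have htm : t < min (z a + h a) (z b + h b) := by rw [htdef]; linarith
    have hta : t < z a + h a := lt_of_lt_of_le htm (min_le_left _ _)
    have htb : t < z b + h b := lt_of_lt_of_le htm (min_le_right _ _)
    have hat : z a < t := lt_of_le_of_lt hzab hbt
    have hd := hdisj a ha b hb hne
    rw [Set.disjoint_left] at hd
    exact hd (a := (px, py, t))
      (mem_ItemRegion.mpr ⟨⟨hpa.1.1, hpa.1.2⟩, ⟨hpa.2.1, hpa.2.2⟩, hat, hta⟩)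
      (mem_ItemRegion.mpr ⟨⟨hpb.1.1, hpb.1.2⟩, ⟨hpb.2.1, hpb.2.2⟩, hbt, htb⟩)
  -- the settled height never exceeds the original height (for solid items)
  have hgle : ∀ k, (hk : k < L.length) → Solid (L.getD k i0) →
      g k ≤ z (L.getD k i0) := by
    intro k
    induction k using Nat.strong_induction_on with
    | _ k IH =>
      intro hk hs
      have hkT : L.getD k i0 ∈ T := hgdT k hk
      apply settle_le
      · exact (hfit _ hkT).2.2.2.2.1
      · intro m hm hc
        have hmlen : m < L.length := lt_trans hm hk
        have hmT : L.getD m i0 ∈ T := hgdT m hmlen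
        have hne : L.getD m i0 ≠ L.getD k i0 := by
          intro hEq
          have h1 := hidxgd m hmlen
          rw [hEq, hidxgd k hk] at h1
          omega
        have hz : z (L.getD m i0) ≤ z (L.getD k i0) := hsorted m k hm hk
        have hkey := key _ hmT _ hkT hne hs hc.2 hz
        have hIH : settle hh c m ≤ z (L.getD m i0) := IH m hm hmlen hc.1
        calc settle hh c m + hh m ≤ z (L.getD m i0) + h (L.getD m i0) := by
              rw [hhApp m]; exact add_le_add_left hIH _
          _ ≤ z (L.getD k i0) := hkey
  -- injectivity of indexOf on T
  have hidxinj : ∀ a ∈ T, ∀ b ∈ T, L.idxOf a = L.idxOf b → a = b := by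
    intro a ha b hb hEq
    have h1 := hgdidx a ha
    rw [hEq, hgdidx b hb] at h1
    exact h1.symm
  -- main disjointness for solid pairs, earlier index first
  have main : ∀ a ∈ T, ∀ b ∈ T, Solid a → Solid b → L.idxOf a < L.idxOf b →
      Disjoint (ItemRegion (w a) (d a) (h a) (x a) (y a) (z' a))
               (ItemRegion (w b) (d b) (h b) (x b) (y b) (z' b)) := by
    intro a ha b hb hsa hsb hlt
    by_cases hov : Ov a b
    · have hc : c (L.idxOf a) (L.idxOf b) := by
        rw [hcApp, hgdidx a ha, hgdidx b hb]
        exact ⟨hsa, hov⟩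
      have hge : g (L.idxOf a) + hh (L.idxOf a) ≤ g (L.idxOf b) :=
        settle_ge hh c hlt hc
      have hha : hh (L.idxOf a) = h a := by rw [hhApp, hgdidx a ha]
      rw [Set.disjoint_left]
      rintro ⟨px, py, pz⟩ hpa hpb
      rw [mem_ItemRegion] at hpa hpb
      have h1 : pz < z' a + h a := hpa.2.2.2
      have h2 : z' b < pz := hpb.2.2.1
      rw [hz'pos a hsa] at h1
      rw [hz'pos b hsb] at h2
      rw [hha] at hge
      linarith
    · rw [Set.disjoint_left]
      rintro ⟨px, py, pz⟩ hpa hpb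
      rw [mem_ItemRegion] at hpa hpb
      apply hov
      refine ⟨(px, py), ?_, ?_⟩ <;>
        simp only [Set.mem_prod, Set.mem_Ioo] <;>
        exact ⟨⟨by tauto, by tauto⟩, ⟨by tauto, by tauto⟩⟩
  refine ⟨x, y, z', ⟨?_, ?_⟩, ?_⟩
  · -- bounds
    intro i hi
    obtain ⟨hx0, hx1, hy0, hy1, hz0, hz1⟩ := hfit i hi
    refine ⟨hx0, hx1, hy0, hy1, ?_, ?_⟩
    · by_cases hsi : Solid i
      · rw [hz'pos i hsi]; exact settle_nonneg _ _ _
      · rw [hz'neg i hsi]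
    · by_cases hsi : Solid i
      · have hle2 : g (L.idxOf i) ≤ z i := by
          have h1 := hgle (L.idxOf i) (hidxlt i hi)
          rw [hgdidx i hi] at h1
          exact h1 hsi
        rw [hz'pos i hsi]
        linarith
      · rw [hz'neg i hsi]
        linarith
  · -- disjointness
    intro i hi j hj hne
    by_cases hsi : Solid i
    · by_cases hsj : Solid j
      · have hneidx : L.idxOf i ≠ L.idxOf j := fun hEq => hne (hidxinj i hi j hj hEq)
        rcases lt_or_gt_of_ne hneidx with hlt | hlt
        · exact main i hi j hj hsi hsj hlt
        · exact (main j hj i hi hsj hsi hlt).symm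
      · rw [ItemRegion_empty (w := w j) hsj]
        exact disjoint_bot_right
    · rw [ItemRegion_empty (w := w i) hsi]
      exact disjoint_bot_left
  · -- support condition
    intro i hi
    by_cases hsi : Solid i
    · rcases settle_eq_or hh c (L.idxOf i) with h0 | ⟨m, hm, hc, heq⟩
      · left; rw [hz'pos i hsi]; exact h0
      · right
        have hmlen : m < L.length := lt_trans hm (hidxlt i hi)
        have hjT : L.getD m i0 ∈ T := hgdT m hmlen
        have hcs : Solid (L.getD m i0) ∧ Ov (L.getD m i0) i := by
          have h1 := (hcApp m (L.idxOf i)).mp hc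
          rw [hgdidx i hi] at h1
          exact h1
        have hji : L.getD m i0 ≠ i := by
          intro hEq
          have h1 := hidxgd m hmlen
          rw [hEq] at h1
          omega
        refine ⟨L.getD m i0, hjT, hji, ?_, ?_⟩
        · have hzj : z' (L.getD m i0) = g m := by
            rw [hz'pos _ hcs.1, hidxgd m hmlen]
          have heq' : g (L.idxOf i) = g m + hh m := heq
          rw [hz'pos i hsi, hzj, heq', hhApp m]
        · rw [Set.inter_comm]
          exact hcs.2
    · left; exact hz'neg i hsi
end

section
/- Let ε ∈ (0,1) and let h_1, …, h_n ∈ (0,1] be heights such that every h_i with h_i > ε equals 1/q for some positive integer q. Then there exist real numbers z_1, …, z_n ≥ 0 such that the intervals [z_i, z_i + h_i) are pairwise disjoint, for every i with h_i = 1/q > ε the position z_i is an integer multiple of 1/q, and max_i (z_i + h_i) ≤ Σ_{i=1}^n h_i + Σ_{q=3}^{⌊1/ε⌋} 1/q. -/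
namespace Stmt13Aux

variable {n : ℕ}

/-- Group index of item `i`: its denominator `q` if tall, else `Q+1`. -/
noncomputable def dv (ε : ℝ) (Q : ℕ) (h : Fin n → ℝ) (i : Fin n) : ℕ :=
  if ε < h i then ⌊1 / h i⌋₊ else Q + 1

/-- Total height of group `q`. -/
noncomputable def lenv (ε : ℝ) (Q : ℕ) (h : Fin n → ℝ) (q : ℕ) : ℝ :=
  ∑ j ∈ Finset.univ.filter (fun j => dv ε Q h j = q), h j

/-- End height after processing groups `1, …, q`. -/
noncomputable def Ev (ε : ℝ) (Q : ℕ) (h : Fin n → ℝ) : ℕ → ℝ := fun m =>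
  Nat.rec 0 (fun q prev =>
    (if q + 1 ≤ Q then (⌈prev * ((q + 1 : ℕ) : ℝ)⌉₊ : ℝ) / ((q + 1 : ℕ) : ℝ) else prev)
      + lenv ε Q h (q + 1)) m

lemma Ev_zero (ε : ℝ) (Q : ℕ) (h : Fin n → ℝ) : Ev ε Q h 0 = 0 := rfl

lemma Ev_succ_def (ε : ℝ) (Q : ℕ) (h : Fin n → ℝ) (q : ℕ) :
    Ev ε Q h (q + 1) =
      (if q + 1 ≤ Q then (⌈Ev ε Q h q * ((q + 1 : ℕ) : ℝ)⌉₊ : ℝ) / ((q + 1 : ℕ) : ℝ)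
        else Ev ε Q h q) + lenv ε Q h (q + 1) := rfl

/-- Start height of group `q`. -/
noncomputable def stv (ε : ℝ) (Q : ℕ) (h : Fin n → ℝ) (q : ℕ) : ℝ :=
  if q ≤ Q then (⌈Ev ε Q h (q - 1) * (q : ℕ)⌉₊ : ℝ) / (q : ℕ) else Ev ε Q h (q - 1)

lemma Ev_succ (ε : ℝ) (Q : ℕ) (h : Fin n → ℝ) (q : ℕ) :
    Ev ε Q h (q + 1) = stv ε Q h (q + 1) + lenv ε Q h (q + 1) := by
  rw [Ev_succ_def, stv]
  simp

/-- The position of item `i`. -/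
noncomputable def zv (ε : ℝ) (Q : ℕ) (h : Fin n → ℝ) (i : Fin n) : ℝ :=
  stv ε Q h (dv ε Q h i) +
    ∑ j ∈ Finset.univ.filter (fun j => dv ε Q h j = dv ε Q h i ∧ j < i), h j

end Stmt13Aux

/-- Shifting a stack so that tall items are not sliced:
given heights `h₁, …, hₙ ∈ (0,1]` such that every height exceeding `ε` equals
`1/q` for some positive integer `q`, there are positions `zᵢ ≥ 0` with
pairwise disjoint intervals `[zᵢ, zᵢ + hᵢ)` such that every item of height
`1/q > ε` is placed at an integer multiple of `1/q`, and the total height is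
at most `Σᵢ hᵢ + Σ_{q=3}^{⌊1/ε⌋} 1/q`. -/
theorem stmt13 (ε : ℝ) (hε_pos : 0 < ε) (hε_lt : ε < 1)
    (n : ℕ) (h : Fin n → ℝ)
    (hh : ∀ i, 0 < h i ∧ h i ≤ 1)
    (htall : ∀ i, ε < h i → ∃ q : ℕ, 0 < q ∧ h i = 1 / (q : ℝ)) :
    ∃ z : Fin n → ℝ, (∀ i, 0 ≤ z i) ∧
      (∀ i j, i ≠ j →
        Disjoint (Set.Ico (z i) (z i + h i)) (Set.Ico (z j) (z j + h j))) ∧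
      (∀ i, ∀ q : ℕ, 0 < q → h i = 1 / (q : ℝ) → ε < h i →
        ∃ a : ℕ, z i = (a : ℝ) * (1 / (q : ℝ))) ∧
      (∀ i, z i + h i ≤ (∑ j, h j) + ∑ q ∈ Finset.Icc 3 ⌊1 / ε⌋₊, (1 : ℝ) / q) := by
  classical
  obtain ⟨Q, hQdef⟩ : ∃ Q : ℕ, Q = ⌊1 / ε⌋₊ := ⟨_, rfl⟩
  have hQ1 : 1 ≤ Q := by
    rw [hQdef, Nat.le_floor_iff (by positivity)]
    push_cast
    exact one_le_one_div hε_pos (le_of_lt hε_lt)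
  -- group index of a tall item with height 1/q is q, and q ≤ Q
  have hd_tall : ∀ i (q : ℕ), 0 < q → h i = 1 / (q : ℝ) → ε < h i →
      Stmt13Aux.dv ε Q h i = q ∧ q ≤ Q := by
    intro i q hq hiq hεi
    have hq0 : (0 : ℝ) < q := by exact_mod_cast hq
    have h1 : 1 / h i = (q : ℝ) := by rw [hiq, one_div_one_div]
    constructor
    · unfold Stmt13Aux.dv; rw [if_pos hεi, h1, Nat.floor_natCast]
    · rw [hQdef, Nat.le_floor_iff (by positivity)]
      have h2 : ε < 1 / q := by rwa [hiq] at hεi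
      have h3 : ε * q < 1 := (lt_div_iff₀ hq0).mp h2
      rw [le_div_iff₀ hε_pos]
      nlinarith
  -- group index is between 1 and Q+1
  have hd_range : ∀ i, 1 ≤ Stmt13Aux.dv ε Q h i ∧ Stmt13Aux.dv ε Q h i ≤ Q + 1 := by
    intro i
    by_cases hεi : ε < h i
    · obtain ⟨q, hq, hiq⟩ := htall i hεi
      obtain ⟨hdi, hqQ⟩ := hd_tall i q hq hiq hεi
      omega
    · have : Stmt13Aux.dv ε Q h i = Q + 1 := by unfold Stmt13Aux.dv; rw [if_neg hεi]
      omega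
  -- items in a tall group have the group's height
  have htall_of_d : ∀ i, Stmt13Aux.dv ε Q h i ≤ Q →
      ε < h i ∧ h i = 1 / (Stmt13Aux.dv ε Q h i : ℝ) := by
    intro i hdi
    by_cases hεi : ε < h i
    · obtain ⟨q, hq, hiq⟩ := htall i hεi
      obtain ⟨hdq, _⟩ := hd_tall i q hq hiq hεi
      exact ⟨hεi, by rw [hdq]; exact hiq⟩
    · exfalso
      have : Stmt13Aux.dv ε Q h i = Q + 1 := by unfold Stmt13Aux.dv; rw [if_neg hεi]
      omega
  have hlen_nonneg : ∀ q, 0 ≤ Stmt13Aux.lenv ε Q h q := by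
    intro q
    unfold Stmt13Aux.lenv
    exact Finset.sum_nonneg fun j _ => le_of_lt (hh j).1
  have hE_nonneg : ∀ q, 0 ≤ Stmt13Aux.Ev ε Q h q := by
    intro q
    induction q with
    | zero => rw [Stmt13Aux.Ev_zero]
    | succ m ih =>
      rw [Stmt13Aux.Ev_succ_def]
      have h2 := hlen_nonneg (m + 1)
      split
      · positivity
      · linarith
  have hst_ge : ∀ q, Stmt13Aux.Ev ε Q h q ≤ Stmt13Aux.stv ε Q h (q + 1) := by
    intro q
    unfold Stmt13Aux.stv
    simp only [Nat.add_sub_cancel]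
    split
    · rw [le_div_iff₀ (by positivity)]
      exact Nat.le_ceil _
    · exact le_refl _
  have hst_nonneg : ∀ q, 0 ≤ Stmt13Aux.stv ε Q h q := by
    intro q
    unfold Stmt13Aux.stv
    split
    · positivity
    · exact hE_nonneg _
  have hE_mono : Monotone (Stmt13Aux.Ev ε Q h) := by
    apply monotone_nat_of_le_succ
    intro q
    calc Stmt13Aux.Ev ε Q h q ≤ Stmt13Aux.stv ε Q h (q + 1) := hst_ge q
      _ ≤ Stmt13Aux.stv ε Q h (q + 1) + Stmt13Aux.lenv ε Q h (q + 1) :=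
          le_add_of_nonneg_right (hlen_nonneg _)
      _ = Stmt13Aux.Ev ε Q h (q + 1) := (Stmt13Aux.Ev_succ ε Q h q).symm
  have hEv_eq : ∀ q : ℕ, 1 ≤ q →
      Stmt13Aux.Ev ε Q h q = Stmt13Aux.stv ε Q h q + Stmt13Aux.lenv ε Q h q := by
    intro q hq
    obtain ⟨m, rfl⟩ : ∃ m, q = m + 1 := ⟨q - 1, by omega⟩
    exact Stmt13Aux.Ev_succ ε Q h m
  -- z plus height is at most the end of its group
  have hztop : ∀ i, Stmt13Aux.zv ε Q h i + h i ≤ Stmt13Aux.Ev ε Q h (Stmt13Aux.dv ε Q h i) := by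
    intro i
    rw [hEv_eq _ (hd_range i).1]
    unfold Stmt13Aux.zv
    rw [add_assoc]
    apply add_le_add_right
    have hni : i ∉ Finset.univ.filter
        (fun j => Stmt13Aux.dv ε Q h j = Stmt13Aux.dv ε Q h i ∧ j < i) := by simp
    have hsub : insert i (Finset.univ.filter
        (fun j => Stmt13Aux.dv ε Q h j = Stmt13Aux.dv ε Q h i ∧ j < i)) ⊆
        Finset.univ.filter (fun j => Stmt13Aux.dv ε Q h j = Stmt13Aux.dv ε Q h i) := by
      intro j hj
      rcases Finset.mem_insert.mp hj with hji | hjm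
      · subst hji; simp
      · simp only [Finset.mem_filter] at hjm ⊢
        exact ⟨hjm.1, hjm.2.1⟩
    calc (∑ j ∈ Finset.univ.filter
            (fun j => Stmt13Aux.dv ε Q h j = Stmt13Aux.dv ε Q h i ∧ j < i), h j) + h i
        = ∑ j ∈ insert i (Finset.univ.filter
            (fun j => Stmt13Aux.dv ε Q h j = Stmt13Aux.dv ε Q h i ∧ j < i)), h j := by
          rw [Finset.sum_insert hni, add_comm]
      _ ≤ ∑ j ∈ Finset.univ.filter (fun j => Stmt13Aux.dv ε Q h j = Stmt13Aux.dv ε Q h i), h j :=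
          Finset.sum_le_sum_of_subset_of_nonneg hsub (fun j _ _ => le_of_lt (hh j).1)
      _ = Stmt13Aux.lenv ε Q h (Stmt13Aux.dv ε Q h i) := rfl
  have hz_nonneg : ∀ i, 0 ≤ Stmt13Aux.zv ε Q h i := by
    intro i
    unfold Stmt13Aux.zv
    exact add_nonneg (hst_nonneg _) (Finset.sum_nonneg fun j _ => le_of_lt (hh j).1)
  have hst_le_z : ∀ i, Stmt13Aux.stv ε Q h (Stmt13Aux.dv ε Q h i) ≤ Stmt13Aux.zv ε Q h i := by
    intro i
    unfold Stmt13Aux.zv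
    exact le_add_of_nonneg_right (Finset.sum_nonneg fun j _ => le_of_lt (hh j).1)
  -- ordering lemma
  have horder : ∀ i j, (Stmt13Aux.dv ε Q h i < Stmt13Aux.dv ε Q h j ∨
      (Stmt13Aux.dv ε Q h i = Stmt13Aux.dv ε Q h j ∧ i < j)) →
      Stmt13Aux.zv ε Q h i + h i ≤ Stmt13Aux.zv ε Q h j := by
    intro i j hij
    rcases hij with hlt | ⟨heq, hij⟩
    · have h1 := hztop i
      have h2 : Stmt13Aux.Ev ε Q h (Stmt13Aux.dv ε Q h i)
          ≤ Stmt13Aux.Ev ε Q h (Stmt13Aux.dv ε Q h j - 1) := hE_mono (by omega)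
      have h3 : Stmt13Aux.Ev ε Q h (Stmt13Aux.dv ε Q h j - 1)
          ≤ Stmt13Aux.stv ε Q h (Stmt13Aux.dv ε Q h j) := by
        have hne : Stmt13Aux.dv ε Q h j = (Stmt13Aux.dv ε Q h j - 1) + 1 :=
          (Nat.succ_pred_eq_of_pos (hd_range j).1).symm
        calc Stmt13Aux.Ev ε Q h (Stmt13Aux.dv ε Q h j - 1)
            ≤ Stmt13Aux.stv ε Q h ((Stmt13Aux.dv ε Q h j - 1) + 1) := hst_ge _
          _ = Stmt13Aux.stv ε Q h (Stmt13Aux.dv ε Q h j) := by rw [← hne]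
      linarith [hst_le_z j]
    · unfold Stmt13Aux.zv
      rw [← heq, add_assoc]
      apply add_le_add_right
      have hni : i ∉ Finset.univ.filter
          (fun k => Stmt13Aux.dv ε Q h k = Stmt13Aux.dv ε Q h i ∧ k < i) := by simp
      have hsub : insert i (Finset.univ.filter
          (fun k => Stmt13Aux.dv ε Q h k = Stmt13Aux.dv ε Q h i ∧ k < i)) ⊆
          Finset.univ.filter (fun k => Stmt13Aux.dv ε Q h k = Stmt13Aux.dv ε Q h i ∧ k < j) := by
        intro k hk
        rcases Finset.mem_insert.mp hk with hki | hkm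
        · subst hki; simp [hij]
        · simp only [Finset.mem_filter] at hkm ⊢
          exact ⟨hkm.1, hkm.2.1, lt_trans hkm.2.2 hij⟩
      calc (∑ k ∈ Finset.univ.filter
              (fun k => Stmt13Aux.dv ε Q h k = Stmt13Aux.dv ε Q h i ∧ k < i), h k) + h i
          = ∑ k ∈ insert i (Finset.univ.filter
              (fun k => Stmt13Aux.dv ε Q h k = Stmt13Aux.dv ε Q h i ∧ k < i)), h k := by
            rw [Finset.sum_insert hni, add_comm]
        _ ≤ ∑ k ∈ Finset.univ.filter
              (fun k => Stmt13Aux.dv ε Q h k = Stmt13Aux.dv ε Q h i ∧ k < j), h k :=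
            Finset.sum_le_sum_of_subset_of_nonneg hsub (fun k _ _ => le_of_lt (hh k).1)
  -- E 1 is a natural number
  have hE1nat : ∃ c : ℕ, Stmt13Aux.Ev ε Q h 1 = (c : ℝ) := by
    refine ⟨(Finset.univ.filter (fun j => Stmt13Aux.dv ε Q h j = 1)).card, ?_⟩
    have hst1 : Stmt13Aux.stv ε Q h 1 = 0 := by
      unfold Stmt13Aux.stv
      rw [if_pos hQ1]
      rw [show Stmt13Aux.Ev ε Q h (1 - 1) = 0 from Stmt13Aux.Ev_zero ε Q h]
      rw [zero_mul, Nat.ceil_zero]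
      norm_num
    have hlen1 : Stmt13Aux.lenv ε Q h 1
        = ((Finset.univ.filter (fun j => Stmt13Aux.dv ε Q h j = 1)).card : ℝ) := by
      unfold Stmt13Aux.lenv
      rw [Finset.card_eq_sum_ones, Nat.cast_sum]
      apply Finset.sum_congr rfl
      intro j hj
      simp only [Finset.mem_filter] at hj
      have := (htall_of_d j (by omega)).2
      rw [hj.2] at this
      simpa using this
    rw [hEv_eq 1 (le_refl 1), hst1, hlen1, zero_add]
  -- waste estimate
  have hwaste : ∀ q : ℕ, Stmt13Aux.stv ε Q h (q + 1) ≤ Stmt13Aux.Ev ε Q h q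
      + (if 3 ≤ q + 1 ∧ q + 1 ≤ Q then 1 / ((q : ℝ) + 1) else 0) := by
    intro q
    by_cases hqQ : q + 1 ≤ Q
    · match q with
      | 0 =>
        have h1 : Stmt13Aux.stv ε Q h 1 = 0 := by
          unfold Stmt13Aux.stv
          rw [if_pos hQ1]
          rw [show Stmt13Aux.Ev ε Q h (1 - 1) = 0 from Stmt13Aux.Ev_zero ε Q h]
          rw [zero_mul, Nat.ceil_zero]
          norm_num
        rw [h1, Stmt13Aux.Ev_zero, if_neg (by omega : ¬(3 ≤ 0 + 1 ∧ 0 + 1 ≤ Q)), zero_add]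
      | 1 =>
        obtain ⟨c, hc⟩ := hE1nat
        have h2 : Stmt13Aux.stv ε Q h 2 = Stmt13Aux.Ev ε Q h 1 := by
          unfold Stmt13Aux.stv
          rw [if_pos hqQ]
          rw [show Stmt13Aux.Ev ε Q h (2 - 1) = (c : ℝ) from hc]
          rw [show (c : ℝ) * ((2 : ℕ) : ℝ) = ((c * 2 : ℕ) : ℝ) by push_cast; ring]
          rw [Nat.ceil_natCast]
          push_cast
          ring
        rw [h2, if_neg (by omega : ¬(3 ≤ 1 + 1 ∧ 1 + 1 ≤ Q)), add_zero]
      | (m + 2) =>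
        have hle : 3 ≤ m + 2 + 1 ∧ m + 2 + 1 ≤ Q := ⟨by omega, hqQ⟩
        rw [if_pos hle]
        unfold Stmt13Aux.stv
        rw [if_pos (show m + 2 + 1 ≤ Q from hqQ)]
        rw [show m + 2 + 1 - 1 = m + 2 from rfl]
        have hpos : (0 : ℝ) < ((m + 2 + 1 : ℕ) : ℝ) := by positivity
        rw [div_le_iff₀ hpos]
        have hceil : (⌈Stmt13Aux.Ev ε Q h (m + 2) * ((m + 2 + 1 : ℕ) : ℝ)⌉₊ : ℝ)
            < Stmt13Aux.Ev ε Q h (m + 2) * ((m + 2 + 1 : ℕ) : ℝ) + 1 := by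
          apply Nat.ceil_lt_add_one
          have := hE_nonneg (m + 2)
          positivity
        have heq2 : (Stmt13Aux.Ev ε Q h (m + 2) + 1 / (((m + 2 : ℕ) : ℝ) + 1)) * ((m + 2 + 1 : ℕ) : ℝ)
            = Stmt13Aux.Ev ε Q h (m + 2) * ((m + 2 + 1 : ℕ) : ℝ) + 1 := by
          push_cast
          field_simp
        rw [heq2]
        linarith
    · have hstE : Stmt13Aux.stv ε Q h (q + 1) = Stmt13Aux.Ev ε Q h q := by
        unfold Stmt13Aux.stv
        rw [if_neg hqQ]
        congr 1
      rw [hstE, if_neg (by omega : ¬(3 ≤ q + 1 ∧ q + 1 ≤ Q)), add_zero]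
  -- main bound on E
  have hbound : ∀ m : ℕ, Stmt13Aux.Ev ε Q h m ≤ (∑ q ∈ Finset.Icc 1 m, Stmt13Aux.lenv ε Q h q)
      + ∑ q ∈ Finset.Icc 3 (min Q m), 1 / (q : ℝ) := by
    intro m
    induction m with
    | zero => simp [Stmt13Aux.Ev_zero]
    | succ m ih =>
      have hEs := Stmt13Aux.Ev_succ ε Q h m
      have hlens : ∑ q ∈ Finset.Icc 1 (m + 1), Stmt13Aux.lenv ε Q h q
          = (∑ q ∈ Finset.Icc 1 m, Stmt13Aux.lenv ε Q h q) + Stmt13Aux.lenv ε Q h (m + 1) :=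
        Finset.sum_Icc_succ_top (by omega) _
      have hwsum : (∑ q ∈ Finset.Icc 3 (min Q m), 1 / (q : ℝ))
          + (if 3 ≤ m + 1 ∧ m + 1 ≤ Q then 1 / ((m : ℝ) + 1) else 0)
          ≤ ∑ q ∈ Finset.Icc 3 (min Q (m + 1)), 1 / (q : ℝ) := by
        by_cases hc : 3 ≤ m + 1 ∧ m + 1 ≤ Q
        · rw [if_pos hc]
          have h1 : min Q m = m := by omega
          have h2 : min Q (m + 1) = m + 1 := by omega
          rw [h1, h2, Finset.sum_Icc_succ_top hc.1]
          push_cast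
          exact le_refl _
        · rw [if_neg hc, add_zero]
          apply Finset.sum_le_sum_of_subset_of_nonneg
          · apply Finset.Icc_subset_Icc_right; omega
          · intro q _ _; positivity
      calc Stmt13Aux.Ev ε Q h (m + 1)
          = Stmt13Aux.stv ε Q h (m + 1) + Stmt13Aux.lenv ε Q h (m + 1) := hEs
        _ ≤ (Stmt13Aux.Ev ε Q h m + (if 3 ≤ m + 1 ∧ m + 1 ≤ Q then 1 / ((m : ℝ) + 1) else 0))
              + Stmt13Aux.lenv ε Q h (m + 1) := by linarith [hwaste m]
        _ ≤ ((∑ q ∈ Finset.Icc 1 m, Stmt13Aux.lenv ε Q h q)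
              + (∑ q ∈ Finset.Icc 3 (min Q m), 1 / (q : ℝ))
              + (if 3 ≤ m + 1 ∧ m + 1 ≤ Q then 1 / ((m : ℝ) + 1) else 0))
              + Stmt13Aux.lenv ε Q h (m + 1) := by linarith
        _ ≤ (∑ q ∈ Finset.Icc 1 (m + 1), Stmt13Aux.lenv ε Q h q)
              + ∑ q ∈ Finset.Icc 3 (min Q (m + 1)), 1 / (q : ℝ) := by
            rw [hlens]
            linarith [hwsum]
  -- sum of group lengths is the total height
  have hlensum : ∑ q ∈ Finset.Icc 1 (Q + 1), Stmt13Aux.lenv ε Q h q = ∑ j, h j := by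
    unfold Stmt13Aux.lenv
    apply Finset.sum_fiberwise_of_maps_to
    intro j _
    rw [Finset.mem_Icc]
    exact hd_range j
  -- final bound
  have hfinal : Stmt13Aux.Ev ε Q h (Q + 1)
      ≤ (∑ j, h j) + ∑ q ∈ Finset.Icc 3 Q, 1 / (q : ℝ) := by
    have := hbound (Q + 1)
    rw [min_eq_left (by omega), hlensum] at this
    exact this
  -- assemble
  refine ⟨Stmt13Aux.zv ε Q h, hz_nonneg, ?_, ?_, ?_⟩
  · intro i j hij
    have key : ∀ i j : Fin n, (Stmt13Aux.dv ε Q h i < Stmt13Aux.dv ε Q h j ∨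
        (Stmt13Aux.dv ε Q h i = Stmt13Aux.dv ε Q h j ∧ i < j)) →
        Disjoint (Set.Ico (Stmt13Aux.zv ε Q h i) (Stmt13Aux.zv ε Q h i + h i))
          (Set.Ico (Stmt13Aux.zv ε Q h j) (Stmt13Aux.zv ε Q h j + h j)) := by
      intro i j hord
      apply Set.Ico_disjoint_Ico.mpr
      have h1 := horder i j hord
      calc min (Stmt13Aux.zv ε Q h i + h i) (Stmt13Aux.zv ε Q h j + h j)
          ≤ Stmt13Aux.zv ε Q h i + h i := min_le_left _ _
        _ ≤ Stmt13Aux.zv ε Q h j := h1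
        _ ≤ max (Stmt13Aux.zv ε Q h i) (Stmt13Aux.zv ε Q h j) := le_max_right _ _
    rcases lt_trichotomy (Stmt13Aux.dv ε Q h i) (Stmt13Aux.dv ε Q h j) with hlt | heq | hgt
    · exact key i j (Or.inl hlt)
    · rcases lt_trichotomy i j with hij' | heq' | hij'
      · exact key i j (Or.inr ⟨heq, hij'⟩)
      · exact absurd heq' hij
      · exact (key j i (Or.inr ⟨heq.symm, hij'⟩)).symm
    · exact (key j i (Or.inl hgt)).symm
  · intro i q hq hiq hεi
    obtain ⟨hdi, hqQ⟩ := hd_tall i q hq hiq hεi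
    have hq0 : ((q : ℕ) : ℝ) ≠ 0 := by
      have : (0 : ℝ) < q := by exact_mod_cast hq
      exact ne_of_gt this
    have hstq : Stmt13Aux.stv ε Q h q
        = (⌈Stmt13Aux.Ev ε Q h (q - 1) * ((q : ℕ) : ℝ)⌉₊ : ℝ) / ((q : ℕ) : ℝ) := by
      unfold Stmt13Aux.stv; rw [if_pos hqQ]
    have hsum : ∑ j ∈ Finset.univ.filter
          (fun j => Stmt13Aux.dv ε Q h j = Stmt13Aux.dv ε Q h i ∧ j < i), h j
        = ((Finset.univ.filter
            (fun j => Stmt13Aux.dv ε Q h j = Stmt13Aux.dv ε Q h i ∧ j < i)).card : ℝ)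
          * (1 / (q : ℝ)) := by
      rw [Finset.card_eq_sum_ones, Nat.cast_sum, Finset.sum_mul]
      apply Finset.sum_congr rfl
      intro j hj
      simp only [Finset.mem_filter] at hj
      have hdj : Stmt13Aux.dv ε Q h j = q := by rw [hj.2.1, hdi]
      have := (htall_of_d j (by omega)).2
      rw [hdj] at this
      rw [this]
      push_cast
      ring
    refine ⟨⌈Stmt13Aux.Ev ε Q h (q - 1) * ((q : ℕ) : ℝ)⌉₊
      + (Finset.univ.filter
          (fun j => Stmt13Aux.dv ε Q h j = Stmt13Aux.dv ε Q h i ∧ j < i)).card, ?_⟩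
    show Stmt13Aux.stv ε Q h (Stmt13Aux.dv ε Q h i) + _ = _
    rw [hsum, hdi, hstq]
    push_cast
    field_simp
  · intro i
    rw [← hQdef]
    calc Stmt13Aux.zv ε Q h i + h i ≤ Stmt13Aux.Ev ε Q h (Stmt13Aux.dv ε Q h i) := hztop i
      _ ≤ Stmt13Aux.Ev ε Q h (Q + 1) := hE_mono (hd_range i).2
      _ ≤ (∑ j, h j) + ∑ q ∈ Finset.Icc 3 Q, 1 / (q : ℝ) := hfinal
end

section
/- Let I be a finite set of 3D items with all dimensions in (0,1] and total volume v(I) ≤ 1, and let ε ∈ (0,1]. Define μ_0 = ε and μ_j = μ_{j−1}^6 for j ≥ 1, and let N = ⌈3/ε⌉. Then there exists an index j ∈ {1,…,N} such that the total volume of the items of I that have at least one of their three dimensions in the interval (μ_j, μ_{j−1}] is at most ε. -/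
open scoped Classical

/-- Shifting argument: if the items of `I` have all
dimensions in `(0,1]` and total volume at most `1`, `ε ∈ (0,1]`, `μ₀ = ε`,
`μⱼ = μ_{j-1}⁶`, and `N = ⌈3/ε⌉`, then for some `j ∈ {1,…,N}` the total
volume of the items with at least one dimension in `(μⱼ, μ_{j-1}]` is at most
`ε`. -/
theorem stmt15 {ι : Type*} (I : Finset ι) (w d h : ι → ℝ) (ε : ℝ)
    (hεpos : 0 < ε) (hεle : ε ≤ 1)
    (hdims : ∀ i ∈ I, 0 < w i ∧ w i ≤ 1 ∧ 0 < d i ∧ d i ≤ 1 ∧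
      0 < h i ∧ h i ≤ 1)
    (hvol : ∑ i ∈ I, w i * d i * h i ≤ 1)
    (μ : ℕ → ℝ) (hμ0 : μ 0 = ε) (hμ : ∀ j, μ (j + 1) = (μ j) ^ 6) :
    ∃ j ∈ Finset.Icc 1 ⌈3 / ε⌉₊,
      ∑ i ∈ I.filter (fun i =>
          (μ j < w i ∧ w i ≤ μ (j - 1)) ∨ (μ j < d i ∧ d i ≤ μ (j - 1)) ∨
          (μ j < h i ∧ h i ≤ μ (j - 1))),
        w i * d i * h i ≤ ε := by
  set N := ⌈3 / ε⌉₊ with hNdef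
  by_contra hcon
  push_neg at hcon
  have hμbd : ∀ j, 0 < μ j ∧ μ j ≤ 1 := by
    intro j
    induction j with
    | zero => rw [hμ0]; exact ⟨hεpos, hεle⟩
    | succ n ih => rw [hμ n]; exact ⟨pow_pos ih.1 6, pow_le_one₀ ih.1.le ih.2⟩
  have hanti : Antitone μ := by
    apply antitone_nat_of_succ_le
    intro n; rw [hμ n]
    exact pow_le_of_le_one (hμbd n).1.le (hμbd n).2 (by norm_num)
  have hvnn : ∀ i ∈ I, 0 ≤ w i * d i * h i := by
    intro i hi
    obtain ⟨h1, _, h2, _, h3, _⟩ := hdims i hi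
    positivity
  -- each dimension lies in at most one interval
  have hcard1 : ∀ x : ℝ,
      ((Finset.Icc 1 N).filter (fun j => μ j < x ∧ x ≤ μ (j - 1))).card ≤ 1 := by
    intro x
    apply Finset.card_le_one.mpr
    intro a ha b hb
    simp only [Finset.mem_filter, Finset.mem_Icc] at ha hb
    rcases lt_trichotomy a b with hab | hab | hab
    · exfalso
      have : μ (b - 1) ≤ μ a := hanti (by omega)
      linarith [ha.2.1, hb.2.2]
    · exact hab
    · exfalso
      have : μ (a - 1) ≤ μ b := hanti (by omega)
      linarith [hb.2.1, ha.2.2]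
  set P : ℕ → ι → Prop := fun j i =>
      (μ j < w i ∧ w i ≤ μ (j - 1)) ∨ (μ j < d i ∧ d i ≤ μ (j - 1)) ∨
      (μ j < h i ∧ h i ≤ μ (j - 1)) with hP
  -- each item is counted at most 3 times
  have hcard3 : ∀ i : ι,
      ((Finset.Icc 1 N).filter (fun j => P j i)).card ≤ 3 := by
    intro i
    have hsub : (Finset.Icc 1 N).filter (fun j => P j i) ⊆
        ((Finset.Icc 1 N).filter (fun j => μ j < w i ∧ w i ≤ μ (j - 1))) ∪
        ((Finset.Icc 1 N).filter (fun j => μ j < d i ∧ d i ≤ μ (j - 1))) ∪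
        ((Finset.Icc 1 N).filter (fun j => μ j < h i ∧ h i ≤ μ (j - 1))) := by
      intro j hj
      simp only [Finset.mem_filter, Finset.mem_union] at hj ⊢
      rcases hj.2 with hw | hd | hh
      · exact Or.inl (Or.inl ⟨hj.1, hw⟩)
      · exact Or.inl (Or.inr ⟨hj.1, hd⟩)
      · exact Or.inr ⟨hj.1, hh⟩
    calc ((Finset.Icc 1 N).filter (fun j => P j i)).card
        ≤ _ := Finset.card_le_card hsub
      _ ≤ _ + _ := Finset.card_union_le _ _
      _ ≤ (1 + 1) + 1 := by
          gcongr
          · exact le_trans (Finset.card_union_le _ _)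
              (add_le_add (hcard1 (w i)) (hcard1 (d i)))
          · exact hcard1 (h i)
  -- total sum bound from above
  have hupper : ∑ j ∈ Finset.Icc 1 N, ∑ i ∈ I.filter (fun i => P j i),
      w i * d i * h i ≤ 3 := by
    have hswap : ∑ j ∈ Finset.Icc 1 N, ∑ i ∈ I.filter (fun i => P j i),
        w i * d i * h i
        = ∑ i ∈ I, ((Finset.Icc 1 N).filter (fun j => P j i)).card •
            (w i * d i * h i) := by
      simp_rw [Finset.sum_filter]
      rw [Finset.sum_comm]
      congr 1
      ext i
      rw [← Finset.sum_filter, Finset.sum_const]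
    rw [hswap]
    calc ∑ i ∈ I, ((Finset.Icc 1 N).filter (fun j => P j i)).card •
          (w i * d i * h i)
        ≤ ∑ i ∈ I, 3 * (w i * d i * h i) := by
          apply Finset.sum_le_sum
          intro i hi
          rw [nsmul_eq_mul]
          have := hvnn i hi
          have hc := hcard3 i
          have : (((Finset.Icc 1 N).filter (fun j => P j i)).card : ℝ) ≤ 3 := by
            exact_mod_cast hc
          nlinarith [hvnn i hi]
      _ = 3 * ∑ i ∈ I, w i * d i * h i := by rw [Finset.mul_sum]
      _ ≤ 3 := by linarith
  -- total sum bound from below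
  have hN1 : 1 ≤ N := by
    rw [hNdef]
    exact Nat.one_le_ceil_iff.mpr (by positivity)
  have hlower : (3 : ℝ) < ∑ j ∈ Finset.Icc 1 N, ∑ i ∈ I.filter (fun i => P j i),
      w i * d i * h i := by
    have hne : (Finset.Icc 1 N).Nonempty := ⟨1, by simp [Finset.mem_Icc, hN1]⟩
    have : ∑ j ∈ Finset.Icc 1 N, ε < ∑ j ∈ Finset.Icc 1 N,
        ∑ i ∈ I.filter (fun i => P j i), w i * d i * h i :=
      Finset.sum_lt_sum_of_nonempty hne (fun j hj => hcon j hj)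
    have hcardIcc : (Finset.Icc 1 N).card = N := by
      rw [Nat.card_Icc]; omega
    have hsum : ∑ j ∈ Finset.Icc 1 N, ε = (N : ℝ) * ε := by
      rw [Finset.sum_const, hcardIcc, nsmul_eq_mul]
    have hNε : (3 : ℝ) ≤ (N : ℝ) * ε := by
      have h1 : 3 / ε ≤ (N : ℝ) := Nat.le_ceil _
      calc (3 : ℝ) = (3 / ε) * ε := by field_simp
        _ ≤ (N : ℝ) * ε := by
            exact mul_le_mul_of_nonneg_right h1 hεpos.le
    linarith [this, hsum ▸ this]
  linarith
end

section
/- Let 0 < μ ≤ ε and let T be a finite set of 3D items with all dimensions in (0,1] such that each item has height at most μ and v(T) ≤ ε. Then T can be packed into the strip [0,1]×[0,1]×[0, 12ε]. -/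
set_option linter.unusedVariables false
set_option linter.unusedSectionVars false

section Region

variable {w d h x y z w' d' h' x' y' z' : ℝ}

lemma region_sep_x (hx : x + w ≤ x') :
    Disjoint (ItemRegion w d h x y z) (ItemRegion w' d' h' x' y' z') := by
  rw [Set.disjoint_left]
  rintro ⟨p1, p2, p3⟩ hp hq
  simp only [ItemRegion, Set.mem_prod, Set.mem_Ioo] at hp hq
  linarith [hp.1.2, hq.1.1]

lemma region_sep_y (hy : y + d ≤ y') :
    Disjoint (ItemRegion w d h x y z) (ItemRegion w' d' h' x' y' z') := by
  rw [Set.disjoint_left]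
  rintro ⟨p1, p2, p3⟩ hp hq
  simp only [ItemRegion, Set.mem_prod, Set.mem_Ioo] at hp hq
  linarith [hp.2.1.2, hq.2.1.1]

lemma region_sep_z (hz : z + h ≤ z') :
    Disjoint (ItemRegion w d h x y z) (ItemRegion w' d' h' x' y' z') := by
  rw [Set.disjoint_left]
  rintro ⟨p1, p2, p3⟩ hp hq
  simp only [ItemRegion, Set.mem_prod, Set.mem_Ioo] at hp hq
  linarith [hp.2.2.2, hq.2.2.1]

lemma region_shift (c₁ c₂ c₃ : ℝ)
    (hd : Disjoint (ItemRegion w d h x y z) (ItemRegion w' d' h' x' y' z')) :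
    Disjoint (ItemRegion w d h (x + c₁) (y + c₂) (z + c₃))
             (ItemRegion w' d' h' (x' + c₁) (y' + c₂) (z' + c₃)) := by
  rw [Set.disjoint_left] at hd ⊢
  rintro ⟨p1, p2, p3⟩ hp hq
  simp only [ItemRegion, Set.mem_prod, Set.mem_Ioo] at hp hq
  obtain ⟨⟨a1, a2⟩, ⟨b1, b2⟩, c1, c2⟩ := hp
  obtain ⟨⟨a1', a2'⟩, ⟨b1', b2'⟩, c1', c2'⟩ := hq
  refine hd (a := (p1 - c₁, p2 - c₂, p3 - c₃)) ?_ ?_ <;>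
    · simp only [ItemRegion, Set.mem_prod, Set.mem_Ioo]
      exact ⟨⟨by linarith, by linarith⟩, ⟨by linarith, by linarith⟩, by linarith, by linarith⟩

end Region

section Split

variable {ι : Type*}

/-- Greedy split: maximal prefix whose `f`-sum fits in capacity `c`, plus the rest. -/
noncomputable def splitFit (f : ι → ℝ) : List ι → ℝ → List ι × List ι
  | [], _ => ([], [])
  | a :: l, c =>
    if f a ≤ c then
      ((a :: (splitFit f l (c - f a)).1), (splitFit f l (c - f a)).2)
    else ([], a :: l)

lemma splitFit_append (f : ι → ℝ) : ∀ (L : List ι) (c : ℝ),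
    (splitFit f L c).1 ++ (splitFit f L c).2 = L
  | [], _ => rfl
  | a :: l, c => by
    rw [splitFit]
    split_ifs with hc
    · simp [splitFit_append f l (c - f a)]
    · rfl

lemma splitFit_sum_le (f : ι → ℝ) : ∀ (L : List ι) (c : ℝ), 0 ≤ c →
    ((splitFit f L c).1.map f).sum ≤ c
  | [], c, h0 => by simpa [splitFit] using h0
  | a :: l, c, h0 => by
    rw [splitFit]
    split_ifs with hc
    · have := splitFit_sum_le f l (c - f a) (by linarith)
      simp only [List.map_cons, List.sum_cons]
      linarith
    · simpa using h0

lemma splitFit_next (f : ι → ℝ) : ∀ (L : List ι) (c : ℝ) (j : ι) (R : List ι),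
    (splitFit f L c).2 = j :: R → c < ((splitFit f L c).1.map f).sum + f j
  | [], c, j, R, hR => by simp [splitFit] at hR
  | a :: l, c, j, R, hR => by
    rw [splitFit] at hR ⊢
    split_ifs at hR ⊢ with hc
    · have := splitFit_next f l (c - f a) j R hR
      simp only [List.map_cons, List.sum_cons]
      linarith
    · simp only at hR
      obtain ⟨rfl, rfl⟩ := List.cons.inj hR
      simp only [List.map_nil, List.sum_nil, zero_add]
      linarith

lemma splitFit_cons_of_le (f : ι → ℝ) {c : ℝ} {a : ι} {l : List ι} (hc : f a ≤ c) :
    splitFit f (a :: l) c =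
      ((a :: (splitFit f l (c - f a)).1), (splitFit f l (c - f a)).2) := by
  rw [splitFit, if_pos hc]

end Split

set_option linter.unusedSectionVars false

section Pack

variable {ι : Type*} [DecidableEq ι] {w d h : ι → ℝ}

lemma canPack_empty {W D H : ℝ} : CanPack (∅ : Finset ι) w d h W D H :=
  ⟨0, 0, 0, by simp [IsPacking], by simp [IsPacking]⟩

lemma canPack_mono {T : Finset ι} {W D H W' D' H' : ℝ}
    (hW : W ≤ W') (hD : D ≤ D') (hH : H ≤ H')
    (hp : CanPack T w d h W D H) : CanPack T w d h W' D' H' := by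
  obtain ⟨x, y, z, hb, hd2⟩ := hp
  refine ⟨x, y, z, fun i hi => ?_, hd2⟩
  obtain ⟨u1, u2, u3, u4, u5, u6⟩ := hb i hi
  exact ⟨u1, by linarith, u3, by linarith, u5, by linarith⟩

lemma canPack_singleton {i : ι} {W D H : ℝ}
    (hW : w i ≤ W) (hD : d i ≤ D) (hH : h i ≤ H) :
    CanPack ({i} : Finset ι) w d h W D H := by
  refine ⟨0, 0, 0, fun j hj => ?_, fun j hj k hk hjk => ?_⟩
  · rw [Finset.mem_singleton] at hj
    subst hj
    simp only [Pi.zero_apply, zero_add]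
    exact ⟨le_rfl, hW, le_rfl, hD, le_rfl, hH⟩
  · rw [Finset.mem_singleton] at hj hk
    exact absurd (hj.trans hk.symm) hjk

lemma canPack_union_x {T₁ T₂ : Finset ι} {D H W₁ W₂ : ℝ}
    (hdisj : Disjoint T₁ T₂) (hW₁0 : 0 ≤ W₁) (hW₂0 : 0 ≤ W₂)
    (h₁ : CanPack T₁ w d h W₁ D H) (h₂ : CanPack T₂ w d h W₂ D H) :
    CanPack (T₁ ∪ T₂) w d h (W₁ + W₂) D H := by
  obtain ⟨x₁, y₁, z₁, hb₁, hd₁⟩ := h₁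
  obtain ⟨x₂, y₂, z₂, hb₂, hd₂⟩ := h₂
  refine ⟨fun i => if i ∈ T₁ then x₁ i else x₂ i + W₁,
          fun i => if i ∈ T₁ then y₁ i else y₂ i ,
          fun i => if i ∈ T₁ then z₁ i else z₂ i , fun i hi => ?_, fun i hi j hj hij => ?_⟩
  · rcases Finset.mem_union.1 hi with hi1 | hi2
    · obtain ⟨u1, u2, u3, u4, u5, u6⟩ := hb₁ i hi1
      simp only [if_pos hi1]
      exact ⟨u1, by linarith, u3, u4, u5, u6⟩
    · have hni : i ∉ T₁ := fun hmem => Finset.disjoint_left.1 hdisj hmem hi2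
      obtain ⟨u1, u2, u3, u4, u5, u6⟩ := hb₂ i hi2
      simp only [if_neg hni]
      exact ⟨by linarith, by linarith, u3, u4, u5, u6⟩
  · have hmem₁ : ∀ k, k ∈ T₁ → k ∉ T₂ := fun k hk => Finset.disjoint_left.1 hdisj hk
    rcases Finset.mem_union.1 hi with hi1 | hi2 <;> rcases Finset.mem_union.1 hj with hj1 | hj2
    · simp only [if_pos hi1, if_pos hj1]
      exact hd₁ i hi1 j hj1 hij
    · have hnj : j ∉ T₁ := fun hmem => hmem₁ j hmem hj2
      simp only [if_pos hi1, if_neg hnj]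
      exact region_sep_x (by linarith [(hb₁ i hi1).2.1, (hb₂ j hj2).1])
    · have hni : i ∉ T₁ := fun hmem => hmem₁ i hmem hi2
      simp only [if_pos hj1, if_neg hni]
      exact (region_sep_x (by linarith [(hb₁ j hj1).2.1, (hb₂ i hi2).1])).symm
    · have hni : i ∉ T₁ := fun hmem => hmem₁ i hmem hi2
      have hnj : j ∉ T₁ := fun hmem => hmem₁ j hmem hj2
      simp only [if_neg hni, if_neg hnj]
      have := region_shift W₁ 0 0 (hd₂ i hi2 j hj2 hij)
      simpa using this


lemma canPack_union_y {T₁ T₂ : Finset ι} {W H D₁ D₂ : ℝ}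
    (hdisj : Disjoint T₁ T₂) (hD₁0 : 0 ≤ D₁) (hD₂0 : 0 ≤ D₂)
    (h₁ : CanPack T₁ w d h W D₁ H) (h₂ : CanPack T₂ w d h W D₂ H) :
    CanPack (T₁ ∪ T₂) w d h W (D₁ + D₂) H := by
  obtain ⟨x₁, y₁, z₁, hb₁, hd₁⟩ := h₁
  obtain ⟨x₂, y₂, z₂, hb₂, hd₂⟩ := h₂
  refine ⟨fun i => if i ∈ T₁ then x₁ i else x₂ i ,
          fun i => if i ∈ T₁ then y₁ i else y₂ i + D₁,
          fun i => if i ∈ T₁ then z₁ i else z₂ i , fun i hi => ?_, fun i hi j hj hij => ?_⟩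
  · rcases Finset.mem_union.1 hi with hi1 | hi2
    · obtain ⟨u1, u2, u3, u4, u5, u6⟩ := hb₁ i hi1
      simp only [if_pos hi1]
      exact ⟨u1, u2, u3, by linarith, u5, u6⟩
    · have hni : i ∉ T₁ := fun hmem => Finset.disjoint_left.1 hdisj hmem hi2
      obtain ⟨u1, u2, u3, u4, u5, u6⟩ := hb₂ i hi2
      simp only [if_neg hni]
      exact ⟨u1, u2, by linarith, by linarith, u5, u6⟩
  · have hmem₁ : ∀ k, k ∈ T₁ → k ∉ T₂ := fun k hk => Finset.disjoint_left.1 hdisj hk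
    rcases Finset.mem_union.1 hi with hi1 | hi2 <;> rcases Finset.mem_union.1 hj with hj1 | hj2
    · simp only [if_pos hi1, if_pos hj1]
      exact hd₁ i hi1 j hj1 hij
    · have hnj : j ∉ T₁ := fun hmem => hmem₁ j hmem hj2
      simp only [if_pos hi1, if_neg hnj]
      exact region_sep_y (by linarith [(hb₁ i hi1).2.2.2.1, (hb₂ j hj2).2.2.1])
    · have hni : i ∉ T₁ := fun hmem => hmem₁ i hmem hi2
      simp only [if_pos hj1, if_neg hni]
      exact (region_sep_y (by linarith [(hb₁ j hj1).2.2.2.1, (hb₂ i hi2).2.2.1])).symm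
    · have hni : i ∉ T₁ := fun hmem => hmem₁ i hmem hi2
      have hnj : j ∉ T₁ := fun hmem => hmem₁ j hmem hj2
      simp only [if_neg hni, if_neg hnj]
      have := region_shift 0 D₁ 0 (hd₂ i hi2 j hj2 hij)
      simpa using this


lemma canPack_union_z {T₁ T₂ : Finset ι} {W D H₁ H₂ : ℝ}
    (hdisj : Disjoint T₁ T₂) (hH₁0 : 0 ≤ H₁) (hH₂0 : 0 ≤ H₂)
    (h₁ : CanPack T₁ w d h W D H₁) (h₂ : CanPack T₂ w d h W D H₂) :
    CanPack (T₁ ∪ T₂) w d h W D (H₁ + H₂) := by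
  obtain ⟨x₁, y₁, z₁, hb₁, hd₁⟩ := h₁
  obtain ⟨x₂, y₂, z₂, hb₂, hd₂⟩ := h₂
  refine ⟨fun i => if i ∈ T₁ then x₁ i else x₂ i ,
          fun i => if i ∈ T₁ then y₁ i else y₂ i ,
          fun i => if i ∈ T₁ then z₁ i else z₂ i + H₁, fun i hi => ?_, fun i hi j hj hij => ?_⟩
  · rcases Finset.mem_union.1 hi with hi1 | hi2
    · obtain ⟨u1, u2, u3, u4, u5, u6⟩ := hb₁ i hi1
      simp only [if_pos hi1]
      exact ⟨u1, u2, u3, u4, u5, by linarith⟩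
    · have hni : i ∉ T₁ := fun hmem => Finset.disjoint_left.1 hdisj hmem hi2
      obtain ⟨u1, u2, u3, u4, u5, u6⟩ := hb₂ i hi2
      simp only [if_neg hni]
      exact ⟨u1, u2, u3, u4, by linarith, by linarith⟩
  · have hmem₁ : ∀ k, k ∈ T₁ → k ∉ T₂ := fun k hk => Finset.disjoint_left.1 hdisj hk
    rcases Finset.mem_union.1 hi with hi1 | hi2 <;> rcases Finset.mem_union.1 hj with hj1 | hj2
    · simp only [if_pos hi1, if_pos hj1]
      exact hd₁ i hi1 j hj1 hij
    · have hnj : j ∉ T₁ := fun hmem => hmem₁ j hmem hj2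
      simp only [if_pos hi1, if_neg hnj]
      exact region_sep_z (by linarith [(hb₁ i hi1).2.2.2.2.2, (hb₂ j hj2).2.2.2.2.1])
    · have hni : i ∉ T₁ := fun hmem => hmem₁ i hmem hi2
      simp only [if_pos hj1, if_neg hni]
      exact (region_sep_z (by linarith [(hb₁ j hj1).2.2.2.2.2, (hb₂ i hi2).2.2.2.2.1])).symm
    · have hni : i ∉ T₁ := fun hmem => hmem₁ i hmem hi2
      have hnj : j ∉ T₁ := fun hmem => hmem₁ j hmem hj2
      simp only [if_neg hni, if_neg hnj]
      have := region_shift 0 0 H₁ (hd₂ i hi2 j hj2 hij)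
      simpa using this

end Pack

section Rows

variable {ι : Type*} [DecidableEq ι] {w d h : ι → ℝ}

lemma canPack_row_x {D H : ℝ} (hD : 0 ≤ D) (hH : 0 ≤ H) :
    ∀ (L : List ι) (W : ℝ), L.Nodup →
      (∀ i ∈ L, 0 ≤ w i ∧ d i ≤ D ∧ h i ≤ H) →
      (L.map w).sum ≤ W → CanPack L.toFinset w d h W D H := by
  intro L
  induction L with
  | nil => intro W _ _ _; simpa using (canPack_empty : CanPack (∅ : Finset ι) w d h W D H)
  | cons a l ih =>
    intro W hnd hdim hsum
    simp only [List.map_cons, List.sum_cons] at hsum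
    have hw0 : 0 ≤ w a := (hdim a (List.mem_cons_self)).1
    have hsums : (l.map w).sum ≤ W - w a := by linarith
    have hrest : CanPack l.toFinset w d h (W - w a) D H :=
      ih (W - w a) (List.Nodup.of_cons hnd)
        (fun i hi => hdim i (List.mem_cons_of_mem a hi)) hsums
    have hsum0 : 0 ≤ (l.map w).sum :=
      List.sum_nonneg (by
        intro x hx
        obtain ⟨i, hi, rfl⟩ := List.mem_map.1 hx
        exact (hdim i (List.mem_cons_of_mem a hi)).1)
    have ha : CanPack ({a} : Finset ι) w d h (w a) D H :=
      canPack_singleton le_rfl (hdim a (List.mem_cons_self)).2.1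
        (hdim a (List.mem_cons_self)).2.2
    have hdisj : Disjoint ({a} : Finset ι) l.toFinset := by
      simp only [Finset.disjoint_singleton_left, List.mem_toFinset]
      exact (List.nodup_cons.1 hnd).1
    have := canPack_union_x hdisj hw0 (by linarith) ha hrest
    rw [show w a + (W - w a) = W by ring] at this
    simpa [List.toFinset_cons] using this

lemma canPack_row_y {W H : ℝ} (hW : 0 ≤ W) (hH : 0 ≤ H) :
    ∀ (L : List ι) (D : ℝ), L.Nodup →
      (∀ i ∈ L, 0 ≤ d i ∧ w i ≤ W ∧ h i ≤ H) →
      (L.map d).sum ≤ D → CanPack L.toFinset w d h W D H := by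
  intro L
  induction L with
  | nil => intro D _ _ _; simpa using (canPack_empty : CanPack (∅ : Finset ι) w d h W D H)
  | cons a l ih =>
    intro D hnd hdim hsum
    simp only [List.map_cons, List.sum_cons] at hsum
    have hd0 : 0 ≤ d a := (hdim a (List.mem_cons_self)).1
    have hsums : (l.map d).sum ≤ D - d a := by linarith
    have hrest : CanPack l.toFinset w d h W (D - d a) H :=
      ih (D - d a) (List.Nodup.of_cons hnd)
        (fun i hi => hdim i (List.mem_cons_of_mem a hi)) hsums
    have hsum0 : 0 ≤ (l.map d).sum :=
      List.sum_nonneg (by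
        intro x hx
        obtain ⟨i, hi, rfl⟩ := List.mem_map.1 hx
        exact (hdim i (List.mem_cons_of_mem a hi)).1)
    have ha : CanPack ({a} : Finset ι) w d h W (d a) H :=
      canPack_singleton (hdim a (List.mem_cons_self)).2.1 le_rfl
        (hdim a (List.mem_cons_self)).2.2
    have hdisj : Disjoint ({a} : Finset ι) l.toFinset := by
      simp only [Finset.disjoint_singleton_left, List.mem_toFinset]
      exact (List.nodup_cons.1 hnd).1
    have := canPack_union_y hdisj hd0 (by linarith) ha hrest
    rw [show d a + (D - d a) = D by ring] at this
    simpa [List.toFinset_cons] using this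

end Rows

section NFDH

variable {ι : Type*} [DecidableEq ι] {w d h : ι → ℝ}

/-- NFDH shelf packing: a depth-sorted list of items of width ≤ 1/2 packs into a slab of
width 1 and depth `D₁ + 2 * (total base area)`, where `D₁` bounds all depths. -/
lemma canPack_nfdh {H : ℝ} (hH : 0 ≤ H) :
    ∀ (n : ℕ) (L : List ι) (D₁ : ℝ), L.length ≤ n → 0 ≤ D₁ → L.Nodup →
      List.Pairwise (fun a b => d b ≤ d a) L →
      (∀ i ∈ L, 0 < w i ∧ w i ≤ 1 / 2 ∧ 0 < d i ∧ d i ≤ D₁ ∧ h i ≤ H) →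
      CanPack L.toFinset w d h 1 (D₁ + 2 * (L.map (fun i => w i * d i)).sum) H := by
  intro n
  induction n with
  | zero =>
    intro L D₁ hlen hD₁ _ _ _
    have : L = [] := List.eq_nil_of_length_eq_zero (Nat.le_zero.1 hlen)
    subst this
    simpa using (canPack_empty : CanPack (∅ : Finset ι) w d h 1 (D₁ + 2 * 0) H)
  | succ n ih =>
    intro L D₁ hlen hD₁ hnd hsort hdim
    rcases L with _ | ⟨a, l⟩
    · simpa using (canPack_empty : CanPack (∅ : Finset ι) w d h 1 (D₁ + 2 * 0) H)
    have hwa1 : w a ≤ 1 :=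
      le_trans (hdim a (List.mem_cons_self)).2.1 (by norm_num)
    obtain ⟨P, R, hPR⟩ : ∃ P R, splitFit w (a :: l) 1 = (a :: P, R) :=
      ⟨_, _, splitFit_cons_of_le w hwa1⟩
    have happ : (a :: P) ++ R = a :: l := by
      have := splitFit_append w (a :: l) 1; rw [hPR] at this; exact this
    have hsumP : ((a :: P).map w).sum ≤ 1 := by
      have := splitFit_sum_le w (a :: l) 1 (by norm_num); rw [hPR] at this; exact this
    have hmemP : ∀ i ∈ a :: P, i ∈ a :: l := fun i hi =>
      happ ▸ List.mem_append_left R hi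
    have hmemR : ∀ i ∈ R, i ∈ a :: l := fun i hi =>
      happ ▸ List.mem_append_right (a :: P) hi
    have hnd' : ((a :: P) ++ R).Nodup := by rw [happ]; exact hnd
    obtain ⟨hndP, hndR, hdisjPR⟩ := List.nodup_append.1 hnd'
    have hsort' : List.Pairwise (fun a b => d b ≤ d a) ((a :: P) ++ R) := by
      rw [happ]; exact hsort
    obtain ⟨hsortP, hsortR, hcross⟩ := List.pairwise_append.1 hsort'
    -- pack the first shelf (a :: P) as a row along x, within depth D₁
    have hshelf : CanPack (a :: P).toFinset w d h 1 D₁ H := by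
      refine canPack_row_x hD₁ hH (a :: P) 1 hndP (fun i hi => ?_) hsumP
      obtain ⟨h1, h2, h3, h4, h5⟩ := hdim i (hmemP i hi)
      exact ⟨le_of_lt h1, h4, h5⟩
    have hareaP0 : 0 ≤ ((a :: P).map fun i => w i * d i).sum := by
      refine List.sum_nonneg ?_
      intro x hx
      obtain ⟨i, hi, rfl⟩ := List.mem_map.1 hx
      obtain ⟨h1, _, h3, _, _⟩ := hdim i (hmemP i hi)
      positivity
    rcases R with _ | ⟨j, R'⟩
    · -- no more shelves
      have hPL : a :: P = a :: l := by simpa using happ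
      rw [← hPL]
      refine canPack_mono le_rfl ?_ le_rfl hshelf
      have : 0 ≤ ((a :: P).map fun i => w i * d i).sum := hareaP0
      rw [hPL] at this
      rw [hPL]
      linarith
    · -- recurse on the rest with depth bound d j
      obtain ⟨hwj0, hwj, hdj0, hdj1, hhj⟩ := hdim j (hmemR j (List.mem_cons_self))
      have hsortRj := List.pairwise_cons.1 hsortR
      have hdimR : ∀ i ∈ j :: R', 0 < w i ∧ w i ≤ 1 / 2 ∧ 0 < d i ∧ d i ≤ d j ∧ h i ≤ H := by
        intro i hi
        obtain ⟨g1, g2, g3, g4, g5⟩ := hdim i (hmemR i hi)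
        rcases List.mem_cons.1 hi with rfl | hi'
        · exact ⟨g1, g2, g3, le_rfl, g5⟩
        · exact ⟨g1, g2, g3, hsortRj.1 i hi', g5⟩
      have hlenR : (j :: R').length ≤ n := by
        have := congrArg List.length happ
        simp only [List.length_append, List.length_cons] at this hlen ⊢
        omega
      have hrest := ih (j :: R') (d j) hlenR (le_of_lt hdj0) hndR hsortR hdimR
      -- the key shelf-fill inequality : d j ≤ 2 * area of first shelf
      have hnext : (1 : ℝ) < ((a :: P).map w).sum + w j := by
        have := splitFit_next w (a :: l) 1 j R' (by rw [hPR])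
        rw [hPR] at this; exact this
      have hwsum : (1 : ℝ) / 2 ≤ ((a :: P).map w).sum := by linarith
      have hdle : ∀ i ∈ a :: P, d j ≤ d i := fun i hi =>
        hcross i hi j (List.mem_cons_self)
      have hkey : d j ≤ 2 * ((a :: P).map fun i => w i * d i).sum := by
        have h1 : (((a :: P).map fun i => w i * d j).sum : ℝ) ≤
            ((a :: P).map fun i => w i * d i).sum := by
          refine List.sum_le_sum ?_
          intro i hi
          have := hdle i hi
          have hw0 : 0 ≤ w i := le_of_lt (hdim i (hmemP i hi)).1
          exact mul_le_mul_of_nonneg_left this hw0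
        have h2 : (((a :: P).map fun i => w i * d j).sum : ℝ) =
            ((a :: P).map w).sum * d j := List.sum_map_mul_right _ _ _
        nlinarith [hwsum, le_of_lt hdj0]
      -- combine along y
      have hdisjF : Disjoint (a :: P).toFinset (j :: R').toFinset := by
        rw [Finset.disjoint_left]
        intro i hi hi'
        exact hdisjPR i (List.mem_toFinset.1 hi) i (List.mem_toFinset.1 hi') rfl
      have hareaR0 : 0 ≤ ((j :: R').map fun i => w i * d i).sum := by
        refine List.sum_nonneg ?_
        intro x hx
        obtain ⟨i, hi, rfl⟩ := List.mem_map.1 hx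
        obtain ⟨g1, _, g3, _, _⟩ := hdimR i hi
        positivity
      have hcomb := canPack_union_y hdisjF hD₁
        (by linarith) hshelf hrest
      have hunion : (a :: P).toFinset ∪ (j :: R').toFinset = (a :: l).toFinset := by
        rw [← happ, List.toFinset_append]
      rw [hunion] at hcomb
      refine canPack_mono le_rfl ?_ le_rfl hcomb
      have hsplit : ((a :: l).map fun i => w i * d i).sum =
          ((a :: P).map fun i => w i * d i).sum + ((j :: R').map fun i => w i * d i).sum := by
        rw [← happ, List.map_append, List.sum_append]
      rw [hsplit]
      linarith

end NFDH

section Outer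

variable {ι : Type*} [DecidableEq ι] {w d h : ι → ℝ}

/-- Layered packing along `z`: a height-sorted list is split greedily into layers by an
abstract weight `f` with capacity `c`; each closed layer has base area at least `κ`. -/
lemma canPack_outer (f : ι → ℝ) (Q : ι → Prop) (c κ : ℝ) (hκ : 0 < κ) (hc : 0 ≤ c)
    (hpack : ∀ (S : List ι) (Hb : ℝ), 0 < Hb → S.Nodup → (∀ i ∈ S, Q i) →
        (∀ i ∈ S, h i ≤ Hb) → (S.map f).sum ≤ c → CanPack S.toFinset w d h 1 1 Hb)
    (harea : ∀ (S : List ι) (j : ι), (∀ i ∈ S, Q i) → Q j →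
        (S.map f).sum ≤ c → c < (S.map f).sum + f j →
        κ ≤ (S.map fun i => w i * d i).sum) :
    ∀ (n : ℕ) (L : List ι) (Hb : ℝ), L.length ≤ n → 0 ≤ Hb → L.Nodup →
      List.Pairwise (fun a b => h b ≤ h a) L →
      (∀ i ∈ L, Q i ∧ 0 < h i ∧ h i ≤ Hb ∧ f i ≤ c ∧ 0 ≤ w i * d i) →
      CanPack L.toFinset w d h 1 1 (Hb + κ⁻¹ * (L.map fun i => w i * d i * h i).sum) := by
  intro n
  induction n with
  | zero =>
    intro L Hb hlen hHb _ _ _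
    have : L = [] := List.eq_nil_of_length_eq_zero (Nat.le_zero.1 hlen)
    subst this
    simpa using (canPack_empty : CanPack (∅ : Finset ι) w d h 1 1 (Hb + κ⁻¹ * 0))
  | succ n ih =>
    intro L Hb hlen hHb hnd hsort hdim
    rcases L with _ | ⟨a, l⟩
    · simpa using (canPack_empty : CanPack (∅ : Finset ι) w d h 1 1 (Hb + κ⁻¹ * 0))
    obtain ⟨hQa, hha0, hhaHb, hfa, _⟩ := hdim a (List.mem_cons_self)
    obtain ⟨P, R, hPR⟩ : ∃ P R, splitFit f (a :: l) c = (a :: P, R) :=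
      ⟨_, _, splitFit_cons_of_le f hfa⟩
    have happ : (a :: P) ++ R = a :: l := by
      have := splitFit_append f (a :: l) c; rw [hPR] at this; exact this
    have hsumP : ((a :: P).map f).sum ≤ c := by
      have := splitFit_sum_le f (a :: l) c hc; rw [hPR] at this; exact this
    have hmemP : ∀ i ∈ a :: P, i ∈ a :: l := fun i hi =>
      happ ▸ List.mem_append_left R hi
    have hmemR : ∀ i ∈ R, i ∈ a :: l := fun i hi =>
      happ ▸ List.mem_append_right (a :: P) hi
    have hnd' : ((a :: P) ++ R).Nodup := by rw [happ]; exact hnd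
    obtain ⟨hndP, hndR, hdisjPR⟩ := List.nodup_append.1 hnd'
    have hsort' : List.Pairwise (fun a b => h b ≤ h a) ((a :: P) ++ R) := by
      rw [happ]; exact hsort
    obtain ⟨hsortP, hsortR, hcross⟩ := List.pairwise_append.1 hsort'
    have hhP : ∀ i ∈ a :: P, h i ≤ h a := by
      intro i hi
      rcases List.mem_cons.1 hi with rfl | hi'
      · exact le_rfl
      · exact (List.pairwise_cons.1 hsortP).1 i hi'
    -- pack the first layer
    have hlayer : CanPack (a :: P).toFinset w d h 1 1 (h a) :=
      hpack (a :: P) (h a) hha0 hndP (fun i hi => (hdim i (hmemP i hi)).1) hhP hsumP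
    have hvolP0 : 0 ≤ ((a :: P).map fun i => w i * d i * h i).sum := by
      refine List.sum_nonneg ?_
      intro x hx
      obtain ⟨i, hi, rfl⟩ := List.mem_map.1 hx
      obtain ⟨_, g2, _, _, g5⟩ := hdim i (hmemP i hi)
      exact mul_nonneg g5 (le_of_lt g2)
    rcases R with _ | ⟨j, R'⟩
    · have hPL : a :: P = a :: l := by simpa using happ
      rw [← hPL]
      refine canPack_mono le_rfl le_rfl ?_ hlayer
      have := hvolP0
      rw [hPL] at this ⊢
      nlinarith [inv_nonneg.2 (le_of_lt hκ)]
    · -- recurse on the remaining layers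
      obtain ⟨hQj, hhj0, _, hfj, _⟩ := hdim j (hmemR j (List.mem_cons_self))
      have hdimR : ∀ i ∈ j :: R', Q i ∧ 0 < h i ∧ h i ≤ h j ∧ f i ≤ c ∧ 0 ≤ w i * d i := by
        intro i hi
        obtain ⟨g1, g2, _, g4, g5⟩ := hdim i (hmemR i hi)
        rcases List.mem_cons.1 hi with rfl | hi'
        · exact ⟨g1, g2, le_rfl, g4, g5⟩
        · exact ⟨g1, g2, (List.pairwise_cons.1 hsortR).1 i hi', g4, g5⟩
      have hlenR : (j :: R').length ≤ n := by
        have := congrArg List.length happ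
        simp only [List.length_append, List.length_cons] at this hlen ⊢
        omega
      have hrest := ih (j :: R') (h j) hlenR (le_of_lt hhj0) hndR hsortR hdimR
      -- closed layer has base area at least κ
      have hnext : c < ((a :: P).map f).sum + f j := by
        have := splitFit_next f (a :: l) c j R' (by rw [hPR])
        rw [hPR] at this; exact this
      have hareaP : κ ≤ ((a :: P).map fun i => w i * d i).sum :=
        harea (a :: P) j (fun i hi => (hdim i (hmemP i hi)).1) hQj hsumP hnext
      -- hence h j ≤ κ⁻¹ * (volume of first layer)
      have hhjP : ∀ i ∈ a :: P, h j ≤ h i := fun i hi =>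
        hcross i hi j (List.mem_cons_self)
      have hvolP : κ * h j ≤ ((a :: P).map fun i => w i * d i * h i).sum := by
        have h1 : (((a :: P).map fun i => w i * d i * h j).sum : ℝ) ≤
            ((a :: P).map fun i => w i * d i * h i).sum := by
          refine List.sum_le_sum ?_
          intro i hi
          exact mul_le_mul_of_nonneg_left (hhjP i hi) (hdim i (hmemP i hi)).2.2.2.2
        have h2 : (((a :: P).map fun i => w i * d i * h j).sum : ℝ) =
            ((a :: P).map fun i => w i * d i).sum * h j :=
          List.sum_map_mul_right _ _ _
        nlinarith [le_of_lt hhj0]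
      have hhjle : h j ≤ κ⁻¹ * ((a :: P).map fun i => w i * d i * h i).sum := by
        have := mul_le_mul_of_nonneg_left hvolP (inv_nonneg.2 (le_of_lt hκ))
        rwa [inv_mul_cancel_left₀ (ne_of_gt hκ)] at this
      have hvolR0 : 0 ≤ ((j :: R').map fun i => w i * d i * h i).sum := by
        refine List.sum_nonneg ?_
        intro x hx
        obtain ⟨i, hi, rfl⟩ := List.mem_map.1 hx
        obtain ⟨_, g2, _, _, g5⟩ := hdimR i hi
        exact mul_nonneg g5 (le_of_lt g2)
      have hdisjF : Disjoint (a :: P).toFinset (j :: R').toFinset := by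
        rw [Finset.disjoint_left]
        intro i hi hi'
        exact hdisjPR i (List.mem_toFinset.1 hi) i (List.mem_toFinset.1 hi') rfl
      have hcomb := canPack_union_z hdisjF (le_of_lt hha0)
        (by nlinarith [inv_nonneg.2 (le_of_lt hκ)]) hlayer hrest
      have hunion : (a :: P).toFinset ∪ (j :: R').toFinset = (a :: l).toFinset := by
        rw [← happ, List.toFinset_append]
      rw [hunion] at hcomb
      refine canPack_mono le_rfl le_rfl ?_ hcomb
      have hsplit : ((a :: l).map fun i => w i * d i * h i).sum =
          ((a :: P).map fun i => w i * d i * h i).sum +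
          ((j :: R').map fun i => w i * d i * h i).sum := by
        rw [← happ, List.map_append, List.sum_append]
      rw [hsplit]
      have : κ⁻¹ * (((a :: P).map fun i => w i * d i * h i).sum +
          ((j :: R').map fun i => w i * d i * h i).sum) =
          κ⁻¹ * ((a :: P).map fun i => w i * d i * h i).sum +
          κ⁻¹ * ((j :: R').map fun i => w i * d i * h i).sum := by ring
      rw [this]
      linarith

end Outer

section Sorting

variable {ι : Type*}

lemma exists_sorted_perm (r : ι → ℝ) (S : List ι) :
    ∃ S' : List ι, S'.Perm S ∧ List.Pairwise (fun a b => r b ≤ r a) S' := by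
  refine ⟨S.mergeSort (fun a b => decide (r b ≤ r a)), List.mergeSort_perm _ _, ?_⟩
  have hs := List.pairwise_mergeSort (le := fun a b => decide (r b ≤ r a))
    (fun a b c h1 h2 => by
      simp only [decide_eq_true_eq] at *
      linarith)
    (fun a b => by
      simp only [Bool.or_eq_true, decide_eq_true_eq]
      exact le_total (r b) (r a)) S
  exact hs.imp (fun hab => by simpa using hab)

lemma exists_sorted_list [DecidableEq ι] (C : Finset ι) (r : ι → ℝ) :
    ∃ L : List ι, L.toFinset = C ∧ L.Nodup ∧ List.Pairwise (fun a b => r b ≤ r a) L ∧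
      ∀ g : ι → ℝ, (L.map g).sum = ∑ i ∈ C, g i := by
  obtain ⟨L, hperm, hsort⟩ := exists_sorted_perm r C.toList
  refine ⟨L, ?_, hperm.nodup_iff.2 C.nodup_toList, hsort, fun g => ?_⟩
  · ext i
    simp only [List.mem_toFinset, hperm.mem_iff, Finset.mem_toList]
  · rw [← Finset.sum_map_toList]
    exact (hperm.map g).sum_eq

end Sorting

section Classes

variable {ι : Type*} [DecidableEq ι] {w d h : ι → ℝ} {T : Finset ι} {μ : ℝ}

/-- Generic per-class packing, given suitable `hpack`/`harea` for the class. -/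
lemma pack_class (hμ : 0 < μ) (Q : ι → Prop) (f : ι → ℝ) (c : ℝ) (hc : 0 ≤ c)
    (hdims : ∀ i ∈ T, 0 < w i ∧ w i ≤ 1 ∧ 0 < d i ∧ d i ≤ 1 ∧ 0 < h i ∧ h i ≤ μ)
    (hQT : ∀ i, Q i → i ∈ T) (hfc : ∀ i, Q i → f i ≤ c)
    (hpack : ∀ (S : List ι) (Hb : ℝ), 0 < Hb → S.Nodup → (∀ i ∈ S, Q i) →
        (∀ i ∈ S, h i ≤ Hb) → (S.map f).sum ≤ c → CanPack S.toFinset w d h 1 1 Hb)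
    (harea : ∀ (S : List ι) (j : ι), (∀ i ∈ S, Q i) → Q j →
        (S.map f).sum ≤ c → c < (S.map f).sum + f j →
        (1:ℝ)/8 ≤ (S.map fun i => w i * d i).sum)
    (C : Finset ι) (hC : ∀ i ∈ C, Q i) :
    CanPack C w d h 1 1 (μ + 8 * ∑ i ∈ C, w i * d i * h i) := by
  obtain ⟨L, hLC, hnd, hsort, hsum⟩ := exists_sorted_list C h
  have hmem : ∀ i ∈ L, Q i := fun i hi => hC i (hLC ▸ List.mem_toFinset.2 hi)
  have hout := canPack_outer (w := w) (d := d) (h := h) f Q c (1/8) (by norm_num) hc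
    hpack harea L.length L μ le_rfl hμ.le hnd hsort ?_
  · rw [hLC, hsum (fun i => w i * d i * h i)] at hout
    have h8 : ((1:ℝ)/8)⁻¹ = 8 := by norm_num
    rw [h8] at hout
    exact hout
  · intro i hi
    obtain ⟨h1, h2, h3, h4, h5, h6⟩ := hdims i (hQT i (hmem i hi))
    exact ⟨hmem i hi, h5, h6, hfc i (hmem i hi),
      mul_nonneg (le_of_lt h1) (le_of_lt h3)⟩

end Classes

/-- If `0 < μ ≤ ε` and `T` is a finite set of 3D items with
all dimensions in `(0,1]`, height at most `μ`, and total volume at most `ε`,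
then `T` packs into the strip `[0,1] × [0,1] × [0, 12ε]`. -/
theorem stmt16 {ι : Type*} (T : Finset ι) (w d h : ι → ℝ) (μ ε : ℝ)
    (hμpos : 0 < μ) (hμε : μ ≤ ε)
    (hdims : ∀ i ∈ T, 0 < w i ∧ w i ≤ 1 ∧ 0 < d i ∧ d i ≤ 1 ∧
      0 < h i ∧ h i ≤ μ)
    (hvol : ∑ i ∈ T, w i * d i * h i ≤ ε) :
    CanPack T w d h 1 1 (12 * ε) := by
  
  classical
  set C1 : Finset ι := T.filter (fun i => 1/4 < d i ∧ w i ≤ 1/2) with hC1def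
  set C2 : Finset ι := T.filter (fun i => 1/4 < d i ∧ ¬ w i ≤ 1/2) with hC2def
  set C3 : Finset ι := T.filter (fun i => ¬ 1/4 < d i ∧ w i ≤ 1/2) with hC3def
  set C4 : Finset ι := T.filter (fun i => ¬ 1/4 < d i ∧ ¬ w i ≤ 1/2) with hC4def
  -- Class 1 : deep, narrow items — rows along x.
  have hP1 : CanPack C1 w d h 1 1 (μ + 8 * ∑ i ∈ C1, w i * d i * h i) := by
    refine pack_class hμpos (fun i => i ∈ T ∧ 1/4 < d i ∧ w i ≤ 1/2) w 1 (by norm_num)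
      hdims (fun i hi => hi.1) (fun i hi => (hdims i hi.1).2.1) ?_ ?_ C1 ?_
    · intro S Hb hHb hnds hQ hhS hsum
      exact canPack_row_x (by norm_num) hHb.le S 1 hnds
        (fun i hi => ⟨(hdims i (hQ i hi).1).1.le, (hdims i (hQ i hi).1).2.2.2.1, hhS i hi⟩)
        hsum
    · intro S j hQS hQj hsum hlt
      have hw2 : w j ≤ 1/2 := hQj.2.2
      have h1 : ((S.map fun i => w i * (1/4)).sum : ℝ) ≤ (S.map fun i => w i * d i).sum :=
        List.sum_le_sum fun i hi =>
          mul_le_mul_of_nonneg_left (le_of_lt (hQS i hi).2.1) (hdims i (hQS i hi).1).1.le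
      have h2 : ((S.map fun i => w i * (1/4)).sum : ℝ) = (S.map w).sum * (1/4) :=
        List.sum_map_mul_right _ _ _
      linarith
    · intro i hi
      rw [hC1def, Finset.mem_filter] at hi
      exact ⟨hi.1, hi.2.1, hi.2.2⟩
  -- Class 2 : deep, wide items — rows along x (one item per row).
  have hP2 : CanPack C2 w d h 1 1 (μ + 8 * ∑ i ∈ C2, w i * d i * h i) := by
    refine pack_class hμpos (fun i => i ∈ T ∧ 1/4 < d i ∧ ¬ w i ≤ 1/2) w 1 (by norm_num)
      hdims (fun i hi => hi.1) (fun i hi => (hdims i hi.1).2.1) ?_ ?_ C2 ?_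
    · intro S Hb hHb hnds hQ hhS hsum
      exact canPack_row_x (by norm_num) hHb.le S 1 hnds
        (fun i hi => ⟨(hdims i (hQ i hi).1).1.le, (hdims i (hQ i hi).1).2.2.2.1, hhS i hi⟩)
        hsum
    · intro S j hQS hQj hsum hlt
      rcases S with _ | ⟨i0, S0⟩
      · exfalso
        simp only [List.map_nil, List.sum_nil, zero_add] at hlt
        exact absurd ((hdims j hQj.1).2.1) (not_le.2 hlt)
      · obtain ⟨hi0T, hd0, hw0⟩ := hQS i0 (List.mem_cons_self)
        have hw0' : 1/2 < w i0 := not_le.1 hw0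
        have hrest : (0:ℝ) ≤ (S0.map fun i => w i * d i).sum := by
          refine List.sum_nonneg ?_
          intro x hx
          obtain ⟨i, hi, rfl⟩ := List.mem_map.1 hx
          obtain ⟨g1, _, g3, _⟩ := hdims i (hQS i (List.mem_cons_of_mem i0 hi)).1
          positivity
        simp only [List.map_cons, List.sum_cons]
        nlinarith
    · intro i hi
      rw [hC2def, Finset.mem_filter] at hi
      exact ⟨hi.1, hi.2.1, hi.2.2⟩
  -- Class 3 : shallow, narrow items — 2D NFDH inside each layer.
  have hP3 : CanPack C3 w d h 1 1 (μ + 8 * ∑ i ∈ C3, w i * d i * h i) := by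
    refine pack_class hμpos (fun i => i ∈ T ∧ ¬ 1/4 < d i ∧ w i ≤ 1/2)
      (fun i => w i * d i) (1/4) (by norm_num)
      hdims (fun i hi => hi.1) ?_ ?_ ?_ C3 ?_
    · intro i hi
      have hd4 : d i ≤ 1/4 := not_lt.1 hi.2.1
      have := hdims i hi.1
      nlinarith [this.1, this.2.2.1]
    · intro S Hb hHb hnds hQ hhS hsum
      obtain ⟨S', hperm, hsort'⟩ := exists_sorted_perm d S
      have hts : S'.toFinset = S.toFinset := by
        ext i
        simp only [List.mem_toFinset, hperm.mem_iff]
      have hsum' : ((S'.map fun i => w i * d i).sum : ℝ) = (S.map fun i => w i * d i).sum :=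
        (hperm.map _).sum_eq
      have key := canPack_nfdh (w := w) (d := d) (h := h) hHb.le S'.length S' (1/4) le_rfl
        (by norm_num) (hperm.nodup_iff.2 hnds) hsort' ?_
      · rw [hts] at key
        refine canPack_mono le_rfl ?_ le_rfl key
        rw [hsum']
        linarith
      · intro i hi
        have hiS : i ∈ S := hperm.mem_iff.1 hi
        obtain ⟨g1, _, g3, _, _, _⟩ := hdims i (hQ i hiS).1
        exact ⟨g1, (hQ i hiS).2.2, g3, not_lt.1 (hQ i hiS).2.1, hhS i hiS⟩
    · intro S j hQS hQj hsum hlt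
      have hfj : w j * d j ≤ 1/8 := by
        have := hdims j hQj.1
        have hd4 : d j ≤ 1/4 := not_lt.1 hQj.2.1
        nlinarith [this.1, hQj.2.2]
      linarith
    · intro i hi
      rw [hC3def, Finset.mem_filter] at hi
      exact ⟨hi.1, hi.2.1, hi.2.2⟩
  -- Class 4 : shallow, wide items — rows along y.
  have hP4 : CanPack C4 w d h 1 1 (μ + 8 * ∑ i ∈ C4, w i * d i * h i) := by
    refine pack_class hμpos (fun i => i ∈ T ∧ ¬ 1/4 < d i ∧ ¬ w i ≤ 1/2) d 1 (by norm_num)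
      hdims (fun i hi => hi.1) (fun i hi => (hdims i hi.1).2.2.2.1) ?_ ?_ C4 ?_
    · intro S Hb hHb hnds hQ hhS hsum
      exact canPack_row_y (by norm_num) hHb.le S 1 hnds
        (fun i hi => ⟨(hdims i (hQ i hi).1).2.2.1.le, (hdims i (hQ i hi).1).2.1, hhS i hi⟩)
        hsum
    · intro S j hQS hQj hsum hlt
      have hdj : d j ≤ 1/4 := not_lt.1 hQj.2.1
      have h1 : ((S.map fun i => (1/2) * d i).sum : ℝ) ≤ (S.map fun i => w i * d i).sum := by
        refine List.sum_le_sum ?_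
        intro i hi
        have hw : 1/2 ≤ w i := (not_le.1 (hQS i hi).2.2).le
        have hd0 : 0 ≤ d i := (hdims i (hQS i hi).1).2.2.1.le
        exact mul_le_mul_of_nonneg_right hw hd0
      have h2 : ((S.map fun i => (1/2) * d i).sum : ℝ) = (1/2) * (S.map d).sum :=
        List.sum_map_mul_left _ _ _
      linarith
    · intro i hi
      rw [hC4def, Finset.mem_filter] at hi
      exact ⟨hi.1, hi.2.1, hi.2.2⟩
  -- Combine the four classes along z.
  have hvnn : ∀ C : Finset ι, C ⊆ T → (0:ℝ) ≤ ∑ i ∈ C, w i * d i * h i := by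
    intro C hsub
    refine Finset.sum_nonneg ?_
    intro i hi
    obtain ⟨g1, _, g3, _, g5, _⟩ := hdims i (hsub hi)
    positivity
  have hsub1 : C1 ⊆ T := Finset.filter_subset _ _
  have hsub2 : C2 ⊆ T := Finset.filter_subset _ _
  have hsub3 : C3 ⊆ T := Finset.filter_subset _ _
  have hsub4 : C4 ⊆ T := Finset.filter_subset _ _
  have hd12 : Disjoint C1 C2 := by
    rw [Finset.disjoint_left]
    intro i hi hi'
    rw [hC1def, Finset.mem_filter] at hi
    rw [hC2def, Finset.mem_filter] at hi'
    tauto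
  have hd13 : Disjoint C1 C3 := by
    rw [Finset.disjoint_left]
    intro i hi hi'
    rw [hC1def, Finset.mem_filter] at hi
    rw [hC3def, Finset.mem_filter] at hi'
    tauto
  have hd23 : Disjoint C2 C3 := by
    rw [Finset.disjoint_left]
    intro i hi hi'
    rw [hC2def, Finset.mem_filter] at hi
    rw [hC3def, Finset.mem_filter] at hi'
    tauto
  have hd14 : Disjoint C1 C4 := by
    rw [Finset.disjoint_left]
    intro i hi hi'
    rw [hC1def, Finset.mem_filter] at hi
    rw [hC4def, Finset.mem_filter] at hi'
    tauto
  have hd24 : Disjoint C2 C4 := by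
    rw [Finset.disjoint_left]
    intro i hi hi'
    rw [hC2def, Finset.mem_filter] at hi
    rw [hC4def, Finset.mem_filter] at hi'
    tauto
  have hd34 : Disjoint C3 C4 := by
    rw [Finset.disjoint_left]
    intro i hi hi'
    rw [hC3def, Finset.mem_filter] at hi
    rw [hC4def, Finset.mem_filter] at hi'
    tauto
  have hnn1 : (0:ℝ) ≤ μ + 8 * ∑ i ∈ C1, w i * d i * h i := by
    have := hvnn C1 hsub1; linarith
  have hnn2 : (0:ℝ) ≤ μ + 8 * ∑ i ∈ C2, w i * d i * h i := by
    have := hvnn C2 hsub2; linarith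
  have hnn3 : (0:ℝ) ≤ μ + 8 * ∑ i ∈ C3, w i * d i * h i := by
    have := hvnn C3 hsub3; linarith
  have hnn4 : (0:ℝ) ≤ μ + 8 * ∑ i ∈ C4, w i * d i * h i := by
    have := hvnn C4 hsub4; linarith
  have hu12 := canPack_union_z hd12 hnn1 hnn2 hP1 hP2
  have hu123 := canPack_union_z (Finset.disjoint_union_left.2 ⟨hd13, hd23⟩)
    (by linarith) hnn3 hu12 hP3
  have hu := canPack_union_z
    (Finset.disjoint_union_left.2 ⟨Finset.disjoint_union_left.2 ⟨hd14, hd24⟩, hd34⟩)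
    (by linarith) hnn4 hu123 hP4
  have hTeq : ((C1 ∪ C2) ∪ C3) ∪ C4 = T := by
    ext i
    rw [hC1def, hC2def, hC3def, hC4def]
    simp only [Finset.mem_union, Finset.mem_filter]
    tauto
  rw [hTeq] at hu
  have hsumT : ∑ i ∈ T, w i * d i * h i =
      ∑ i ∈ C1, w i * d i * h i + ∑ i ∈ C2, w i * d i * h i +
      ∑ i ∈ C3, w i * d i * h i + ∑ i ∈ C4, w i * d i * h i := by
    rw [← hTeq, Finset.sum_union (Finset.disjoint_union_left.2
        ⟨Finset.disjoint_union_left.2 ⟨hd14, hd24⟩, hd34⟩),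
      Finset.sum_union (Finset.disjoint_union_left.2 ⟨hd13, hd23⟩),
      Finset.sum_union hd12]
  refine canPack_mono le_rfl le_rfl ?_ hu
  linarith
end

section
/- Let J be a set of n ≥ 1 3D items with all dimensions in (0,1] that can be packed into the unit cube [0,1]^3, and let μ ∈ (0,1] be such that μ·n is an even positive integer (so μ^2/2 is an integer multiple of μ/n). Call an item large if its width, depth and height all exceed μ. Let J' be the instance obtained from J by rounding the height of every non-large item up to the next integer multiple of μ/n and the height of every large item up to the next integer multiple of μ^2/2. Then J' can be packed into the box [0,1]×[0,1]×[0, 1+2μ] such that every item is placed at a z-coordinate that is an integer multiple of μ/n and every large item is placed at a z-coordinate that is an integer multiple of μ^2/2. -/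

lemma measure_lt {ι : Type*} (J : Finset ι) (z : ι → ℝ) {i j : ι} (hj : j ∈ J)
    (h1 : z j < z i) :
    (J.filter fun t => z t < z j).card < (J.filter fun t => z t < z i).card := by
  apply Finset.card_lt_card
  constructor
  · intro k hk
    simp only [Finset.mem_filter] at hk ⊢
    exact ⟨hk.1, hk.2.trans h1⟩
  · intro hsub
    have : j ∈ J.filter fun t => z t < z j :=
      hsub (by simp only [Finset.mem_filter]; exact ⟨hj, h1⟩)
    simp [Finset.mem_filter] at this

noncomputable def zp {ι : Type*} (J : Finset ι) (z h h' γ : ι → ℝ) (i : ι) : ℝ :=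
  (⌈((insert (0:ℝ) (((J.filter (fun j => z j + h j ≤ z i ∧ z j < z i)).attach).image
      (fun j => zp J z h h' γ j.1 + h' j.1))).max' (Finset.insert_nonempty _ _)) / γ i⌉₊ : ℝ)
    * γ i
termination_by (J.filter fun k => z k < z i).card
decreasing_by all_goals
  · have hj := j.2
    simp only [Finset.mem_filter] at hj
    exact measure_lt J z hj.1 hj.2.2

noncomputable def Bv {ι : Type*} (J : Finset ι) (z h h' γ : ι → ℝ) (i : ι) : ℝ :=
  ((insert (0:ℝ) (((J.filter (fun j => z j + h j ≤ z i ∧ z j < z i)).attach).image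
      (fun j => zp J z h h' γ j.1 + h' j.1))).max' (Finset.insert_nonempty _ _))

section
variable {ι : Type*} (J : Finset ι) (z h h' γ : ι → ℝ) (i : ι)

lemma Bv_def : Bv J z h h' γ i =
    ((insert (0:ℝ) (((J.filter (fun j => z j + h j ≤ z i ∧ z j < z i)).attach).image
      (fun j => zp J z h h' γ j.1 + h' j.1))).max' (Finset.insert_nonempty _ _)) := rfl

lemma zp_eq : zp J z h h' γ i = (⌈Bv J z h h' γ i / γ i⌉₊ : ℝ) * γ i := by
  rw [zp]; rfl

lemma Bv_nonneg : 0 ≤ Bv J z h h' γ i :=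
  Finset.le_max' _ _ (Finset.mem_insert_self _ _)

lemma Bv_ge {j : ι} (hj : j ∈ J.filter (fun j => z j + h j ≤ z i ∧ z j < z i)) :
    zp J z h h' γ j + h' j ≤ Bv J z h h' γ i := by
  apply Finset.le_max'
  apply Finset.mem_insert_of_mem
  exact Finset.mem_image.mpr ⟨⟨j, hj⟩, Finset.mem_attach _ _, rfl⟩

lemma Bv_le {c : ℝ} (h0 : 0 ≤ c)
    (hall : ∀ j ∈ J.filter (fun j => z j + h j ≤ z i ∧ z j < z i),
      zp J z h h' γ j + h' j ≤ c) :
    Bv J z h h' γ i ≤ c := by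
  apply Finset.max'_le
  intro b hb
  rcases Finset.mem_insert.mp hb with rfl | hb
  · exact h0
  · obtain ⟨j, -, rfl⟩ := Finset.mem_image.mp hb
    exact hall j.1 j.2

lemma zp_ge_Bv (hγ : 0 < γ i) : Bv J z h h' γ i ≤ zp J z h h' γ i := by
  rw [zp_eq]
  calc Bv J z h h' γ i = (Bv J z h h' γ i / γ i) * γ i := by
        rw [div_mul_cancel₀ _ hγ.ne']
    _ ≤ _ := mul_le_mul_of_nonneg_right (Nat.le_ceil _) hγ.le

lemma zp_le_Bv_add (hγ : 0 < γ i) : zp J z h h' γ i ≤ Bv J z h h' γ i + γ i := by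
  rw [zp_eq]
  have hB := Bv_nonneg J z h h' γ i
  have := Nat.ceil_lt_add_one (a := Bv J z h h' γ i / γ i) (div_nonneg hB hγ.le)
  calc (⌈Bv J z h h' γ i / γ i⌉₊ : ℝ) * γ i ≤ (Bv J z h h' γ i / γ i + 1) * γ i :=
        mul_le_mul_of_nonneg_right this.le hγ.le
    _ = Bv J z h h' γ i + γ i := by field_simp

lemma zp_nonneg (hγ : 0 < γ i) : 0 ≤ zp J z h h' γ i :=
  le_trans (Bv_nonneg J z h h' γ i) (zp_ge_Bv J z h h' γ i hγ)

lemma Bv_mul {g : ℝ}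
    (hall : ∀ j ∈ J.filter (fun j => z j + h j ≤ z i ∧ z j < z i),
      ∃ a : ℕ, zp J z h h' γ j + h' j = a * g) :
    ∃ a : ℕ, Bv J z h h' γ i = a * g := by
  have hmm := Finset.max'_mem _ (Finset.insert_nonempty (0:ℝ)
    (((J.filter (fun j => z j + h j ≤ z i ∧ z j < z i)).attach).image
      (fun j => zp J z h h' γ j.1 + h' j.1)))
  rw [← Bv_def] at hmm
  rcases Finset.mem_insert.mp hmm with h0 | hmem
  · exact ⟨0, by simp [h0]⟩
  · obtain ⟨j, -, hj⟩ := Finset.mem_image.mp hmem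
    obtain ⟨a, ha⟩ := hall j.1 j.2
    exact ⟨a, by rw [← hj, ha]⟩

lemma zp_eq_Bv {g : ℝ} (hg : 0 < g) (hγi : γ i = g) {a : ℕ}
    (ha : Bv J z h h' γ i = a * g) : zp J z h h' γ i = Bv J z h h' γ i := by
  rw [zp_eq, hγi, ha]
  rw [mul_div_cancel_right₀ _ hg.ne', Nat.ceil_natCast]

end



lemma ioo_sep {a b c d : ℝ} (hab : a < b) (hcd : c < d)
    (h : Disjoint (Set.Ioo a b) (Set.Ioo c d)) : b ≤ c ∨ d ≤ a := by
  by_contra hc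
  push_neg at hc
  obtain ⟨h1, h2⟩ := hc
  have h5 : max a c < min b d := max_lt (lt_min hab h2) (lt_min h1 hcd)
  set t := (max a c + min b d) / 2 with ht
  have ht1 : max a c < t := by rw [ht]; linarith
  have ht2 : t < min b d := by rw [ht]; linarith
  exact Set.disjoint_left.mp h
    ⟨lt_of_le_of_lt (le_max_left _ _) ht1, lt_of_lt_of_le ht2 (min_le_left _ _)⟩
    ⟨lt_of_le_of_lt (le_max_right _ _) ht1, lt_of_lt_of_le ht2 (min_le_right _ _)⟩

lemma region_disj_of {w1 d1 h1 x1 y1 z1 w2 d2 h2 x2 y2 z2 : ℝ}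
    (h : Disjoint (Set.Ioo x1 (x1 + w1)) (Set.Ioo x2 (x2 + w2)) ∨
      Disjoint (Set.Ioo y1 (y1 + d1)) (Set.Ioo y2 (y2 + d2)) ∨
      Disjoint (Set.Ioo z1 (z1 + h1)) (Set.Ioo z2 (z2 + h2))) :
    Disjoint (ItemRegion w1 d1 h1 x1 y1 z1) (ItemRegion w2 d2 h2 x2 y2 z2) := by
  rw [Set.disjoint_left]
  rintro ⟨a, b, c⟩ hm hm'
  simp only [ItemRegion, Set.mem_prod] at hm hm'
  rcases h with hd | hd | hd
  · exact Set.disjoint_left.mp hd hm.1 hm'.1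
  · exact Set.disjoint_left.mp hd hm.2.1 hm'.2.1
  · exact Set.disjoint_left.mp hd hm.2.2 hm'.2.2

lemma z_sep_of {w1 d1 h1 x1 y1 z1 w2 d2 h2 x2 y2 z2 : ℝ}
    (hdisj : Disjoint (ItemRegion w1 d1 h1 x1 y1 z1) (ItemRegion w2 d2 h2 x2 y2 z2))
    (hx : (Set.Ioo x1 (x1 + w1) ∩ Set.Ioo x2 (x2 + w2)).Nonempty)
    (hy : (Set.Ioo y1 (y1 + d1) ∩ Set.Ioo y2 (y2 + d2)).Nonempty) :
    Disjoint (Set.Ioo z1 (z1 + h1)) (Set.Ioo z2 (z2 + h2)) := by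
  obtain ⟨a, ha1, ha2⟩ := hx
  obtain ⟨b, hb1, hb2⟩ := hy
  rw [Set.disjoint_left]
  intro t ht ht'
  exact Set.disjoint_left.mp hdisj
    (show ((a, b, t) : ℝ × ℝ × ℝ) ∈ ItemRegion w1 d1 h1 x1 y1 z1 from ⟨ha1, hb1, ht⟩)
    ⟨ha2, hb2, ht'⟩

/-- Discretizing heights and `z`-positions: suppose `J`
(with `n = |J| ≥ 1` items, all dimensions in `(0,1]`) packs into the unit
cube, and `μ ∈ (0,1]` is such that `μ·n` is an even positive integer. Call an
item *large* if all three of its dimensions exceed `μ`. If `h'` rounds the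
height of every large item up to the next integer multiple of `μ²/2` and the
height of every other item up to the next integer multiple of `μ/n`, then `J`
with heights `h'` packs into `[0,1] × [0,1] × [0, 1+2μ]` with every item at a
`z`-coordinate that is an integer multiple of `μ/n` and every large item at a
`z`-coordinate that is an integer multiple of `μ²/2`. -/
theorem stmt17 {ι : Type*} (J : Finset ι) (w d h : ι → ℝ) (μ : ℝ)
    (hμpos : 0 < μ) (hμle : μ ≤ 1)
    (hn : J.Nonempty)
    (heven : ∃ m : ℕ, 0 < m ∧ μ * (J.card : ℝ) = 2 * (m : ℝ))
    (hdims : ∀ i ∈ J, 0 < w i ∧ w i ≤ 1 ∧ 0 < d i ∧ d i ≤ 1 ∧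
      0 < h i ∧ h i ≤ 1)
    (hpack : CanPack J w d h 1 1 1)
    (h' : ι → ℝ)
    (hlarge : ∀ i ∈ J, (μ < w i ∧ μ < d i ∧ μ < h i) →
      h' i = (⌈h i / (μ ^ 2 / 2)⌉₊ : ℝ) * (μ ^ 2 / 2))
    (hsmall : ∀ i ∈ J, ¬(μ < w i ∧ μ < d i ∧ μ < h i) →
      h' i = (⌈h i / (μ / (J.card : ℝ))⌉₊ : ℝ) * (μ / (J.card : ℝ))) :
    ∃ x y z : ι → ℝ, IsPacking J w d h' 1 1 (1 + 2 * μ) x y z ∧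
      (∀ i ∈ J, ∃ a : ℕ, z i = (a : ℝ) * (μ / (J.card : ℝ))) ∧
      (∀ i ∈ J, (μ < w i ∧ μ < d i ∧ μ < h i) →
        ∃ a : ℕ, z i = (a : ℝ) * (μ ^ 2 / 2)) := by
  classical
  obtain ⟨x, y, z, hfeas, hdisj⟩ := hpack
  have hnR : (0 : ℝ) < (J.card : ℝ) := by
    exact_mod_cast Finset.card_pos.mpr hn
  set g : ℝ := μ / (J.card : ℝ) with hgdef
  have hg : 0 < g := div_pos hμpos hnR
  have hgn : g * (J.card : ℝ) = μ := div_mul_cancel₀ _ hnR.ne'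
  obtain ⟨m, hm0, hmeq⟩ := heven
  have hGpos : (0:ℝ) < μ ^ 2 / 2 := by positivity
  have hG : μ ^ 2 / 2 = (m : ℝ) * g := by
    have hm' : (m : ℝ) = μ * (J.card : ℝ) / 2 := by linarith
    rw [hm', hgdef]
    rw [div_mul_div_comm, eq_div_iff (mul_ne_zero two_ne_zero hnR.ne')]
    ring
  set γ : ι → ℝ := fun i => if μ < w i ∧ μ < d i ∧ μ < h i then μ ^ 2 / 2 else g
    with hγdef
  have hγpos : ∀ i, 0 < γ i := by
    intro i
    by_cases hLi : μ < w i ∧ μ < d i ∧ μ < h i <;> simp [hγdef, hLi, hGpos, hg]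
  -- facts about h'
  have hh'eq : ∀ i ∈ J, h' i = (⌈h i / γ i⌉₊ : ℝ) * γ i := by
    intro i hi
    by_cases hLi : μ < w i ∧ μ < d i ∧ μ < h i
    · rw [hlarge i hi hLi]; simp [hγdef, hLi]
    · rw [hsmall i hi hLi]; simp [hγdef, hLi]
  have hh'ge : ∀ i ∈ J, h i ≤ h' i := by
    intro i hi
    rw [hh'eq i hi]
    calc h i = (h i / γ i) * γ i := by rw [div_mul_cancel₀ _ (hγpos i).ne']
      _ ≤ _ := mul_le_mul_of_nonneg_right (Nat.le_ceil _) (hγpos i).le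
  have hh'le : ∀ i ∈ J, h' i ≤ h i + γ i := by
    intro i hi
    rw [hh'eq i hi]
    have hhi := (hdims i hi).2.2.2.2.1
    have h1 := Nat.ceil_lt_add_one (a := h i / γ i) (div_nonneg hhi.le (hγpos i).le)
    calc (⌈h i / γ i⌉₊ : ℝ) * γ i ≤ (h i / γ i + 1) * γ i :=
          mul_le_mul_of_nonneg_right h1.le (hγpos i).le
      _ = h i + γ i := by rw [add_mul, div_mul_cancel₀ _ (hγpos i).ne', one_mul]
  have hγg : ∀ i, ∃ b : ℕ, γ i = (b : ℝ) * g := by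
    intro i
    by_cases hLi : μ < w i ∧ μ < d i ∧ μ < h i
    · exact ⟨m, by simp [hγdef, hLi, hG]⟩
    · exact ⟨1, by simp [hγdef, hLi]⟩
  have hh'mul : ∀ i ∈ J, ∃ a : ℕ, h' i = (a : ℝ) * g := by
    intro i hi
    obtain ⟨b, hb⟩ := hγg i
    exact ⟨⌈h i / γ i⌉₊ * b, by rw [hh'eq i hi, hb]; push_cast; ring⟩
  have hzpg : ∀ i : ι, ∃ a : ℕ, zp J z h h' γ i = (a : ℝ) * g := by
    intro i
    obtain ⟨b, hb⟩ := hγg i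
    exact ⟨⌈Bv J z h h' γ i / γ i⌉₊ * b, by rw [zp_eq, hb]; push_cast; ring⟩
  have hsumg : ∀ j ∈ J, ∃ a : ℕ, zp J z h h' γ j + h' j = (a : ℝ) * g := by
    intro j hj
    obtain ⟨a1, ha1⟩ := hzpg j
    obtain ⟨a2, ha2⟩ := hh'mul j hj
    exact ⟨a1 + a2, by rw [ha1, ha2]; push_cast; ring⟩
  -- the set of small items below i (inclusive)
  set N : ι → Finset ι := fun i =>
    J.filter (fun k => ¬(μ < w k ∧ μ < d k ∧ μ < h k) ∧ z k + h k ≤ z i + h i)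
    with hNdef
  have hNsub : ∀ i ∈ J, ∀ j, z j + h j ≤ z i → N j ⊆ N i := by
    intro i hi j hij k hk
    have hhi := (hdims i hi).2.2.2.2.1
    simp only [hNdef, Finset.mem_filter] at hk ⊢
    exact ⟨hk.1, hk.2.1, by linarith [hk.2.2]⟩
  -- the key invariant
  have key : ∀ k : ℕ, ∀ i ∈ J, (J.filter fun t => z t < z i).card < k →
      zp J z h h' γ i + h' i ≤ (1 + μ) * (z i + h i) + g * ((N i).card : ℝ) := by
    intro k
    induction k with
    | zero => intro i _ hm; omega
    | succ k ih =>
      intro i hi hmi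
      have hz0 : 0 ≤ z i := (hfeas i hi).2.2.2.2.1
      have hzh1 : z i + h i ≤ 1 := (hfeas i hi).2.2.2.2.2
      have hhi : 0 < h i := (hdims i hi).2.2.2.2.1
      have hNle : (0:ℝ) ≤ g * ((N i).card : ℝ) :=
        mul_nonneg hg.le (Nat.cast_nonneg _)
      have hμ1 : (0:ℝ) ≤ 1 + μ := by linarith
      have hpredbound : ∀ j ∈ J.filter (fun j => z j + h j ≤ z i ∧ z j < z i),
          zp J z h h' γ j + h' j ≤ (1 + μ) * z i + g * ((N j).card : ℝ) ∧
          N j ⊆ N i := by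
        intro j hj
        rw [Finset.mem_filter] at hj
        obtain ⟨hjJ, hjle, hjlt⟩ := hj
        have ihj := ih j hjJ (lt_of_lt_of_le (measure_lt J z hjJ hjlt)
          (Nat.lt_succ_iff.mp hmi))
        have h2 : (1 + μ) * (z j + h j) ≤ (1 + μ) * z i :=
          mul_le_mul_of_nonneg_left hjle hμ1
        exact ⟨by linarith, hNsub i hi j hjle⟩
      by_cases hLi : μ < w i ∧ μ < d i ∧ μ < h i
      · -- large item
        have hγi : γ i = μ ^ 2 / 2 := by simp [hγdef, hLi]
        have hBle : Bv J z h h' γ i ≤ (1 + μ) * z i + g * ((N i).card : ℝ) := by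
          apply Bv_le
          · have : (0:ℝ) ≤ (1 + μ) * z i := mul_nonneg hμ1 hz0
            linarith
          · intro j hj
            obtain ⟨hb, hsub⟩ := hpredbound j hj
            have : ((N j).card : ℝ) ≤ ((N i).card : ℝ) := by
              exact_mod_cast Finset.card_le_card hsub
            have := mul_le_mul_of_nonneg_left this hg.le
            linarith
        have h1 : zp J z h h' γ i ≤ Bv J z h h' γ i + γ i :=
          zp_le_Bv_add J z h h' γ i (hγpos i)
        have h2 : h' i ≤ h i + γ i := hh'le i hi
        have h3 : μ * μ ≤ μ * h i :=
          mul_le_mul_of_nonneg_left hLi.2.2.le hμpos.le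
        have h4 : (1 + μ) * (z i + h i) = (1 + μ) * z i + h i + μ * h i := by ring
        have h5 : μ ^ 2 = μ * μ := sq μ
        rw [hγi] at h1 h2
        linarith
      · -- small item
        have hγi : γ i = g := by simp [hγdef, hLi]
        have hiN : i ∈ N i := by
          simp only [hNdef, Finset.mem_filter]
          exact ⟨hi, hLi, le_refl _⟩
        have hNi1 : (1:ℝ) ≤ ((N i).card : ℝ) := by
          exact_mod_cast Finset.card_pos.mpr ⟨i, hiN⟩
        obtain ⟨a, haB⟩ := Bv_mul J z h h' γ i (fun j hj =>
          hsumg j (Finset.mem_filter.mp hj).1)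
        have hzB : zp J z h h' γ i = Bv J z h h' γ i :=
          zp_eq_Bv J z h h' γ i hg hγi haB
        have hBle : Bv J z h h' γ i ≤ (1 + μ) * z i + g * (((N i).card : ℝ) - 1) := by
          apply Bv_le
          · have : (0:ℝ) ≤ (1 + μ) * z i := mul_nonneg hμ1 hz0
            have : (0:ℝ) ≤ g * (((N i).card : ℝ) - 1) := mul_nonneg hg.le (by linarith)
            linarith [mul_nonneg hμ1 hz0]
          · intro j hj
            obtain ⟨hb, hsub⟩ := hpredbound j hj
            have hjmem := Finset.mem_filter.mp hj
            have hine : i ∉ N j := by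
              intro hiNj
              simp only [hNdef, Finset.mem_filter] at hiNj
              have := hjmem.2.1
              linarith [hiNj.2.2]
            have hss : N j ⊂ N i := ⟨hsub, fun hcon => hine (hcon hiN)⟩
            have : ((N j).card : ℝ) ≤ ((N i).card : ℝ) - 1 := by
              have := Finset.card_lt_card hss
              have : ((N j).card : ℝ) + 1 ≤ ((N i).card : ℝ) := by exact_mod_cast this
              linarith
            have := mul_le_mul_of_nonneg_left this hg.le
            linarith
        have h2 : h' i ≤ h i + g := by
          have := hh'le i hi
          rwa [hγi] at this
        have h3 : (0:ℝ) ≤ μ * h i := mul_nonneg hμpos.le hhi.le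
        have h4 : (1 + μ) * (z i + h i) = (1 + μ) * z i + h i + μ * h i := by ring
        nlinarith [hg.le]
  -- final assembly
  have hmeas : ∀ i ∈ J, (J.filter fun t => z t < z i).card < J.card + 1 :=
    fun i _ => Nat.lt_succ_of_le (Finset.card_le_card (Finset.filter_subset _ _))
  have hbound : ∀ i ∈ J, zp J z h h' γ i + h' i ≤ 1 + 2 * μ := by
    intro i hi
    have hk := key (J.card + 1) i hi (hmeas i hi)
    have hzh1 : z i + h i ≤ 1 := (hfeas i hi).2.2.2.2.2
    have hz0 : 0 ≤ z i := (hfeas i hi).2.2.2.2.1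
    have hhi : 0 < h i := (hdims i hi).2.2.2.2.1
    have hc : ((N i).card : ℝ) ≤ (J.card : ℝ) := by
      exact_mod_cast Finset.card_le_card (Finset.filter_subset _ _)
    have h1 : g * ((N i).card : ℝ) ≤ g * (J.card : ℝ) :=
      mul_le_mul_of_nonneg_left hc hg.le
    have h2 : (1 + μ) * (z i + h i) ≤ (1 + μ) * 1 :=
      mul_le_mul_of_nonneg_left hzh1 (by linarith)
    rw [hgn] at h1
    linarith
  refine ⟨x, y, zp J z h h' γ, ⟨?_, ?_⟩, ?_, ?_⟩
  · -- feasibility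
    intro i hi
    obtain ⟨hx0, hxw, hy0, hyd, hz0, hzh⟩ := hfeas i hi
    exact ⟨hx0, hxw, hy0, hyd, zp_nonneg J z h h' γ i (hγpos i),
      by linarith [hbound i hi, hh'ge i hi]⟩
  · -- disjointness
    intro i hi j hj hij
    have hwi := (hdims i hi).1
    have hdi := (hdims i hi).2.2.1
    have hhi := (hdims i hi).2.2.2.2.1
    have hwj := (hdims j hj).1
    have hdj := (hdims j hj).2.2.1
    have hhj := (hdims j hj).2.2.2.2.1
    by_cases hxx : (Set.Ioo (x i) (x i + w i) ∩ Set.Ioo (x j) (x j + w j)).Nonempty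
    · by_cases hyy : (Set.Ioo (y i) (y i + d i) ∩ Set.Ioo (y j) (y j + d j)).Nonempty
      · -- overlapping projections: use z-separation
        have hzsep := z_sep_of (hdisj i hi j hj hij) hxx hyy
        have hsep := ioo_sep (by linarith : z i < z i + h i)
          (by linarith : z j < z j + h j) hzsep
        apply region_disj_of
        right; right
        rw [Set.disjoint_left]
        intro t ht ht'
        rcases hsep with hs | hs
        · have hzz : zp J z h h' γ i + h' i ≤ zp J z h h' γ j :=
            le_trans (Bv_ge J z h h' γ j (Finset.mem_filter.mpr
              ⟨hi, hs, by linarith⟩)) (zp_ge_Bv J z h h' γ j (hγpos j))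
          exact absurd ht'.1 (by linarith [ht.2])
        · have hzz : zp J z h h' γ j + h' j ≤ zp J z h h' γ i :=
            le_trans (Bv_ge J z h h' γ i (Finset.mem_filter.mpr
              ⟨hj, hs, by linarith⟩)) (zp_ge_Bv J z h h' γ i (hγpos i))
          exact absurd ht.1 (by linarith [ht'.2])
      · apply region_disj_of
        right; left
        exact Set.disjoint_iff_inter_eq_empty.mpr (Set.not_nonempty_iff_eq_empty.mp hyy)
    · apply region_disj_of
      left
      exact Set.disjoint_iff_inter_eq_empty.mpr (Set.not_nonempty_iff_eq_empty.mp hxx)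
  · -- every z-coordinate a multiple of μ / n
    intro i _
    exact hzpg i
  · -- large z-coordinates multiples of μ²/2
    intro i _ hLi
    refine ⟨⌈Bv J z h h' γ i / γ i⌉₊, ?_⟩
    rw [zp_eq]
    have : γ i = μ ^ 2 / 2 := by simp [hγdef, hLi]
    rw [this]
end

section
/- Let I be a finite set of rectangles with widths and heights in (0,1] and total area A > 0, and let ε ∈ (0,1]. Define δ_0 = ε and δ_j = δ_{j−1}^4 for j ≥ 1, and let N = ⌈2/ε⌉. Then there exists an index j ∈ {1,…,N} such that the total area of the rectangles of I whose width lies in [δ_j, δ_{j−1}) or whose height lies in [δ_j, δ_{j−1}) is at most ε·A. -/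
open scoped Classical

/-- Shifting argument for rectangles: if the rectangles of
`I` have widths and heights in `(0,1]` and total area `A > 0`, `ε ∈ (0,1]`,
`δ₀ = ε`, `δⱼ = δ_{j-1}⁴`, and `N = ⌈2/ε⌉`, then for some `j ∈ {1,…,N}` the
total area of the rectangles whose width or height lies in `[δⱼ, δ_{j-1})`
is at most `ε·A`. -/
theorem stmt18 {ι : Type*} (I : Finset ι) (w h : ι → ℝ) (ε : ℝ)
    (hεpos : 0 < ε) (hεle : ε ≤ 1)
    (hdims : ∀ i ∈ I, 0 < w i ∧ w i ≤ 1 ∧ 0 < h i ∧ h i ≤ 1)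
    (hA : 0 < ∑ i ∈ I, w i * h i)
    (δ : ℕ → ℝ) (hδ0 : δ 0 = ε) (hδ : ∀ j, δ (j + 1) = (δ j) ^ 4) :
    ∃ j ∈ Finset.Icc 1 ⌈2 / ε⌉₊,
      ∑ i ∈ I.filter (fun i =>
          (δ j ≤ w i ∧ w i < δ (j - 1)) ∨ (δ j ≤ h i ∧ h i < δ (j - 1))),
        w i * h i ≤ ε * ∑ i ∈ I, w i * h i := by
  set N := ⌈2 / ε⌉₊ with hN
  set A := ∑ i ∈ I, w i * h i with hAdef
  by_contra hcon
  push_neg at hcon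
  -- basic facts about δ
  have hδbound : ∀ j, 0 < δ j ∧ δ j ≤ 1 := by
    intro j
    induction j with
    | zero => rw [hδ0]; exact ⟨hεpos, hεle⟩
    | succ n ih =>
      rw [hδ n]
      refine ⟨pow_pos ih.1 4, ?_⟩
      calc δ n ^ 4 ≤ 1 ^ 4 := pow_le_pow_left₀ ih.1.le ih.2 4
        _ = 1 := one_pow 4
  have hanti : ∀ j k, j ≤ k → δ k ≤ δ j := by
    intro j k hjk
    induction k with
    | zero => simp_all
    | succ n ih =>
      rcases Nat.lt_succ_iff_lt_or_eq.mp (Nat.lt_succ_of_le hjk) with hlt | heq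
      · have h1 : δ n ≤ δ j := ih (by omega)
        have := hδbound n
        calc δ (n + 1) = δ n ^ 4 := hδ n
          _ ≤ δ n ^ 1 := pow_le_pow_of_le_one this.1.le this.2 (by norm_num)
          _ = δ n := pow_one _
          _ ≤ δ j := h1
      · subst heq; exact le_refl _
  -- each rectangle lies in at most two classes
  have hcard : ∀ i ∈ I,
      ((Finset.Icc 1 N).filter (fun j =>
        (δ j ≤ w i ∧ w i < δ (j - 1)) ∨ (δ j ≤ h i ∧ h i < δ (j - 1)))).card ≤ 2 := by
    intro i _
    have huniq : ∀ x : ℝ, ∀ j ∈ (Finset.Icc 1 N).filter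
        (fun j => δ j ≤ x ∧ x < δ (j - 1)), ∀ k ∈ (Finset.Icc 1 N).filter
        (fun j => δ j ≤ x ∧ x < δ (j - 1)), j = k := by
      intro x j hj k hk
      simp only [Finset.mem_filter, Finset.mem_Icc] at hj hk
      by_contra hne
      rcases Nat.lt_or_ge j k with hlt | hge
      · have : δ (k - 1) ≤ δ j := hanti j (k - 1) (by omega)
        linarith [hj.2.1, hk.2.2]
      · have hlt : k < j := lt_of_le_of_ne hge (Ne.symm hne)
        have : δ (j - 1) ≤ δ k := hanti k (j - 1) (by omega)
        linarith [hk.2.1, hj.2.2]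
    have hsub : (Finset.Icc 1 N).filter (fun j =>
        (δ j ≤ w i ∧ w i < δ (j - 1)) ∨ (δ j ≤ h i ∧ h i < δ (j - 1))) ⊆
        ((Finset.Icc 1 N).filter (fun j => δ j ≤ w i ∧ w i < δ (j - 1))) ∪
        ((Finset.Icc 1 N).filter (fun j => δ j ≤ h i ∧ h i < δ (j - 1))) := by
      intro j hj
      simp only [Finset.mem_filter, Finset.mem_union] at hj ⊢
      tauto
    calc _ ≤ _ := Finset.card_le_card hsub
      _ ≤ _ + _ := Finset.card_union_le _ _
      _ ≤ 1 + 1 := add_le_add (Finset.card_le_one.mpr (huniq (w i)))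
          (Finset.card_le_one.mpr (huniq (h i)))
      _ = 2 := rfl
  -- double counting
  have key : ∑ j ∈ Finset.Icc 1 N, (∑ i ∈ I.filter (fun i =>
      (δ j ≤ w i ∧ w i < δ (j - 1)) ∨ (δ j ≤ h i ∧ h i < δ (j - 1))),
      w i * h i) ≤ 2 * A := by
    have harea : ∀ i ∈ I, 0 ≤ w i * h i := fun i hi =>
      mul_nonneg (hdims i hi).1.le (hdims i hi).2.2.1.le
    calc ∑ j ∈ Finset.Icc 1 N, (∑ i ∈ I.filter (fun i =>
          (δ j ≤ w i ∧ w i < δ (j - 1)) ∨ (δ j ≤ h i ∧ h i < δ (j - 1))), w i * h i)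
        = ∑ j ∈ Finset.Icc 1 N, ∑ i ∈ I, (if
          (δ j ≤ w i ∧ w i < δ (j - 1)) ∨ (δ j ≤ h i ∧ h i < δ (j - 1))
          then w i * h i else 0) := by
          refine Finset.sum_congr rfl fun j _ => ?_
          rw [Finset.sum_filter]
      _ = ∑ i ∈ I, ∑ j ∈ Finset.Icc 1 N, (if
          (δ j ≤ w i ∧ w i < δ (j - 1)) ∨ (δ j ≤ h i ∧ h i < δ (j - 1))
          then w i * h i else 0) := Finset.sum_comm
      _ = ∑ i ∈ I, (((Finset.Icc 1 N).filter (fun j =>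
          (δ j ≤ w i ∧ w i < δ (j - 1)) ∨ (δ j ≤ h i ∧ h i < δ (j - 1)))).card : ℝ)
          * (w i * h i) := by
          refine Finset.sum_congr rfl fun i _ => ?_
          rw [← Finset.sum_filter, Finset.sum_const, nsmul_eq_mul]
      _ ≤ ∑ i ∈ I, 2 * (w i * h i) := by
          refine Finset.sum_le_sum fun i hi => ?_
          have := hcard i hi
          have h2 : (((Finset.Icc 1 N).filter (fun j =>
            (δ j ≤ w i ∧ w i < δ (j - 1)) ∨ (δ j ≤ h i ∧ h i < δ (j - 1)))).card : ℝ)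
            ≤ 2 := by exact_mod_cast this
          exact mul_le_mul_of_nonneg_right h2 (harea i hi)
      _ = 2 * A := by rw [← Finset.mul_sum]
  -- lower bound from the contradiction hypothesis
  have hNge : (2 : ℝ) ≤ (N : ℝ) * ε := by
    have h1 : 2 / ε ≤ (N : ℝ) := Nat.le_ceil _
    calc (2 : ℝ) = (2 / ε) * ε := by field_simp
      _ ≤ (N : ℝ) * ε := mul_le_mul_of_nonneg_right h1 hεpos.le
  have hNne : (Finset.Icc 1 N).Nonempty := by
    refine ⟨1, Finset.mem_Icc.mpr ⟨le_refl _, ?_⟩⟩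
    exact Nat.one_le_ceil_iff.mpr (by positivity : (0:ℝ) < 2 / ε)
  have hlow : (N : ℝ) * (ε * A) < ∑ j ∈ Finset.Icc 1 N, (∑ i ∈ I.filter (fun i =>
      (δ j ≤ w i ∧ w i < δ (j - 1)) ∨ (δ j ≤ h i ∧ h i < δ (j - 1))), w i * h i) := by
    have := Finset.sum_lt_sum_of_nonempty hNne (fun j hj => hcon j hj)
    simpa [Finset.sum_const, Nat.card_Icc, nsmul_eq_mul] using this
  have : (2 : ℝ) * A ≤ (N : ℝ) * (ε * A) := by
    have := mul_le_mul_of_nonneg_right hNge hA.le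
    linarith [this]
  linarith
end
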